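/- arXiv:2103.07071 — 9 statements merged into one kernel-verified Lean document; each statement's English description precedes it below -/
import Mathlib

section
/- Let X be a real Banach space and let μ be a convex measure of noncompactness on X. Then μ is translation invariant by compact convex sets: μ(B + C) = μ(B) for every nonempty bounded subset B of X and every nonempty compact convex subset C of X, where B + C = {b + c : b ∈ B, c ∈ C}. -/
open Set Bornology Pointwise

/-- A convex measure of noncompactness (convex MNC) on a real Banach space `X`. -/
structure IsConvexMNC (X : Type*) [NormedAddCommGroup X] [NormedSpace ℝ X]
    (μ : Set X → ℝ) : Prop where
  nonneg : ∀ B : Set X, B.Nonempty → IsBounded B → 0 ≤ μ B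
  eq_zero_iff : ∀ B : Set X, B.Nonempty → IsBounded B →
    (μ B = 0 ↔ IsCompact (closure B))
  mono : ∀ A B : Set X, B.Nonempty → IsBounded A → B ⊆ A → μ B ≤ μ A
  convexHull_inv : ∀ B : Set X, B.Nonempty → IsBounded B → μ (convexHull ℝ B) = μ B
  convex : ∀ A B : Set X, A.Nonempty → B.Nonempty → IsBounded A → IsBounded B →
    ∀ l : ℝ, 0 ≤ l → l ≤ 1 → μ (l • A + (1 - l) • B) ≤ l * μ A + (1 - l) * μ B

/-- Translation invariance by compact convex sets: `μ (B + C) = μ B` for every nonempty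
bounded `B` and every nonempty compact convex `C`, where `B + C` is the Minkowski sum. -/
theorem convexMNC_add_compact_convex_eq {X : Type*} [NormedAddCommGroup X]
    [NormedSpace ℝ X] [CompleteSpace X] (μ : Set X → ℝ) (hμ : IsConvexMNC X μ)
    (B : Set X) (hBne : B.Nonempty) (hBbdd : IsBounded B)
    (C : Set X) (hCne : C.Nonempty) (hCcpt : IsCompact C) (hCcvx : Convex ℝ C) :
    μ (B + C) = μ B := by
  obtain ⟨c0, hc0⟩ := id hCne
  set B' := convexHull ℝ B with hB'def
  have hB'ne : B'.Nonempty := hBne.convexHull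
  have hB'bdd : IsBounded B' := isBounded_convexHull.2 hBbdd
  have hB'cvx : Convex ℝ B' := convex_convexHull ℝ B
  have hCbdd : IsBounded C := hCcpt.isBounded
  -- μ vanishes on nonempty compact sets
  have hzero : ∀ K : Set X, K.Nonempty → IsCompact K → μ K = 0 := by
    intro K hKne hK
    rw [hμ.eq_zero_iff K hKne hK.isBounded, hK.isClosed.closure_eq]
    exact hK
  set M : ℝ := (1 / 2 : ℝ) * μ ((2 : ℝ) • B') with hMdef
  -- the key uniform bound: μ (B' + (1/2) • K) ≤ M for every nonempty compact K
  have key : ∀ K : Set X, K.Nonempty → IsCompact K → μ (B' + (1 / 2 : ℝ) • K) ≤ M := by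
    intro K hKne hK
    have h2ne : ((2 : ℝ) • B').Nonempty := hB'ne.smul_set
    have h2b : IsBounded ((2 : ℝ) • B') := hB'bdd.smul₀ (2 : ℝ)
    have h := hμ.convex ((2 : ℝ) • B') K h2ne hKne h2b hK.isBounded (1 / 2)
      (by norm_num) (by norm_num)
    rw [hzero K hKne hK] at h
    have hset : (1 / 2 : ℝ) • ((2 : ℝ) • B') + (1 - 1 / 2 : ℝ) • K
        = B' + (1 / 2 : ℝ) • K := by
      rw [smul_smul]
      norm_num
    rw [hset] at h
    calc μ (B' + (1 / 2 : ℝ) • K) ≤ 1 / 2 * μ ((2 : ℝ) • B') + (1 - 1 / 2) * 0 := h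
      _ = M := by rw [hMdef]; ring
  -- upper estimate
  have upper : ∀ l : ℝ, 0 < l → l < 1 → μ (B' + C) ≤ (1 - l) * μ B' + l * M := by
    intro l hl0 hl1
    have hDne : (B' + (1 / l : ℝ) • C).Nonempty := hB'ne.add hCne.smul_set
    have hDb : IsBounded (B' + (1 / l : ℝ) • C) := hB'bdd.add (hCbdd.smul₀ _)
    have h := hμ.convex B' (B' + (1 / l : ℝ) • C) hB'ne hDne hB'bdd hDb (1 - l)
      (by linarith) (by linarith)
    have hll : (1 - (1 - l) : ℝ) = l := by ring
    rw [hll] at h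
    have hset : (1 - l) • B' + l • (B' + (1 / l : ℝ) • C) = B' + C := by
      rw [smul_add, ← add_assoc, ← hB'cvx.add_smul (by linarith) hl0.le]
      have h1 : (1 - l + l : ℝ) = 1 := by ring
      rw [h1, one_smul, smul_smul, mul_one_div, div_self hl0.ne', one_smul]
    rw [hset] at h
    have hbound : μ (B' + (1 / l : ℝ) • C) ≤ M := by
      have hk := key ((2 / l : ℝ) • C) hCne.smul_set (hCcpt.smul _)
      have hs : (1 / 2 : ℝ) • ((2 / l : ℝ) • C) = (1 / l : ℝ) • C := by
        rw [smul_smul]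
        congr 1
        ring
      rwa [hs] at hk
    nlinarith [hl0.le, hl1.le]
  -- lower estimate
  have lower : ∀ l : ℝ, 0 < l → l < 1 → μ B' ≤ (1 - l) * μ (B' + C) + l * M := by
    intro l hl0 hl1
    set v : X := ((l - 1) / l) • c0 with hvdef
    have hne1 : (B' + ({c0} : Set X)).Nonempty := hB'ne.add (singleton_nonempty _)
    have hne2 : (B' + ({v} : Set X)).Nonempty := hB'ne.add (singleton_nonempty _)
    have hb1 : IsBounded (B' + ({c0} : Set X)) := hB'bdd.add isCompact_singleton.isBounded
    have hb2 : IsBounded (B' + ({v} : Set X)) := hB'bdd.add isCompact_singleton.isBounded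
    have h := hμ.convex (B' + ({c0} : Set X)) (B' + ({v} : Set X)) hne1 hne2 hb1 hb2
      (1 - l) (by linarith) (by linarith)
    have hll : (1 - (1 - l) : ℝ) = l := by ring
    rw [hll] at h
    have hset : (1 - l) • (B' + ({c0} : Set X)) + l • (B' + ({v} : Set X)) = B' := by
      rw [smul_add, smul_add, add_add_add_comm, ← hB'cvx.add_smul (by linarith) hl0.le]
      have h1 : (1 - l + l : ℝ) = 1 := by ring
      rw [h1, one_smul, smul_set_singleton, smul_set_singleton,
        Set.singleton_add_singleton]
      have hpt : (1 - l) • c0 + l • v = 0 := by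
        rw [hvdef, smul_smul, ← add_smul]
        have : (1 - l + l * ((l - 1) / l) : ℝ) = 0 := by field_simp; ring
        rw [this, zero_smul]
      rw [hpt, Set.singleton_zero, add_zero]
    rw [hset] at h
    have hbound1 : μ (B' + ({c0} : Set X)) ≤ μ (B' + C) := by
      refine hμ.mono (B' + C) (B' + ({c0} : Set X)) hne1 (hB'bdd.add hCbdd) ?_
      exact add_subset_add_left (singleton_subset_iff.2 hc0)
    have hbound2 : μ (B' + ({v} : Set X)) ≤ M := by
      have hk := key ((2 : ℝ) • ({v} : Set X)) (singleton_nonempty v).smul_set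
        (isCompact_singleton.smul _)
      have hs : (1 / 2 : ℝ) • ((2 : ℝ) • ({v} : Set X)) = ({v} : Set X) := by
        rw [smul_smul]
        norm_num
      rwa [hs] at hk
    nlinarith [hl0.le, hl1.le]
  -- pass to the limit l → 0
  have approx : ∀ x y : ℝ, 0 ≤ y → (∀ l : ℝ, 0 < l → l < 1 → x ≤ (1 - l) * y + l * M) →
      x ≤ y := by
    intro x y hy h
    refine le_of_forall_pos_le_add fun ε hε => ?_
    set l : ℝ := min (1 / 2) (ε / (|M - y| + 1)) with hldef
    have hpos : (0 : ℝ) < |M - y| + 1 := by positivity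
    have hl0 : 0 < l := lt_min (by norm_num) (div_pos hε hpos)
    have hl1 : l < 1 := lt_of_le_of_lt (min_le_left _ _) (by norm_num)
    have h1 := h l hl0 hl1
    have h2 : l * (|M - y| + 1) ≤ ε := by
      have hle : l ≤ ε / (|M - y| + 1) := min_le_right _ _
      calc l * (|M - y| + 1) ≤ (ε / (|M - y| + 1)) * (|M - y| + 1) :=
            mul_le_mul_of_nonneg_right hle hpos.le
        _ = ε := div_mul_cancel₀ _ hpos.ne'
    have h3 : l * (M - y) ≤ l * (|M - y| + 1) := by
      have : M - y ≤ |M - y| + 1 := by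
        have := le_abs_self (M - y)
        linarith
      exact mul_le_mul_of_nonneg_left this hl0.le
    nlinarith
  have hBCne : (B' + C).Nonempty := hB'ne.add hCne
  have hBCb : IsBounded (B' + C) := hB'bdd.add hCbdd
  have hup : μ (B' + C) ≤ μ B' := approx _ _ (hμ.nonneg B' hB'ne hB'bdd) upper
  have hlo : μ B' ≤ μ (B' + C) := approx _ _ (hμ.nonneg _ hBCne hBCb) lower
  have e1 : μ (B + C) = μ (B' + C) := by
    have h := hμ.convexHull_inv (B + C) (hBne.add hCne) (hBbdd.add hCbdd)
    rw [← h, convexHull_add, hCcvx.convexHull_eq, hB'def]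
  have e2 : μ B' = μ B := hμ.convexHull_inv B hBne hBbdd
  linarith
end

section
/- Let X be a real Banach space and let μ be a convex measure of noncompactness on X. Then compact convex sets are negligible for μ: μ(B ∪ C) = μ(B) for every nonempty bounded subset B of X and every nonempty compact convex subset C of X. -/
open Set Bornology Pointwise

/-- Negligibility of compact convex sets: `μ (B ∪ C) = μ B` for every nonempty bounded `B`
and every nonempty compact convex `C`. -/
theorem convexMNC_union_compact_convex_eq {X : Type*} [NormedAddCommGroup X]
    [NormedSpace ℝ X] [CompleteSpace X] (μ : Set X → ℝ) (hμ : IsConvexMNC X μ)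
    (B : Set X) (hBne : B.Nonempty) (hBbdd : IsBounded B)
    (C : Set X) (hCne : C.Nonempty) (hCcpt : IsCompact C) (hCcvx : Convex ℝ C) :
    μ (B ∪ C) = μ B := by
  obtain ⟨b₀, hb₀⟩ := hBne
  set D : Set X := convexHull ℝ B with hDdef
  have hBD : B ⊆ D := subset_convexHull ℝ B
  have hDbdd : IsBounded D := isBounded_convexHull.mpr hBbdd
  have hb₀D : b₀ ∈ D := hBD hb₀
  have hDne : D.Nonempty := ⟨b₀, hb₀D⟩
  have hμD : μ D = μ B := hμ.convexHull_inv B ⟨b₀, hb₀⟩ hBbdd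
  -- the fixed auxiliary set `2•D - b₀`
  set D₂ : Set X := (2 : ℝ) • D + {(-1 : ℝ) • b₀} with hD₂def
  have hD₂bdd : IsBounded D₂ := isBounded_add (hDbdd.smul₀ 2) isBounded_singleton
  have hD₂ne : D₂.Nonempty :=
    ⟨(2 : ℝ) • b₀ + (-1 : ℝ) • b₀,
      Set.add_mem_add (Set.smul_mem_smul_set hb₀D) (Set.mem_singleton _)⟩
  have hBCbdd : IsBounded (B ∪ C) := hBbdd.union hCcpt.isBounded
  have hBCne : (B ∪ C).Nonempty := ⟨b₀, Or.inl hb₀⟩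
  -- key inequality, for every small ε
  have key : ∀ ε : ℝ, 0 < ε → ε ≤ 1 / 2 →
      μ (B ∪ C) ≤ (1 - 2 * ε) * μ B + ε * μ D₂ := by
    intro ε hε hε2
    have hε1 : ε < 1 := by linarith
    have h1ε : (0 : ℝ) < 1 - ε := by linarith
    obtain ⟨s, hsdef⟩ : ∃ s : ℝ, s = (1 - ε)⁻¹ := ⟨_, rfl⟩
    have hs_mul : (1 - ε) * s = 1 := by
      rw [hsdef]; exact mul_inv_cancel₀ (ne_of_gt h1ε)
    have hs_pos : 0 < s := by rw [hsdef]; exact inv_pos.mpr h1ε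
    have hs1 : 1 ≤ s := by nlinarith
    have hs2 : s ≤ 2 := by nlinarith
    have hε_mul : ε * ε⁻¹ = 1 := mul_inv_cancel₀ (ne_of_gt hε)
    set A : Set X := {b₀} ∪ (s • D + {(1 - s) • b₀}) with hAdef
    set Q : Set X := {b₀} ∪ (ε⁻¹ • C + {(1 - ε⁻¹) • b₀}) with hQdef
    have hAbdd : IsBounded A :=
      isBounded_singleton.union (isBounded_add (hDbdd.smul₀ s) isBounded_singleton)
    have hAne : A.Nonempty := ⟨b₀, Or.inl rfl⟩
    have hQbdd : IsBounded Q :=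
      isBounded_singleton.union (isBounded_add (hCcpt.isBounded.smul₀ ε⁻¹) isBounded_singleton)
    have hQne : Q.Nonempty := ⟨b₀, Or.inl rfl⟩
    have hQcpt : IsCompact Q :=
      isCompact_singleton.union ((hCcpt.smul ε⁻¹).add isCompact_singleton)
    have hμQ : μ Q = 0 :=
      (hμ.eq_zero_iff Q hQne hQbdd).mpr (by rw [hQcpt.isClosed.closure_eq]; exact hQcpt)
    -- the covering inclusion
    have hsub : B ∪ C ⊆ (1 - ε) • A + ε • Q := by
      rintro x (hx | hx)
      · have hxD : x ∈ D := hBD hx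
        have hmemA : s • x + (1 - s) • b₀ ∈ A :=
          Or.inr (Set.add_mem_add (Set.smul_mem_smul_set hxD) (Set.mem_singleton _))
        have hmemQ : b₀ ∈ Q := Or.inl rfl
        have hx_eq : x = (1 - ε) • (s • x + (1 - s) • b₀) + ε • b₀ := by
          match_scalars
          · linear_combination -hs_mul
          · linear_combination hs_mul
        rw [hx_eq]
        exact Set.add_mem_add (Set.smul_mem_smul_set hmemA) (Set.smul_mem_smul_set hmemQ)
      · have hmemA : b₀ ∈ A := Or.inl rfl
        have hmemQ : ε⁻¹ • x + (1 - ε⁻¹) • b₀ ∈ Q :=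
          Or.inr (Set.add_mem_add (Set.smul_mem_smul_set hx) (Set.mem_singleton _))
        have hx_eq : x = (1 - ε) • b₀ + ε • (ε⁻¹ • x + (1 - ε⁻¹) • b₀) := by
          match_scalars <;> (field_simp) <;> ring
        rw [hx_eq]
        exact Set.add_mem_add (Set.smul_mem_smul_set hmemA) (Set.smul_mem_smul_set hmemQ)
    have hsumbdd : IsBounded ((1 - ε) • A + ε • Q) :=
      isBounded_add (hAbdd.smul₀ _) (hQbdd.smul₀ _)
    have h1 : μ (B ∪ C) ≤ μ ((1 - ε) • A + ε • Q) := hμ.mono _ _ hBCne hsumbdd hsub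
    have h2 : μ ((1 - ε) • A + ε • Q) ≤ (1 - ε) * μ A + ε * μ Q := by
      have h := hμ.convex A Q hAne hQne hAbdd hQbdd (1 - ε) (by linarith) (by linarith)
      have e : (1 : ℝ) - (1 - ε) = ε := by ring
      rw [e] at h
      exact h
    -- bound μ A via a convex combination of D and D₂
    have hAsub : A ⊆ (2 - s) • D + (s - 1) • D₂ := by
      rintro a (ha | ha)
      · rw [Set.mem_singleton_iff] at ha
        subst ha
        have hid : a = (2 - s) • a + (s - 1) • ((2 : ℝ) • a + (-1 : ℝ) • a) := by
          match_scalars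
          ring
        rw [hid]
        exact Set.add_mem_add (Set.smul_mem_smul_set hb₀D)
          (Set.smul_mem_smul_set
            (Set.add_mem_add (Set.smul_mem_smul_set hb₀D) (Set.mem_singleton _)))
      · obtain ⟨u, ⟨y, hyD, rfl⟩, v, hv, rfl⟩ := ha
        rw [Set.mem_singleton_iff] at hv
        subst hv
        show s • y + (1 - s) • b₀ ∈ (2 - s) • D + (s - 1) • D₂
        have hid : s • y + (1 - s) • b₀
            = (2 - s) • y + (s - 1) • ((2 : ℝ) • y + (-1 : ℝ) • b₀) := by
          match_scalars <;> ring
        rw [hid]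
        exact Set.add_mem_add (Set.smul_mem_smul_set hyD)
          (Set.smul_mem_smul_set
            (Set.add_mem_add (Set.smul_mem_smul_set hyD) (Set.mem_singleton _)))
    have hcombdd : IsBounded ((2 - s) • D + (s - 1) • D₂) :=
      isBounded_add (hDbdd.smul₀ _) (hD₂bdd.smul₀ _)
    have h3 : μ A ≤ (2 - s) * μ D + (s - 1) * μ D₂ := by
      have hm := hμ.mono _ _ hAne hcombdd hAsub
      have hc := hμ.convex D D₂ hDne hD₂ne hDbdd hD₂bdd (2 - s) (by linarith) (by linarith)
      have e : (1 : ℝ) - (2 - s) = s - 1 := by ring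
      rw [e] at hc
      exact hm.trans hc
    have h4 : μ (B ∪ C) ≤ (1 - ε) * ((2 - s) * μ B + (s - 1) * μ D₂) := by
      have hμA : μ A ≤ (2 - s) * μ B + (s - 1) * μ D₂ := by rw [← hμD]; exact h3
      calc μ (B ∪ C) ≤ (1 - ε) * μ A + ε * μ Q := h1.trans h2
        _ = (1 - ε) * μ A := by rw [hμQ]; ring
        _ ≤ (1 - ε) * ((2 - s) * μ B + (s - 1) * μ D₂) :=
            mul_le_mul_of_nonneg_left hμA (le_of_lt h1ε)
    have e1 : (1 - ε) * (2 - s) = 1 - 2 * ε := by linear_combination -hs_mul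
    have e2 : (1 - ε) * (s - 1) = ε := by linear_combination hs_mul
    calc μ (B ∪ C) ≤ (1 - ε) * ((2 - s) * μ B + (s - 1) * μ D₂) := h4
      _ = (1 - 2 * ε) * μ B + ε * μ D₂ := by
          rw [mul_add, ← mul_assoc, ← mul_assoc, e1, e2]
  -- conclude by letting ε → 0
  have hge : μ B ≤ μ (B ∪ C) := hμ.mono (B ∪ C) B ⟨b₀, hb₀⟩ hBCbdd Set.subset_union_left
  have hle : μ (B ∪ C) ≤ μ B := by
    rcases le_or_gt (μ D₂) (2 * μ B) with hc | hc
    · have h := key (1 / 2) (by norm_num) le_rfl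
      have : (1 - 2 * (1 / 2 : ℝ)) = 0 := by norm_num
      nlinarith [h]
    · by_contra hlt
      push_neg at hlt
      have hδ0 : 0 < μ (B ∪ C) - μ B := by linarith
      set c : ℝ := μ D₂ - 2 * μ B with hcdef
      have hc0 : 0 < c := by simp only [hcdef]; linarith
      set δ : ℝ := μ (B ∪ C) - μ B with hδdef
      set ε : ℝ := min (1 / 2) (δ / (2 * c)) with hεdef
      have hε0 : 0 < ε := lt_min (by norm_num) (div_pos hδ0 (by linarith))
      have h := key ε hε0 (min_le_left _ _)
      have hεle : ε ≤ δ / (2 * c) := min_le_right _ _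
      have hεc : ε * c ≤ δ / 2 := by
        calc ε * c ≤ (δ / (2 * c)) * c := mul_le_mul_of_nonneg_right hεle (le_of_lt hc0)
          _ = δ / 2 := by field_simp
      have hexp : (1 - 2 * ε) * μ B + ε * μ D₂ = μ B + ε * c := by
        simp only [hcdef]; ring
      rw [hexp] at h
      -- h : μ (B ∪ C) ≤ μ B + ε * c ≤ μ B + δ / 2, but δ = μ (B ∪ C) - μ B > 0
      have : μ (B ∪ C) ≤ μ B + δ / 2 := by linarith
      simp only [hδdef] at this
      linarith
  linarith
end

section
/- (Mean-value theorem for convex functions.) Let X be a real Banach space, let D ⊆ X be a closed convex set with nonempty interior, and let g : D → ℝ be a continuous convex function. Then for all x, y in the interior of D there exist a point ξ in the segment [x,y] and a subgradient x*_ξ ∈ ∂g(ξ) such that g(y) − g(x) = x*_ξ(y − x). -/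
open Set

/-- The subdifferential (relative to the set `D`) of a function `g : X → ℝ` at `ξ`:
the set of continuous linear functionals `φ` with `g z - g ξ ≥ φ (z - ξ)` for all `z ∈ D`. -/
def SubdifferentialWithin {X : Type*} [NormedAddCommGroup X] [NormedSpace ℝ X]
    (g : X → ℝ) (D : Set X) (ξ : X) : Set (X →L[ℝ] ℝ) :=
  {φ | ∀ z ∈ D, φ (z - ξ) ≤ g z - g ξ}

open Metric

section Dir

variable {X : Type*} [NormedAddCommGroup X] [NormedSpace ℝ X]
variable {D : Set X} {g : X → ℝ} {ξ u : X}

lemma ray_mem (hDcvx : Convex ℝ D) (hξ : ξ ∈ D) {s t : ℝ} (hs : 0 ≤ s) (hst : s ≤ t)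
    (ht : ξ + t • u ∈ D) : ξ + s • u ∈ D := by
  rcases (hs.trans hst).eq_or_lt with h | h
  · have hs0 : s = 0 := le_antisymm (hst.trans h.symm.le) hs
    simpa [hs0] using hξ
  have h1 : ξ + s • u = (1 - s / t) • ξ + (s / t) • (ξ + t • u) := by
    rw [smul_add, smul_smul, div_mul_cancel₀ _ h.ne']
    module
  rw [h1]
  have hd1 : s / t ≤ 1 := div_le_one_of_le₀ hst h.le
  exact hDcvx hξ ht (by linarith [div_nonneg hs h.le]) (by positivity) (by ring)

lemma slope_mono_mul (hgcvx : ConvexOn ℝ D g) (hξ : ξ ∈ D) {s t : ℝ} (hs : 0 < s) (hst : s ≤ t)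
    (ht : ξ + t • u ∈ D) : t * (g (ξ + s • u) - g ξ) ≤ s * (g (ξ + t • u) - g ξ) := by
  have ht0 : 0 < t := hs.trans_le hst
  have h1 : ξ + s • u = (1 - s / t) • ξ + (s / t) • (ξ + t • u) := by
    rw [smul_add, smul_smul, div_mul_cancel₀ _ ht0.ne']
    module
  have hd1 : s / t ≤ 1 := div_le_one_of_le₀ hst ht0.le
  have h2 : g (ξ + s • u) ≤ (1 - s / t) * g ξ + (s / t) * g (ξ + t • u) := by
    rw [h1]
    exact hgcvx.2 hξ ht (by linarith [div_nonneg hs.le ht0.le]) (by positivity) (by ring)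
  have h4 : g (ξ + s • u) * t ≤ (t - s) * g ξ + s * g (ξ + t • u) := by
    calc g (ξ + s • u) * t ≤ ((1 - s / t) * g ξ + (s / t) * g (ξ + t • u)) * t :=
          mul_le_mul_of_nonneg_right h2 ht0.le
      _ = (t - s) * g ξ + s * g (ξ + t • u) := by field_simp
  nlinarith [h4]

lemma slope_mono_div (hgcvx : ConvexOn ℝ D g) (hξ : ξ ∈ D) {s t : ℝ} (hs : 0 < s) (hst : s ≤ t)
    (ht : ξ + t • u ∈ D) :
    (g (ξ + s • u) - g ξ) / s ≤ (g (ξ + t • u) - g ξ) / t := by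
  have ht0 : 0 < t := hs.trans_le hst
  rw [div_le_div_iff₀ hs ht0]
  nlinarith [slope_mono_mul hgcvx hξ hs hst ht]

lemma slope_lower (hgcvx : ConvexOn ℝ D g) {s t : ℝ} (hs : 0 < s) (ht : 0 < t)
    (hsm : ξ + s • (-u) ∈ D) (htm : ξ + t • u ∈ D) :
    (g ξ - g (ξ + s • (-u))) / s ≤ (g (ξ + t • u) - g ξ) / t := by
  have hst : 0 < s + t := by linarith
  have h1 : ξ = (t / (s + t)) • (ξ + s • (-u)) + (s / (s + t)) • (ξ + t • u) := by
    match_scalars <;> field_simp <;> ring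
  have h2 : g ξ ≤ (t / (s + t)) * g (ξ + s • (-u)) + (s / (s + t)) * g (ξ + t • u) := by
    conv_lhs => rw [h1]
    exact hgcvx.2 hsm htm (by positivity) (by positivity) (by field_simp; ring)
  have h4 : g ξ * (s + t) ≤ t * g (ξ + s • (-u)) + s * g (ξ + t • u) := by
    calc g ξ * (s + t) ≤ ((t / (s + t)) * g (ξ + s • (-u)) + (s / (s + t)) * g (ξ + t • u)) * (s + t) :=
          mul_le_mul_of_nonneg_right h2 hst.le
      _ = t * g (ξ + s • (-u)) + s * g (ξ + t • u) := by field_simp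
  rw [div_le_div_iff₀ hs ht]
  nlinarith [h4]

/-- The directional derivative of `g` at `ξ` in direction `u`, as an infimum of slopes. -/
noncomputable def dirD (D : Set X) (g : X → ℝ) (ξ : X) (u : X) : ℝ :=
  sInf ((fun t => (g (ξ + t • u) - g ξ) / t) '' {t : ℝ | 0 < t ∧ ξ + t • u ∈ D})

lemma exists_mem_dirSet (hξ : ξ ∈ interior D) (u : X) {ε : ℝ} (hε : 0 < ε) :
    ∃ t, 0 < t ∧ t < ε ∧ ξ + t • u ∈ D := by
  obtain ⟨r, hr0, hball⟩ := Metric.mem_nhds_iff.1 (mem_interior_iff_mem_nhds.1 hξ)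
  refine ⟨min (ε / 2) (r / (2 * (‖u‖ + 1))), by positivity, ?_, ?_⟩
  · exact (min_le_left _ _).trans_lt (by linarith)
  · apply hball
    rw [mem_ball, dist_eq_norm]
    have h1 : ‖ξ + min (ε / 2) (r / (2 * (‖u‖ + 1))) • u - ξ‖
        = min (ε / 2) (r / (2 * (‖u‖ + 1))) * ‖u‖ := by
      rw [add_sub_cancel_left, norm_smul, Real.norm_eq_abs,
        abs_of_pos (by positivity)]
    rw [h1]
    calc min (ε / 2) (r / (2 * (‖u‖ + 1))) * ‖u‖ ≤ r / (2 * (‖u‖ + 1)) * ‖u‖ :=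
          mul_le_mul_of_nonneg_right (min_le_right _ _) (norm_nonneg u)
      _ < r := by
          rw [div_mul_eq_mul_div, div_lt_iff₀ (by positivity)]
          nlinarith [norm_nonneg u]

lemma dirD_bddBelow (hDcvx : Convex ℝ D) (hgcvx : ConvexOn ℝ D g) (hξ : ξ ∈ interior D) (u : X) :
    BddBelow ((fun t => (g (ξ + t • u) - g ξ) / t) '' {t : ℝ | 0 < t ∧ ξ + t • u ∈ D}) := by
  obtain ⟨s, hs0, _, hsD⟩ := exists_mem_dirSet hξ (-u) one_pos
  refine ⟨(g ξ - g (ξ + s • (-u))) / s, ?_⟩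
  rintro _ ⟨t, ⟨ht0, htD⟩, rfl⟩
  exact slope_lower hgcvx hs0 ht0 hsD htD

lemma dirD_le (hDcvx : Convex ℝ D) (hgcvx : ConvexOn ℝ D g) (hξ : ξ ∈ interior D) {t : ℝ}
    (ht0 : 0 < t) (htD : ξ + t • u ∈ D) : dirD D g ξ u ≤ (g (ξ + t • u) - g ξ) / t :=
  csInf_le (dirD_bddBelow hDcvx hgcvx hξ u) ⟨t, ⟨ht0, htD⟩, rfl⟩

lemma le_dirD (hξ : ξ ∈ interior D) {a : ℝ}
    (h : ∀ t, 0 < t → ξ + t • u ∈ D → a ≤ (g (ξ + t • u) - g ξ) / t) : a ≤ dirD D g ξ u := by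
  obtain ⟨t, ht0, _, htD⟩ := exists_mem_dirSet hξ u one_pos
  exact le_csInf ⟨_, ⟨t, ⟨ht0, htD⟩, rfl⟩⟩ (by rintro _ ⟨t, ⟨ht0, htD⟩, rfl⟩; exact h t ht0 htD)

end Dir

section Dir2
variable {X : Type*} [NormedAddCommGroup X] [NormedSpace ℝ X]
variable {D : Set X} {g : X → ℝ} {ξ : X}

lemma dirD_smul_le (hDcvx : Convex ℝ D) (hgcvx : ConvexOn ℝ D g) (hξ : ξ ∈ interior D)
    (u : X) {c : ℝ} (hc : 0 < c) : dirD D g ξ (c • u) ≤ c * dirD D g ξ u := by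
  have key : ∀ t, 0 < t → ξ + t • u ∈ D →
      dirD D g ξ (c • u) ≤ (g (ξ + t • u) - g ξ) / t * c := by
    intro t ht0 htD
    have h1 : ξ + (t / c) • (c • u) = ξ + t • u := by
      rw [smul_smul, div_mul_cancel₀ _ hc.ne']
    have h2 := dirD_le (u := c • u) hDcvx hgcvx hξ (t := t / c) (by positivity)
      (by rw [h1]; exact htD)
    rw [h1] at h2
    calc dirD D g ξ (c • u) ≤ (g (ξ + t • u) - g ξ) / (t / c) := h2
      _ = (g (ξ + t • u) - g ξ) / t * c := by
          rw [div_div_eq_mul_div, mul_div_right_comm]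
  have h2 : dirD D g ξ (c • u) / c ≤ dirD D g ξ u :=
    le_dirD hξ fun t ht0 htD => (div_le_iff₀ hc).2 (key t ht0 htD)
  rw [mul_comm]
  exact (div_le_iff₀ hc).1 h2

lemma dirD_smul (hDcvx : Convex ℝ D) (hgcvx : ConvexOn ℝ D g) (hξ : ξ ∈ interior D)
    {c : ℝ} (hc : 0 < c) (u : X) : dirD D g ξ (c • u) = c * dirD D g ξ u := by
  refine le_antisymm (dirD_smul_le hDcvx hgcvx hξ u hc) ?_
  have h1 := dirD_smul_le hDcvx hgcvx hξ (c • u) (c := c⁻¹) (by positivity)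
  rw [smul_smul, inv_mul_cancel₀ hc.ne', one_smul] at h1
  calc c * dirD D g ξ u ≤ c * (c⁻¹ * dirD D g ξ (c • u)) :=
        mul_le_mul_of_nonneg_left h1 hc.le
    _ = dirD D g ξ (c • u) := by field_simp

lemma dirD_add (hDcvx : Convex ℝ D) (hgcvx : ConvexOn ℝ D g) (hξ : ξ ∈ interior D)
    (u v : X) : dirD D g ξ (u + v) ≤ dirD D g ξ u + dirD D g ξ v := by
  have hξD : ξ ∈ D := interior_subset hξ
  refine le_of_forall_pos_le_add fun ε hε => ?_
  obtain ⟨t1, ht1, _, ht1D⟩ := exists_mem_dirSet hξ u one_pos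
  obtain ⟨t2, ht2, _, ht2D⟩ := exists_mem_dirSet hξ v one_pos
  obtain ⟨q1, hq1mem, hq1⟩ := Real.lt_sInf_add_pos
    (⟨_, ⟨t1, ⟨ht1, ht1D⟩, rfl⟩⟩ : ((fun t => (g (ξ + t • u) - g ξ) / t) ''
      {t : ℝ | 0 < t ∧ ξ + t • u ∈ D}).Nonempty) (half_pos hε)
  obtain ⟨s1, ⟨hs1, hs1D⟩, rfl⟩ := hq1mem
  obtain ⟨q2, hq2mem, hq2⟩ := Real.lt_sInf_add_pos
    (⟨_, ⟨t2, ⟨ht2, ht2D⟩, rfl⟩⟩ : ((fun t => (g (ξ + t • v) - g ξ) / t) ''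
      {t : ℝ | 0 < t ∧ ξ + t • v ∈ D}).Nonempty) (half_pos hε)
  obtain ⟨s2, ⟨hs2, hs2D⟩, rfl⟩ := hq2mem
  obtain ⟨t, ht0, htlt, htD⟩ := exists_mem_dirSet hξ (u + v)
    (show (0:ℝ) < min (s1 / 2) (s2 / 2) by positivity)
  have h2t1 : 2 * t ≤ s1 := by
    have := htlt.trans_le (min_le_left _ _); linarith
  have h2t2 : 2 * t ≤ s2 := by
    have := htlt.trans_le (min_le_right _ _); linarith
  have hUD : ξ + (2 * t) • u ∈ D := ray_mem hDcvx hξD (by linarith) h2t1 hs1D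
  have hVD : ξ + (2 * t) • v ∈ D := ray_mem hDcvx hξD (by linarith) h2t2 hs2D
  -- midpoint inequality
  have hmid : g (ξ + t • (u + v)) ≤ (1/2) * g (ξ + (2*t) • u) + (1/2) * g (ξ + (2*t) • v) := by
    have hpt : ξ + t • (u + v) = (1/2 : ℝ) • (ξ + (2*t) • u) + (1/2 : ℝ) • (ξ + (2*t) • v) := by
      module
    rw [hpt]
    exact hgcvx.2 hUD hVD (by norm_num) (by norm_num) (by norm_num)
  have step1 : dirD D g ξ (u + v) ≤ (g (ξ + t • (u + v)) - g ξ) / t :=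
    dirD_le hDcvx hgcvx hξ ht0 htD
  have step2 : (g (ξ + t • (u + v)) - g ξ) / t
      ≤ (g (ξ + (2*t) • u) - g ξ) / (2*t) + (g (ξ + (2*t) • v) - g ξ) / (2*t) := by
    rw [← add_div, div_le_div_iff₀ ht0 (by positivity)]
    nlinarith [hmid]
  have step3 : (g (ξ + (2*t) • u) - g ξ) / (2*t) ≤ (g (ξ + s1 • u) - g ξ) / s1 :=
    slope_mono_div hgcvx hξD (by positivity) h2t1 hs1D
  have step4 : (g (ξ + (2*t) • v) - g ξ) / (2*t) ≤ (g (ξ + s2 • v) - g ξ) / s2 :=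
    slope_mono_div hgcvx hξD (by positivity) h2t2 hs2D
  have hd1 : (g (ξ + s1 • u) - g ξ) / s1 < dirD D g ξ u + ε / 2 := hq1
  have hd2 : (g (ξ + s2 • v) - g ξ) / s2 < dirD D g ξ v + ε / 2 := hq2
  linarith

end Dir2


theorem exists_subgradient_extend {X : Type*} [NormedAddCommGroup X] [NormedSpace ℝ X]
    (D : Set X) (hDcvx : Convex ℝ D)
    (g : X → ℝ) (hgcont : ContinuousOn g D) (hgcvx : ConvexOn ℝ D g)
    (ξ : X) (hξ : ξ ∈ interior D)
    (f : X →ₗ.[ℝ] ℝ)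
    (hf : ∀ z : f.domain, ∀ t : ℝ, 0 < t → ξ + t • (z : X) ∈ D →
      t * f z ≤ g (ξ + t • (z : X)) - g ξ) :
    ∃ φ ∈ SubdifferentialWithin g D ξ, ∀ z : f.domain, φ z = f z := by
  have hf' : ∀ z : f.domain, f z ≤ dirD D g ξ (z : X) := fun z =>
    le_dirD hξ fun t ht0 htD => (le_div_iff₀ ht0).2 (by rw [mul_comm]; exact hf z t ht0 htD)
  obtain ⟨φL, hφeq, hφle⟩ := exists_extension_of_le_sublinear f (dirD D g ξ)
    (fun c hc x => dirD_smul hDcvx hgcvx hξ hc x) (dirD_add hDcvx hgcvx hξ) hf'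
  -- a ball on which g is bounded
  obtain ⟨r, hr0, hball, hgb⟩ : ∃ r > 0, ball ξ r ⊆ D ∧ ∀ z ∈ ball ξ r, g z - g ξ ≤ 1 := by
    obtain ⟨r1, hr1, h1⟩ := Metric.mem_nhds_iff.1 (mem_interior_iff_mem_nhds.1 hξ)
    have hcA : ContinuousAt g ξ := hgcont.continuousAt (mem_interior_iff_mem_nhds.1 hξ)
    obtain ⟨δ, hδ, h2⟩ := Metric.continuousAt_iff.1 hcA 1 one_pos
    refine ⟨min r1 δ, by positivity, fun z hz => h1 (ball_subset_ball (min_le_left _ _) hz),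
      fun z hz => ?_⟩
    have := h2 (show dist z ξ < δ from lt_of_lt_of_le hz (min_le_right _ _))
    rw [Real.dist_eq] at this
    cases abs_lt.1 this with
    | intro h3 h4 => linarith
  -- norm bound on dirD
  have hpb : ∀ u : X, u ≠ 0 → dirD D g ξ u ≤ 2 / r * ‖u‖ := by
    intro u hu
    have hnu : 0 < ‖u‖ := norm_pos_iff.2 hu
    have ht0 : 0 < r / (2 * ‖u‖) := by positivity
    have hmem : ξ + (r / (2 * ‖u‖)) • u ∈ D := by
      apply hball
      rw [mem_ball, dist_eq_norm, add_sub_cancel_left, norm_smul, Real.norm_eq_abs,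
        abs_of_pos ht0, div_mul_eq_mul_div]
      rw [div_lt_iff₀ (by positivity)]
      nlinarith
    have h1 := dirD_le hDcvx hgcvx hξ ht0 hmem
    have h2 : g (ξ + (r / (2 * ‖u‖)) • u) - g ξ ≤ 1 := by
      apply hgb
      rw [mem_ball, dist_eq_norm, add_sub_cancel_left, norm_smul, Real.norm_eq_abs,
        abs_of_pos ht0, div_mul_eq_mul_div]
      rw [div_lt_iff₀ (by positivity)]
      nlinarith
    calc dirD D g ξ u ≤ (g (ξ + (r / (2 * ‖u‖)) • u) - g ξ) / (r / (2 * ‖u‖)) := h1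
      _ ≤ 1 / (r / (2 * ‖u‖)) := by gcongr
      _ = 2 / r * ‖u‖ := by field_simp
  have hbnd : ∀ u : X, ‖φL u‖ ≤ 2 / r * ‖u‖ := by
    intro u
    rcases eq_or_ne u 0 with rfl | hu
    · simp
    have h1 : φL u ≤ 2 / r * ‖u‖ := (hφle u).trans (hpb u hu)
    have h2 : φL (-u) ≤ 2 / r * ‖u‖ := by
      have := (hφle (-u)).trans (hpb (-u) (neg_ne_zero.2 hu))
      rwa [norm_neg] at this
    rw [map_neg] at h2
    rw [Real.norm_eq_abs, abs_le]
    constructor <;> linarith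
  refine ⟨LinearMap.mkContinuous φL (2 / r) hbnd, ?_, fun z => hφeq z⟩
  intro z hz
  have h1 : φL (z - ξ) ≤ dirD D g ξ (z - ξ) := hφle _
  have e : ξ + (1:ℝ) • (z - ξ) = z := by module
  have h2 : dirD D g ξ (z - ξ) ≤ (g (ξ + (1:ℝ) • (z - ξ)) - g ξ) / 1 :=
    dirD_le hDcvx hgcvx hξ one_pos (by rw [e]; exact hz)
  rw [e, div_one] at h2
  exact h1.trans h2

/-- Mean-value theorem for continuous convex functions on a closed convex set with
nonempty interior: for `x, y` in the interior of `D` there are `ξ` in the segment `[x, y]`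
and a subgradient `φ ∈ ∂g(ξ)` with `g y - g x = φ (y - x)`. -/
theorem convex_mean_value {X : Type*} [NormedAddCommGroup X] [NormedSpace ℝ X]
    [CompleteSpace X] (D : Set X) (hDcl : IsClosed D) (hDcvx : Convex ℝ D)
    (hDint : (interior D).Nonempty)
    (g : X → ℝ) (hgcont : ContinuousOn g D) (hgcvx : ConvexOn ℝ D g) :
    ∀ x ∈ interior D, ∀ y ∈ interior D,
      ∃ ξ ∈ segment ℝ x y, ∃ φ ∈ SubdifferentialWithin g D ξ,
        g y - g x = φ (y - x) := by
  intro x hx y hy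
  set v := y - x with hv
  set c := g y - g x with hc
  have hyv : x + (1:ℝ) • v = y := by rw [hv]; module
  have hsegInt : ∀ t ∈ Icc (0:ℝ) 1, x + t • v ∈ interior D := by
    intro t ht
    have h1 : x + t • v ∈ segment ℝ x y := by
      rw [segment_eq_image', ← hv]
      exact ⟨t, ht, rfl⟩
    exact (hDcvx.interior.segment_subset hx hy) h1
  have hsegD : ∀ t ∈ Icc (0:ℝ) 1, x + t • v ∈ D := fun t ht =>
    interior_subset (hsegInt t ht)
  -- minimizer of ψ t = g (x + t • v) - c * t
  have hψcont : ContinuousOn (fun t : ℝ => g (x + t • v) - c * t) (Icc 0 1) := by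
    apply ContinuousOn.sub
    · exact hgcont.comp (Continuous.continuousOn (by continuity)) hsegD
    · exact continuousOn_const.mul continuousOn_id
  obtain ⟨t1, ht1mem, ht1min⟩ := isCompact_Icc.exists_isMinOn (nonempty_Icc.2 zero_le_one) hψcont
  rw [isMinOn_iff] at ht1min
  obtain ⟨t0, ht0, hmin⟩ : ∃ t0 ∈ Ioo (0:ℝ) 1,
      ∀ t ∈ Icc (0:ℝ) 1, g (x + t0 • v) - c * t0 ≤ g (x + t • v) - c * t := by
    by_cases hio : t1 ∈ Ioo (0:ℝ) 1
    · exact ⟨t1, hio, ht1min⟩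
    · have hend : t1 = 0 ∨ t1 = 1 := by
        rcases ht1mem with ⟨h0, h1⟩
        rcases h0.eq_or_lt with h | h
        · exact Or.inl h.symm
        rcases h1.eq_or_lt with h' | h'
        · exact Or.inr h'
        · exact absurd ⟨h, h'⟩ hio
      have hval : g (x + t1 • v) - c * t1 = g x := by
        rcases hend with rfl | rfl
        · simp
        · rw [hyv, hc]; ring
      refine ⟨1/2, by norm_num, fun t ht => ?_⟩
      have hmidpt : x + (1/2 : ℝ) • v = (1/2 : ℝ) • x + (1/2 : ℝ) • y := by
        rw [hv]; module
      have hmid : g (x + (1/2 : ℝ) • v) ≤ (1/2) * g x + (1/2) * g y := by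
        rw [hmidpt]
        exact hgcvx.2 (interior_subset hx) (interior_subset hy) (by norm_num) (by norm_num)
          (by norm_num)
      have h2 := ht1min t ht
      rw [hval] at h2
      have hc' : c = g y - g x := hc
      have hgoal : g (x + (1/2:ℝ) • v) - c * (1/2) ≤ g x := by linarith
      exact le_trans hgoal h2
  have hξInt : x + t0 • v ∈ interior D := hsegInt t0 (Ioo_subset_Icc_self ht0)
  have hξD : x + t0 • v ∈ D := interior_subset hξInt
  -- key slope estimates at ξ = x + t0 • v
  have hvkey : ∀ τ : ℝ, 0 < τ → (x + t0 • v) + τ • v ∈ D →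
      τ * c ≤ g ((x + t0 • v) + τ • v) - g (x + t0 • v) := by
    intro τ hτ hmem
    by_cases hcase : τ ≤ 1 - t0
    · have h := hmin (t0 + τ) ⟨by linarith [ht0.1], by linarith⟩
      have e : x + (t0 + τ) • v = (x + t0 • v) + τ • v := by module
      rw [e] at h
      linarith
    · push_neg at hcase
      have h1t0 : 0 < 1 - t0 := by linarith [ht0.2]
      have hmm := slope_mono_mul (u := v) hgcvx hξD h1t0 hcase.le hmem
      have ey : (x + t0 • v) + (1 - t0) • v = x + (1:ℝ) • v := by module
      rw [ey, hyv] at hmm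
      have hψ1 := hmin 1 ⟨zero_le_one, le_refl 1⟩
      rw [hyv] at hψ1
      have hyc : c * (1 - t0) ≤ g y - g (x + t0 • v) := by rw [hc]; nlinarith [hψ1]
      nlinarith [mul_le_mul_of_nonneg_left hyc hτ.le, hmm, h1t0, hτ]
  have hwkey : ∀ τ : ℝ, 0 < τ → (x + t0 • v) + τ • (-v) ∈ D →
      τ * (-c) ≤ g ((x + t0 • v) + τ • (-v)) - g (x + t0 • v) := by
    intro τ hτ hmem
    by_cases hcase : τ ≤ t0
    · have h := hmin (t0 - τ) ⟨by linarith, by linarith [ht0.2]⟩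
      have e : x + (t0 - τ) • v = (x + t0 • v) + τ • (-v) := by module
      rw [e] at h
      linarith
    · push_neg at hcase
      have ht00 : 0 < t0 := ht0.1
      have hmm := slope_mono_mul (u := -v) hgcvx hξD ht00 hcase.le hmem
      have ex : (x + t0 • v) + t0 • (-v) = x + (0:ℝ) • v := by module
      rw [ex] at hmm
      have hψ0 := hmin 0 ⟨le_refl 0, zero_le_one⟩
      have hxc : (-c) * t0 ≤ g (x + (0:ℝ) • v) - g (x + t0 • v) := by nlinarith [hψ0]
      nlinarith [mul_le_mul_of_nonneg_left hxc hτ.le, hmm, ht00, hτ]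
  -- assemble
  have hsegmem : x + t0 • v ∈ segment ℝ x y := by
    rw [segment_eq_image', ← hv]
    exact ⟨t0, Ioo_subset_Icc_self ht0, rfl⟩
  rcases eq_or_ne v 0 with hv0 | hv0
  · -- y = x
    obtain ⟨φ, hφ, -⟩ := exists_subgradient_extend D hDcvx g hgcont hgcvx _ hξInt
      ⟨⊥, 0⟩ (by
        rintro z t ht0' htD
        have hz0 : (z : X) = 0 := (Submodule.mem_bot ℝ).1 z.2
        rw [hz0] at htD ⊢
        simp)
    refine ⟨x + t0 • v, hsegmem, φ, hφ, ?_⟩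
    have hyx : y = x := by rw [← sub_eq_zero, ← hv]; exact hv0
    have hc0 : c = 0 := by rw [hc, hyx, sub_self]
    rw [hv0, hc0, map_zero]
  · obtain ⟨φ, hφ, hφeq⟩ := exists_subgradient_extend D hDcvx g hgcont hgcvx _ hξInt
      (LinearPMap.mkSpanSingleton v c hv0) (by
        rintro ⟨z1, hz1⟩ t ht0' htD
        obtain ⟨s, rfl⟩ := Submodule.mem_span_singleton.1 hz1
        rw [LinearPMap.mkSpanSingleton'_apply, smul_eq_mul]
        simp only [RingHom.id_apply]
        rcases lt_trichotomy s 0 with hs | rfl | hs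
        · have e : t • (s • v) = (t * (-s)) • (-v) := by module
          rw [e] at htD ⊢
          have hkey := hwkey (t * (-s)) (by nlinarith) htD
          have : t * (s * c) = (t * (-s)) * (-c) := by ring
          linarith
        · simp
        · have e : t • (s • v) = (t * s) • v := by module
          rw [e] at htD ⊢
          have hkey := hvkey (t * s) (by positivity) htD
          have : t * (s * c) = (t * s) * c := by ring
          linarith)
    refine ⟨x + t0 • v, hsegmem, φ, hφ, ?_⟩
    have h := hφeq ⟨v, Submodule.mem_span_singleton_self v⟩
    rw [LinearPMap.mkSpanSingleton_apply ℝ ℝ hv0 c] at h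
    exact h.symm
end

section
/- Let X be a real Banach space, μ a convex MNC on X, and I = [0,a] with a > 0. Let G be a nonempty set of Bochner integrable functions g : I → X such that there exists a Lebesgue integrable ψ : I → [0,∞) with sup_{g∈G} ‖g(t)‖ ≤ ψ(t) for a.e. t ∈ I, and assume 𝕁_G : I → C_b(Ω) is strongly measurable. Then μ(∫₀ᵗ G(s) ds) ≤ ∫₀ᵗ μ(G(s)) ds holds (with the right side a Lebesgue integral in [0,∞]) whenever either (i) 0 < t ≤ min{1, a}, or (ii) μ is a sublinear MNC and 0 < t ≤ a. -/
set_option linter.unusedSectionVars false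
set_option linter.unusedVariables false
set_option maxHeartbeats 1000000
open scoped NNReal ENNReal


open Set MeasureTheory Bornology Pointwise

/-- A sublinear MNC: a convex MNC which is in addition positively homogeneous and
subadditive. -/
structure IsSublinearMNC (X : Type*) [NormedAddCommGroup X] [NormedSpace ℝ X]
    (μ : Set X → ℝ) extends IsConvexMNC X μ : Prop where
  smul_eq : ∀ B : Set X, B.Nonempty → IsBounded B → ∀ k : ℝ, 0 ≤ k → μ (k • B) = k * μ B
  add_le : ∀ A B : Set X, A.Nonempty → B.Nonempty → IsBounded A → IsBounded B →
    μ (A + B) ≤ μ A + μ B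

/-- `Ω`: the closed unit ball of the dual space `X*`, with the norm topology. -/
abbrev DualUnitBall (X : Type*) [NormedAddCommGroup X] [NormedSpace ℝ X] :
    Set (StrongDual ℝ X) :=
  Metric.closedBall 0 1

section MNCAux

variable {X : Type*} [NormedAddCommGroup X] [NormedSpace ℝ X]




lemma aux_ball_smul {r : ℝ} (hr : 0 ≤ r) :
    r • Metric.closedBall (0:X) 1 = Metric.closedBall (0:X) r := by
  rw [smul_unitClosedBall, Real.norm_of_nonneg hr]

lemma aux_ball_add (r s : ℝ) :
    Metric.closedBall (0:X) r + Metric.closedBall (0:X) s ⊆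
      Metric.closedBall (0:X) (r + s) := by
  rintro x ⟨u, hu, v, hv, rfl⟩
  simp only [Metric.mem_closedBall, dist_zero_right] at *
  exact (norm_add_le u v).trans (add_le_add hu hv)

lemma aux_sum_ball {ι : Type*} (s : Finset ι) (r : ι → ℝ) :
    ∑ i ∈ s, Metric.closedBall (0:X) (r i) ⊆ Metric.closedBall (0:X) (∑ i ∈ s, r i) := by
  classical
  induction s using Finset.cons_induction with
  | empty =>
    simp only [Finset.sum_empty]
    intro x hx
    simp only [Set.mem_zero.mp hx]
    simp
  | cons i s his ih =>
    rw [Finset.sum_cons, Finset.sum_cons]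
    exact (Set.add_subset_add_left ih).trans (aux_ball_add _ _)

lemma aux_closure_subset_add_ball {U : Set X} {ε : ℝ} (hε : 0 < ε) :
    closure U ⊆ U + Metric.closedBall 0 ε := by
  intro y hy
  obtain ⟨x, hx, hd⟩ := Metric.mem_closure_iff.mp hy ε hε
  refine ⟨x, hx, y - x, ?_, by simp⟩
  simp only [Metric.mem_closedBall, dist_zero_right, ← dist_eq_norm']
  exact (dist_comm y x ▸ hd).le

lemma aux_sum_sets_nonempty {ι : Type*} (s : Finset ι) (A : ι → Set X)
    (h : ∀ i ∈ s, (A i).Nonempty) : (∑ i ∈ s, A i).Nonempty := by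
  classical
  induction s using Finset.cons_induction with
  | empty => exact ⟨0, by simp [Set.mem_zero]⟩
  | cons i s his ih =>
    rw [Finset.sum_cons]
    exact (h i (Finset.mem_cons_self i s)).add (ih fun j hj => h j (Finset.mem_cons_of_mem hj))




lemma aux_sum_sets_subset_ball {ι : Type*} (s : Finset ι) (A : ι → Set X) (r : ι → ℝ)
    (h : ∀ i ∈ s, A i ⊆ Metric.closedBall 0 (r i)) :
    ∑ i ∈ s, A i ⊆ Metric.closedBall (0:X) (∑ i ∈ s, r i) :=
  (Set.finset_sum_subset_finset_sum s _ _ h).trans (aux_sum_ball s r)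

/-- Separation lemma: if every unit functional nearly-bounds `ω x` by the approximate
supremum over `B` plus `ε`, then `x` is in the closed `ε`-fattening of the convex hull. -/
lemma aux_sep {B : Set X} (hB : B.Nonempty) {ε : ℝ} (hε : 0 < ε) (x : X)
    (hx : ∀ ω : StrongDual ℝ X, ‖ω‖ ≤ 1 → ∀ δ : ℝ, 0 < δ →
      ∃ b ∈ B, ω x ≤ ω b + ε + δ) :
    x ∈ closure (convexHull ℝ B + Metric.closedBall 0 ε) := by
  by_contra hxC
  set C := closure (convexHull ℝ B + Metric.closedBall 0 ε) with hC
  have hCconv : Convex ℝ C :=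
    ((convex_convexHull ℝ B).add (convex_closedBall 0 ε)).closure
  obtain ⟨f, u, hfu, hux⟩ := geometric_hahn_banach_closed_point hCconv isClosed_closure hxC
  obtain ⟨b₀, hb₀⟩ := hB
  have hmemC : ∀ b ∈ B, ∀ v ∈ Metric.closedBall (0:X) ε, b + v ∈ C := fun b hb v hv =>
    subset_closure (Set.add_mem_add (subset_convexHull ℝ B hb) hv)
  have hf0 : f ≠ 0 := by
    intro h
    have h1 := hfu (b₀ + 0) (hmemC b₀ hb₀ 0 (by simp [hε.le]))
    rw [h] at h1 hux
    simp at h1 hux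
    linarith
  have hnf : 0 < ‖f‖ := norm_pos_iff.mpr hf0
  -- every b in B satisfies f b ≤ u - ε‖f‖
  have key : ∀ b ∈ B, f b ≤ u - ε * ‖f‖ := by
    intro b hb
    have h1 : ∀ v : X, ‖v‖ ≤ 1 → f v ≤ (u - f b) / ε := by
      intro v hv
      have := hfu (b + ε • v) (hmemC b hb (ε • v) (by
        simp only [Metric.mem_closedBall, dist_zero_right, norm_smul, Real.norm_of_nonneg hε.le]
        nlinarith))
      rw [map_add, f.map_smul, smul_eq_mul] at this
      rw [le_div_iff₀ hε]
      linarith [this]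
    have hc0 : 0 ≤ (u - f b) / ε := by simpa using h1 0 (by simp)
    have h2 : ‖f‖ ≤ (u - f b) / ε := by
      refine f.opNorm_le_bound hc0 fun z => ?_
      rcases eq_or_ne z 0 with rfl | hz
      · simp
      · have hnz : 0 < ‖z‖ := norm_pos_iff.mpr hz
        have hv1 : ‖(‖z‖⁻¹ • z)‖ ≤ 1 := by
          rw [norm_smul, norm_inv, norm_norm, inv_mul_cancel₀ hnz.ne']
        have hv2 : ‖(-(‖z‖⁻¹ • z))‖ ≤ 1 := by rwa [norm_neg]
        have e1 := h1 _ hv1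
        have e2 := h1 _ hv2
        rw [map_neg] at e2
        rw [f.map_smul, smul_eq_mul] at e1 e2
        have : |‖z‖⁻¹ * f z| ≤ (u - f b) / ε := abs_le.mpr ⟨by linarith, e1⟩
        rw [abs_mul, abs_inv, abs_norm] at this
        rw [Real.norm_eq_abs]
        calc |f z| = ‖z‖ * (‖z‖⁻¹ * |f z|) := by field_simp
        _ ≤ ‖z‖ * ((u - f b)/ε) := by
            exact mul_le_mul_of_nonneg_left this hnz.le
        _ = (u - f b)/ε * ‖z‖ := by ring
    rw [le_div_iff₀ hε] at h2
    nlinarith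
  -- contradiction using the near-sup hypothesis with ω := ‖f‖⁻¹ • f
  set ω : StrongDual ℝ X := ‖f‖⁻¹ • f with hω
  have hωn : ‖ω‖ ≤ 1 := by
    rw [hω, norm_smul, norm_inv, norm_norm, inv_mul_cancel₀ hnf.ne']
  have hωx : ω x > ‖f‖⁻¹ * u := by
    have : ω x = ‖f‖⁻¹ * f x := rfl
    rw [this]
    exact mul_lt_mul_of_pos_left hux (inv_pos.mpr hnf)
  have hfin : ∀ δ : ℝ, 0 < δ → ω x ≤ ‖f‖⁻¹ * u + δ := by
    intro δ hδ
    obtain ⟨b, hbB, hble⟩ := hx ω hωn δ hδ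
    have hωb : ω b = ‖f‖⁻¹ * f b := rfl
    have : ω b ≤ ‖f‖⁻¹ * (u - ε * ‖f‖) := by
      rw [hωb]
      exact mul_le_mul_of_nonneg_left (key b hbB) (inv_nonneg.mpr hnf.le)
    have hεf : ‖f‖⁻¹ * (ε * ‖f‖) = ε := by field_simp
    calc ω x ≤ ω b + ε + δ := hble
    _ ≤ ‖f‖⁻¹ * (u - ε * ‖f‖) + ε + δ := by linarith
    _ = ‖f‖⁻¹ * u + δ := by field_simp; ring
  have : ω x ≤ ‖f‖⁻¹ * u := by
    by_contra hcon
    push_neg at hcon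
    have := hfin ((ω x - ‖f‖⁻¹ * u)/2) (by linarith)
    linarith
  linarith


variable {X : Type*} [NormedAddCommGroup X] [NormedSpace ℝ X]

lemma aux_sum_sets_nonempty' {ι : Type*} (s : Finset ι) (A : ι → Set X)
    (h : ∀ i ∈ s, (A i).Nonempty) : (∑ i ∈ s, A i).Nonempty := by
  classical
  induction s using Finset.cons_induction with
  | empty => exact ⟨0, by simp [Set.mem_zero]⟩
  | cons i s his ih =>
    rw [Finset.sum_cons]
    exact (h i (Finset.mem_cons_self i s)).add (ih fun j hj => h j (Finset.mem_cons_of_mem hj))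

lemma aux_mnc_zero {μ : Set X → ℝ} (hμ : IsConvexMNC X μ) : μ {0} = 0 :=
  (hμ.eq_zero_iff {0} ⟨0, rfl⟩ isBounded_singleton).mpr
    (by rw [closure_singleton]; exact isCompact_singleton)

lemma aux_ball_nonneg {A : Set X} {R : ℝ} (hA : A.Nonempty)
    (h : A ⊆ Metric.closedBall 0 R) : 0 ≤ R := by
  obtain ⟨x, hx⟩ := hA
  have := h hx
  simp only [Metric.mem_closedBall, dist_zero_right] at this
  exact (norm_nonneg x).trans this

lemma aux_smul_subset_ball {A : Set X} {R c : ℝ} (hc : 0 ≤ c)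
    (h : A ⊆ Metric.closedBall 0 R) : c • A ⊆ Metric.closedBall 0 (c * R) := by
  rintro y ⟨x, hx, rfl⟩
  have hx' := h hx
  simp only [Metric.mem_closedBall, dist_zero_right] at *
  rw [norm_smul, Real.norm_of_nonneg hc]
  exact mul_le_mul_of_nonneg_left hx' hc

lemma aux_one_smul_set (A : Set X) : (1 : ℝ) • A = A := by
  ext x
  constructor
  · rintro ⟨y, hy, rfl⟩; simpa using hy
  · intro hx; exact ⟨x, hx, by simp⟩

lemma aux_combo_convex {μ : Set X → ℝ} (hμ : IsConvexMNC X μ) {ι : Type*} (s : Finset ι)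
    (c : ι → ℝ) (A : ι → Set X) (hc : ∀ i ∈ s, 0 ≤ c i) (hs : ∑ i ∈ s, c i ≤ 1)
    (hA : ∀ i ∈ s, (A i).Nonempty) (hAb : ∀ i ∈ s, ∃ R, A i ⊆ Metric.closedBall 0 R) :
    μ (∑ i ∈ s, c i • A i) ≤ ∑ i ∈ s, c i * μ (A i) := by
  classical
  induction s using Finset.cons_induction generalizing c with
  | empty =>
    simp only [Finset.sum_empty]
    rw [show (0 : Set X) = ({0} : Set X) from rfl, aux_mnc_zero hμ]
  | cons i s his ih =>
    rw [Finset.sum_cons, Finset.sum_cons] at *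
    have hci : 0 ≤ c i := hc i (Finset.mem_cons_self i s)
    have hAi : (A i).Nonempty := hA i (Finset.mem_cons_self i s)
    obtain ⟨Ri, hRi⟩ := hAb i (Finset.mem_cons_self i s)
    have hAib : IsBounded (A i) := (Metric.isBounded_closedBall).subset hRi
    have hcs : ∀ j ∈ s, 0 ≤ c j := fun j hj => hc j (Finset.mem_cons_of_mem hj)
    have hAs : ∀ j ∈ s, (A j).Nonempty := fun j hj => hA j (Finset.mem_cons_of_mem hj)
    have hAsb : ∀ j ∈ s, ∃ R, A j ⊆ Metric.closedBall 0 R := fun j hj =>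
      hAb j (Finset.mem_cons_of_mem hj)
    have hsum0 : 0 ≤ ∑ j ∈ s, c j := Finset.sum_nonneg hcs
    rcases eq_or_lt_of_le (show c i ≤ 1 by linarith) with h1 | h1
    · -- c i = 1, all others are zero
      have hz : ∀ j ∈ s, c j = 0 := by
        intro j hj
        have hle : ∑ k ∈ s, c k ≤ 0 := by rw [← h1] at hs; linarith
        have h2 := Finset.sum_le_sum_of_subset_of_nonneg (Finset.singleton_subset_iff.mpr hj)
          (fun k hk _ => hcs k hk)
        rw [Finset.sum_singleton] at h2
        have := hcs j hj
        linarith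
      have hterm : ∀ j ∈ s, c j • A j = (0 : Set X) := fun j hj => by
        rw [hz j hj, Set.zero_smul_set (hAs j hj)]
      have hsumz : ∑ j ∈ s, c j • A j = (0 : Set X) := by
        exact Finset.sum_eq_zero hterm
      have hrhs : ∑ j ∈ s, c j * μ (A j) = 0 :=
        Finset.sum_eq_zero fun j hj => by rw [hz j hj, zero_mul]
      rw [hsumz, hrhs, h1, aux_one_smul_set, add_zero, one_mul, add_zero]
    · -- c i < 1
      set d : ℝ := 1 - c i with hd
      have hd0 : 0 < d := by simp only [hd]; linarith
      set U : Set X := ∑ j ∈ s, (c j / d) • A j with hUdef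
      have hU : ∑ j ∈ s, c j • A j = d • U := by
        rw [hUdef, Finset.smul_sum]
        refine Finset.sum_congr rfl fun j hj => ?_
        rw [smul_smul, mul_div_cancel₀ _ hd0.ne']
      have hUn : U.Nonempty :=
        aux_sum_sets_nonempty' s _ fun j hj => (hAs j hj).smul_set
      choose R hR using hAsb
      have hUsub : U ⊆ Metric.closedBall 0 (∑ j ∈ s.attach, (c j.1 / d) * R j.1 j.2) := by
        rw [hUdef, ← Finset.sum_attach s fun j => (c j / d) • A j]
        exact aux_sum_sets_subset_ball _ _ _ fun j hj =>
          aux_smul_subset_ball (div_nonneg (hcs j.1 j.2) hd0.le) (hR j.1 j.2)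
      have hUb : IsBounded U := Metric.isBounded_closedBall.subset hUsub
      have hconv := hμ.convex (A i) U hAi hUn hAib hUb (c i) hci h1.le
      have hihm : μ U ≤ ∑ j ∈ s, (c j / d) * μ (A j) := by
        refine ih _ (fun j hj => div_nonneg (hcs j hj) hd0.le) ?_ hAs
          (fun j hj => ⟨R j hj, hR j hj⟩)
        rw [← Finset.sum_div, div_le_one hd0]
        simp only [hd]; linarith
      have hdU : (1 - c i) • U = d • U := by rw [hd]
      calc μ (c i • A i + ∑ j ∈ s, c j • A j)
          = μ (c i • A i + (1 - c i) • U) := by rw [hU, hdU]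
        _ ≤ c i * μ (A i) + (1 - c i) * μ U := hconv
        _ ≤ c i * μ (A i) + d * ∑ j ∈ s, (c j / d) * μ (A j) := by
            rw [← hd]
            have := mul_le_mul_of_nonneg_left hihm hd0.le
            linarith [this]
        _ = c i * μ (A i) + ∑ j ∈ s, c j * μ (A j) := by
            rw [Finset.mul_sum]
            congr 1
            refine Finset.sum_congr rfl fun j hj => ?_
            field_simp

lemma aux_combo_sub {μ : Set X → ℝ} (hμ : IsSublinearMNC X μ) {ι : Type*} (s : Finset ι)
    (c : ι → ℝ) (A : ι → Set X) (hc : ∀ i ∈ s, 0 ≤ c i)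
    (hA : ∀ i ∈ s, (A i).Nonempty) (hAb : ∀ i ∈ s, ∃ R, A i ⊆ Metric.closedBall 0 R) :
    μ (∑ i ∈ s, c i • A i) ≤ ∑ i ∈ s, c i * μ (A i) := by
  classical
  induction s using Finset.cons_induction with
  | empty =>
    simp only [Finset.sum_empty]
    rw [show (0 : Set X) = ({0} : Set X) from rfl, aux_mnc_zero hμ.toIsConvexMNC]
  | cons i s his ih =>
    rw [Finset.sum_cons, Finset.sum_cons]
    have hci : 0 ≤ c i := hc i (Finset.mem_cons_self i s)
    have hAi : (A i).Nonempty := hA i (Finset.mem_cons_self i s)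
    obtain ⟨Ri, hRi⟩ := hAb i (Finset.mem_cons_self i s)
    have hAib : IsBounded (A i) := (Metric.isBounded_closedBall).subset hRi
    have hcs : ∀ j ∈ s, 0 ≤ c j := fun j hj => hc j (Finset.mem_cons_of_mem hj)
    have hAs : ∀ j ∈ s, (A j).Nonempty := fun j hj => hA j (Finset.mem_cons_of_mem hj)
    have hAsb := fun j hj => hAb j (Finset.mem_cons_of_mem hj)
    set U : Set X := ∑ j ∈ s, c j • A j with hUdef
    have hUn : U.Nonempty := aux_sum_sets_nonempty' s _ fun j hj => (hAs j hj).smul_set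
    choose R hR using hAsb
    have hUsub : U ⊆ Metric.closedBall 0 (∑ j ∈ s.attach, c j.1 * R j.1 j.2) := by
      rw [hUdef, ← Finset.sum_attach s fun j => c j • A j]
      exact aux_sum_sets_subset_ball _ _ _ fun j hj =>
        aux_smul_subset_ball (hcs j.1 j.2) (hR j.1 j.2)
    have hUb : IsBounded U := Metric.isBounded_closedBall.subset hUsub
    calc μ (c i • A i + U) ≤ μ (c i • A i) + μ U :=
          hμ.add_le _ _ (hAi.smul_set) hUn
            (Metric.isBounded_closedBall.subset (aux_smul_subset_ball hci hRi)) hUb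
      _ ≤ c i * μ (A i) + ∑ j ∈ s, c j * μ (A j) := by
          rw [hμ.smul_eq (A i) hAi hAib (c i) hci]
          have := ih hcs hAs fun j hj => ⟨R j hj, hR j hj⟩
          linarith

lemma aux_integral_mem [CompleteSpace X] {E : Set ℝ} (hE : MeasurableSet E) (hEfin : volume E ≠ ⊤)
    (g : ℝ → X) (hg : IntegrableOn g E volume) {C : Set X} (hC : Convex ℝ C)
    (hCc : IsClosed C) (hCne : C.Nonempty) (hmem : ∀ s ∈ E, g s ∈ C) :
    ∫ s in E, g s ∈ (volume E).toReal • C := by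
  rcases eq_or_ne (volume E) 0 with h0 | h0
  · rw [Measure.restrict_eq_zero.mpr h0, integral_zero_measure, h0]
    simp only [ENNReal.toReal_zero]
    rw [Set.zero_smul_set hCne]
    rfl
  · haveI : IsFiniteMeasure (volume.restrict E) :=
      ⟨by rwa [Measure.restrict_apply_univ, lt_top_iff_ne_top]⟩
    haveI : NeZero (volume.restrict E) := ⟨fun h => h0 (by
      rw [← Measure.restrict_apply_univ, h]; rfl)⟩
    have havg : (⨍ s in E, g s ∂volume) ∈ C :=
      hC.average_mem hCc ((ae_restrict_iff' hE).2 (ae_of_all _ hmem)) hg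
    have hrw : ∫ s in E, g s = (volume E).toReal • ⨍ s in E, g s ∂volume := by
      rw [average_eq, measureReal_restrict_apply_univ, measureReal_def, smul_smul]
      rw [mul_inv_cancel₀ (by
        simp only [ne_eq, ENNReal.toReal_eq_zero_iff]
        push_neg
        exact ⟨h0, hEfin⟩), one_smul]
    rw [hrw]
    exact Set.smul_mem_smul_set havg


lemma aux_tail {ψ : ℝ → ℝ} (ψm : ℝ → ℝ) {S : Set ℝ} (hS : MeasurableSet S)
    (hψint : IntegrableOn ψ S volume) (hψ0 : ∀ x, 0 ≤ ψ x) (hψm : Measurable ψm)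
    {γ : ℝ} (hγ : 0 < γ) :
    ∃ M : ℕ, ∫ s in S ∩ {x | (M : ℝ) ≤ ψm x}, ψ s ≤ γ := by
  have hUmeas : ∀ n : ℕ, MeasurableSet {x | (n : ℝ) ≤ ψm x} := fun n =>
    hψm measurableSet_Ici
  have htend : Filter.Tendsto
      (fun n : ℕ => ∫ s, Set.indicator {x | (n : ℝ) ≤ ψm x} ψ s ∂(volume.restrict S))
      Filter.atTop (nhds (∫ _, (0:ℝ) ∂(volume.restrict S))) := by
    refine MeasureTheory.tendsto_integral_of_dominated_convergence ψ
      (fun n => (hψint.aestronglyMeasurable).indicator (hUmeas n)) hψint ?_ ?_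
    · intro n
      refine ae_of_all _ fun s => ?_
      by_cases h : s ∈ {x | (n : ℝ) ≤ ψm x}
      · rw [Set.indicator_of_mem h, Real.norm_of_nonneg (hψ0 s)]
      · rw [Set.indicator_of_notMem h, norm_zero]
        exact hψ0 s
    · refine ae_of_all _ fun s => ?_
      have : ∀ᶠ n : ℕ in Filter.atTop, Set.indicator {x | (n : ℝ) ≤ ψm x} ψ s = 0 := by
        obtain ⟨N, hN⟩ := exists_nat_gt (ψm s)
        refine Filter.eventually_atTop.mpr ⟨N, fun n hn => ?_⟩
        refine Set.indicator_of_notMem (fun hmem => ?_) ψ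
        have : (N : ℝ) ≤ (n : ℝ) := Nat.cast_le.mpr hn
        exact absurd hmem (by simp only [Set.mem_setOf_eq]; push_neg; linarith)
      exact Filter.Tendsto.congr' (Filter.EventuallyEq.symm this) tendsto_const_nhds
  rw [integral_zero] at htend
  obtain ⟨M, hM⟩ := (htend.eventually (eventually_le_nhds hγ)).exists
  refine ⟨M, ?_⟩
  have hrw : ∫ s, Set.indicator {x | (M : ℝ) ≤ ψm x} ψ s ∂(volume.restrict S)
      = ∫ s in S ∩ {x | (M : ℝ) ≤ ψm x}, ψ s := by
    rw [integral_indicator (hUmeas M), Measure.restrict_restrict (hUmeas M), Set.inter_comm]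
  rw [hrw] at hM
  exact hM

end MNCAux

/-- Basic integral inequality, second form: under the hypotheses of the first form,
`μ(∫₀ᵗ G(s) ds) ≤ ∫₀ᵗ μ(G(s)) ds` holds whenever either `0 < t ≤ min{1,a}`, or `μ` is a
sublinear MNC and `0 < t ≤ a` (the right-hand side a Lebesgue integral in `[0,∞]`). -/
theorem convexMNC_integral_ineq' {X : Type*} [NormedAddCommGroup X] [NormedSpace ℝ X]
    [CompleteSpace X] (μ : Set X → ℝ) (hμ : IsConvexMNC X μ)
    (a : ℝ) (ha : 0 < a)
    (G : Set (ℝ → X)) (hGne : G.Nonempty)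
    (hGint : ∀ g ∈ G, IntegrableOn g (Icc 0 a) volume)
    (ψ : ℝ → ℝ) (hψ0 : ∀ t, 0 ≤ ψ t) (hψint : IntegrableOn ψ (Icc 0 a) volume)
    (hdom : ∀ᵐ t ∂(volume.restrict (Icc 0 a)), ∀ g ∈ G, ‖g t‖ ≤ ψ t)
    (JG : ℝ → BoundedContinuousFunction (DualUnitBall X) ℝ)
    (hJG_eq : ∀ᵐ t ∂(volume.restrict (Icc 0 a)), ∀ ω : DualUnitBall X,
      JG t ω = ⨆ g : G, (ω : StrongDual ℝ X) ((g : ℝ → X) t))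
    (hJG_meas : AEStronglyMeasurable JG (volume.restrict (Icc 0 a)))
    (t : ℝ)
    (hcase : (0 < t ∧ t ≤ min 1 a) ∨ (IsSublinearMNC X μ ∧ 0 < t ∧ t ≤ a)) :
    ENNReal.ofReal (μ ((fun g : ℝ → X => ∫ s in Ioc (0 : ℝ) t, g s) '' G)) ≤
      ∫⁻ s in Ioc (0 : ℝ) t, ENNReal.ofReal (μ ((fun g : ℝ → X => g s) '' G)) := by
  classical
  have ht0 : 0 < t := by rcases hcase with ⟨h, _⟩ | ⟨_, h, _⟩ <;> exact h
  have hta : t ≤ a := by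
    rcases hcase with ⟨_, h⟩ | ⟨_, _, h⟩
    · exact h.trans (min_le_right 1 a)
    · exact h
  have htIoc : Ioc (0:ℝ) t ⊆ Icc (0:ℝ) a := fun s hs => ⟨hs.1.le, hs.2.trans hta⟩
  set ν := volume.restrict (Ioc (0:ℝ) t) with hν
  have hdom' : ∀ᵐ s ∂ν, ∀ g ∈ G, ‖g s‖ ≤ ψ s :=
    ae_restrict_of_ae_restrict_of_subset htIoc hdom
  have hJG_eq' : ∀ᵐ s ∂ν, ∀ ω : DualUnitBall X,
      JG s ω = ⨆ g : G, (ω : StrongDual ℝ X) ((g : ℝ → X) s) :=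
    ae_restrict_of_ae_restrict_of_subset htIoc hJG_eq
  -- measurable versions
  set ψm : ℝ → ℝ := (hψint.aestronglyMeasurable).mk ψ with hψm_def
  have hψm_meas : Measurable ψm := (hψint.aestronglyMeasurable).measurable_mk
  have hψm_ae : ∀ᵐ s ∂ν, ψ s = ψm s :=
    ae_restrict_of_ae_restrict_of_subset htIoc (hψint.aestronglyMeasurable).ae_eq_mk
  set JGm : ℝ → BoundedContinuousFunction (DualUnitBall X) ℝ := hJG_meas.mk JG with hJGm_def
  have hJGm_sm : StronglyMeasurable JGm := hJG_meas.stronglyMeasurable_mk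
  have hJGm_ae : ∀ᵐ s ∂ν, JG s = JGm s :=
    ae_restrict_of_ae_restrict_of_subset htIoc hJG_meas.ae_eq_mk
  -- integrability of g's on Ioc 0 t and JG bound
  have hgI : ∀ g ∈ G, IntegrableOn g (Ioc 0 t) volume := fun g hg =>
    (hGint g hg).mono_set htIoc
  have hψI : IntegrableOn ψ (Ioc 0 t) volume := hψint.mono_set htIoc
  obtain ⟨g₀, hg₀⟩ := id hGne
  have hJG_norm : ∀ᵐ s ∂ν, ‖JG s‖ ≤ ψ s := by
    filter_upwards [hdom', hJG_eq'] with s h1 h2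
    haveI : Nonempty G := ⟨⟨g₀, hg₀⟩⟩
    refine BoundedContinuousFunction.norm_le (hψ0 s) |>.mpr fun ω => ?_
    have hωle : ‖(ω : StrongDual ℝ X)‖ ≤ 1 := mem_closedBall_zero_iff.mp ω.2
    have habs : ∀ g : G, |(ω : StrongDual ℝ X) ((g : ℝ → X) s)| ≤ ψ s := by
      intro g
      calc |(ω : StrongDual ℝ X) ((g : ℝ → X) s)|
          = ‖(ω : StrongDual ℝ X) ((g : ℝ → X) s)‖ := (Real.norm_eq_abs _).symm
        _ ≤ ‖(ω : StrongDual ℝ X)‖ * ‖(g : ℝ → X) s‖ :=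
            (ω : StrongDual ℝ X).le_opNorm _
        _ ≤ 1 * ψ s := mul_le_mul hωle (h1 g g.2) (norm_nonneg _) zero_le_one
        _ = ψ s := one_mul _
    have hbdd : BddAbove (Set.range fun g : G =>
        (ω : StrongDual ℝ X) ((g : ℝ → X) s)) := by
      refine ⟨ψ s, ?_⟩
      rintro y ⟨g, rfl⟩
      exact (abs_le.mp (habs g)).2
    rw [h2 ω, Real.norm_eq_abs, abs_le]
    constructor
    · exact le_trans (by linarith [(abs_le.mp (habs ⟨g₀, hg₀⟩)).1]) (le_ciSup hbdd ⟨g₀, hg₀⟩)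
    · exact ciSup_le fun g => (abs_le.mp (habs g)).2
  -- the target as an ε-style statement
  refine ENNReal.le_of_forall_pos_le_add fun ρ hρ _ => ?_
  have hρr0 : (0:ℝ) < (ρ:ℝ) := hρ
  -- constants
  set Ψ₀ : ℝ := ∫ s in Icc (0:ℝ) a, ψ s with hΨ₀def
  have hΨ₀0 : 0 ≤ Ψ₀ := setIntegral_nonneg measurableSet_Icc fun x _ => hψ0 x
  set K : ℝ := μ (Metric.closedBall (0:X) (Ψ₀ + t + 1)) with hKdef
  have hballne : (Metric.closedBall (0:X) (Ψ₀ + t + 1)).Nonempty :=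
    ⟨0, by simp [Metric.mem_closedBall]; linarith⟩
  have hK0 : 0 ≤ K :=
    hμ.nonneg _ hballne Metric.isBounded_closedBall
  set γ : ℝ := min ((ρ:ℝ) / (2*(K+1))) (1/2) with hγdef
  have hγ0 : 0 < γ := lt_min (by positivity) (by norm_num)
  have hγK : γ * K ≤ (ρ:ℝ)/2 := by
    have h1 : γ ≤ (ρ:ℝ)/(2*(K+1)) := min_le_left _ _
    have : γ * K ≤ ((ρ:ℝ)/(2*(K+1))) * K := mul_le_mul_of_nonneg_right h1 hK0
    calc γ * K ≤ ((ρ:ℝ)/(2*(K+1))) * K := this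
      _ ≤ (ρ:ℝ)/2 := by
          rw [div_mul_eq_mul_div, div_le_div_iff₀ (by positivity) (by norm_num)]
          nlinarith
  set ε : ℝ := min ((ρ:ℝ)/(2*(t+(3*t+2)*K+1))) (1/(2*(3*t+2))) with hεdef
  have hε0 : 0 < ε := lt_min (by positivity) (by positivity)
  have hεsmall : ε * (t+(3*t+2)*K) ≤ (ρ:ℝ)/2 := by
    have h1 : ε ≤ (ρ:ℝ)/(2*(t+(3*t+2)*K+1)) := min_le_left _ _
    have hD : 0 ≤ t+(3*t+2)*K := by nlinarith
    calc ε * (t+(3*t+2)*K) ≤ ((ρ:ℝ)/(2*(t+(3*t+2)*K+1))) * (t+(3*t+2)*K) :=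
          mul_le_mul_of_nonneg_right h1 hD
      _ ≤ (ρ:ℝ)/2 := by
          rw [div_mul_eq_mul_div, div_le_div_iff₀ (by positivity) (by norm_num)]
          nlinarith
  have hε12 : (3*t+2) * ε ≤ 1/2 := by
    have h1 : ε ≤ 1/(2*(3*t+2)) := min_le_right _ _
    have h2 : 0 < 3*t+2 := by linarith
    rw [mul_comm]
    calc ε * (3*t+2) ≤ (1/(2*(3*t+2))) * (3*t+2) := mul_le_mul_of_nonneg_right h1 h2.le
      _ = 1/2 := by
          rw [div_mul_eq_mul_div, one_mul, div_eq_div_iff (by positivity) (by norm_num : (2:ℝ) ≠ 0)]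
          ring
  -- choice of the cutoff level M
  obtain ⟨M, hMtail⟩ := aux_tail ψm measurableSet_Ioc hψI hψ0 hψm_meas hγ0
  -- JGm is L¹ on Ioc 0 t; simple function approximation
  have hJGm_int : Integrable JGm ν := by
    refine Integrable.mono' hψI hJGm_sm.aestronglyMeasurable ?_
    filter_upwards [hJG_norm, hJGm_ae] with s h1 h2
    rw [← h2]
    exact h1
  have hεφ0 : ENNReal.ofReal (ε*ε/(M+1)) ≠ 0 := by
    refine (ENNReal.ofReal_pos.mpr (by positivity)).ne'
  obtain ⟨φ, hφ, _⟩ := (memLp_one_iff_integrable.mpr hJGm_int).exists_simpleFunc_eLpNorm_sub_lt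
    ENNReal.one_ne_top hεφ0
  -- bad sets
  set N₁ : Set ℝ := {s | ε ≤ ‖JGm s - φ s‖} with hN₁def
  have hN₁meas : MeasurableSet N₁ := by
    have : Measurable fun s => ‖JGm s - φ s‖ :=
      (hJGm_sm.sub φ.stronglyMeasurable).norm.measurable
    exact this measurableSet_Ici
  have hνN₁ : ν N₁ ≤ ENNReal.ofReal (ε/(M+1)) := by
    have hmeasf : Measurable fun s => ((‖JGm s - φ s‖₊ : ℝ≥0) : ℝ≥0∞) :=
      (hJGm_sm.sub φ.stronglyMeasurable).nnnorm.measurable.coe_nnreal_ennreal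
    have hcheb := mul_meas_ge_le_lintegral₀ (μ := ν) hmeasf.aemeasurable (ENNReal.ofReal ε)
    have hset : {x | ENNReal.ofReal ε ≤ ((‖JGm x - φ x‖₊ : ℝ≥0) : ℝ≥0∞)} = N₁ := by
      ext x
      rw [hN₁def]
      simp only [Set.mem_setOf_eq, ← enorm_eq_nnnorm, ← ofReal_norm]
      exact ENNReal.ofReal_le_ofReal_iff (norm_nonneg _)
    rw [hset] at hcheb
    have hlint : ∫⁻ s, ((‖JGm s - φ s‖₊ : ℝ≥0) : ℝ≥0∞) ∂ν ≤ ENNReal.ofReal (ε*ε/(M+1)) := by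
      have := hφ.le
      rwa [eLpNorm_one_eq_lintegral_enorm] at this
    have hmul : ENNReal.ofReal ε * ν N₁ ≤ ENNReal.ofReal ε * ENNReal.ofReal (ε/(M+1)) := by
      rw [← ENNReal.ofReal_mul hε0.le]
      have : ε * (ε/(M+1)) = ε*ε/(M+1) := by ring
      rw [this]
      exact hcheb.trans hlint
    exact (ENNReal.mul_le_mul_iff_right (ENNReal.ofReal_pos.mpr hε0).ne' ENNReal.ofReal_ne_top).mp hmul
  -- the full pointwise "good" property and the bad set
  set P : ℝ → Prop := fun s => (∀ g ∈ G, ‖g s‖ ≤ ψ s) ∧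
    (∀ ω : DualUnitBall X, JG s ω = ⨆ g : G, (ω : StrongDual ℝ X) ((g : ℝ → X) s)) ∧
    ψ s = ψm s ∧ JG s = JGm s with hPdef
  have haeP : ∀ᵐ s ∂ν, P s := by
    filter_upwards [hdom', hJG_eq', hψm_ae, hJGm_ae] with s h1 h2 h3 h4
    exact ⟨h1, h2, h3, h4⟩
  set Bad : Set ℝ := {s | ¬ P s} ∩ Ioc 0 t with hBaddef
  have hBad0 : volume Bad = 0 := by
    have h1 : ν {s | ¬ P s} = 0 := by
      rw [← MeasureTheory.ae_iff] at *
      exact haeP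
    rwa [hν, Measure.restrict_apply' measurableSet_Ioc] at h1
  set T₀ : Set ℝ := toMeasurable volume Bad with hT₀def
  have hT₀meas : MeasurableSet T₀ := measurableSet_toMeasurable _ _
  have hT₀0 : volume T₀ = 0 := by rw [hT₀def, measure_toMeasurable]; exact hBad0
  have hgood : ∀ s ∈ Ioc (0:ℝ) t, s ∉ T₀ → P s := by
    intro s hs hsT
    by_contra h
    exact hsT (subset_toMeasurable volume Bad ⟨h, hs⟩)
  -- the exceptional set N
  set Nψ : Set ℝ := {x | (M:ℝ) ≤ ψm x} with hNψdef
  have hNψmeas : MeasurableSet Nψ := hψm_meas measurableSet_Ici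
  set N : Set ℝ := N₁ ∪ Nψ ∪ T₀ with hNdef
  have hNmeas : MeasurableSet N := (hN₁meas.union hNψmeas).union hT₀meas
  -- the pieces of the partition
  set E : BoundedContinuousFunction (DualUnitBall X) ℝ × ℕ → Set ℝ := fun p =>
    ((φ ⁻¹' {p.1}) ∩ (ψm ⁻¹' (Ico (p.2:ℝ) (p.2+1))) ∩ Ioc 0 t) \ N with hEdef
  have hEmeas : ∀ p, MeasurableSet (E p) := fun p =>
    (((φ.measurableSet_fiber p.1).inter (hψm_meas measurableSet_Ico)).inter
      measurableSet_Ioc).diff hNmeas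
  have hEsub : ∀ p, E p ⊆ Ioc 0 t := fun p s hs => hs.1.2
  have hEfin : ∀ p, volume (E p) ≠ ⊤ := fun p =>
    ((measure_mono (hEsub p)).trans_lt measure_Ioc_lt_top).ne
  have hEdisj : Pairwise (Function.onFun Disjoint E) := by
    intro p q hpq
    rw [Function.onFun, Set.disjoint_left]
    rintro s ⟨⟨⟨hf1, hl1⟩, _⟩, _⟩ ⟨⟨⟨hf2, hl2⟩, _⟩, _⟩
    apply hpq
    have h1 : φ s = p.1 := hf1
    have h2 : φ s = q.1 := hf2
    have hk : p.2 = q.2 := by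
      simp only [Set.mem_preimage, Set.mem_Ico] at hl1 hl2
      have := hl1.1; have := hl1.2; have := hl2.1; have := hl2.2
      by_contra hk
      rcases Nat.lt_or_ge p.2 q.2 with hlt | hge
      · have : (p.2:ℝ) + 1 ≤ (q.2:ℝ) := by exact_mod_cast Nat.succ_le_of_lt hlt
        linarith
      · have hlt : q.2 < p.2 := lt_of_le_of_ne hge (fun h => hk h.symm)
        have : (q.2:ℝ) + 1 ≤ (p.2:ℝ) := by exact_mod_cast Nat.succ_le_of_lt hlt
        linarith
    exact Prod.ext (h1 ▸ h2.symm ▸ rfl) hk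
  set J : Finset (BoundedContinuousFunction (DualUnitBall X) ℝ × ℕ) :=
    φ.range ×ˢ Finset.range M with hJdef
  have hcover : Ioc (0:ℝ) t \ N = ⋃ p ∈ J, E p := by
    apply Set.Subset.antisymm
    · intro s hs
      obtain ⟨hsI, hsN⟩ := hs
      have hsT₀ : s ∉ T₀ := fun h => hsN (Or.inr h)
      have hP := hgood s hsI hsT₀
      have hψnn : 0 ≤ ψm s := hP.2.2.1 ▸ hψ0 s
      have hψmlt : ψm s < M := by
        by_contra h
        push_neg at h
        exact hsN (Or.inl (Or.inr h))
      set k := ⌊ψm s⌋₊ with hk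
      have hkM : k < M := by
        rw [hk]
        exact Nat.floor_lt hψnn |>.mpr hψmlt
      refine Set.mem_biUnion (show (φ s, k) ∈ J from ?_) ?_
      · rw [hJdef, Finset.mem_product]
        exact ⟨φ.mem_range_self s, Finset.mem_range.mpr hkM⟩
      · refine ⟨⟨⟨rfl, ?_⟩, hsI⟩, hsN⟩
        simp only [Set.mem_preimage, Set.mem_Ico]
        exact ⟨Nat.floor_le hψnn, Nat.lt_floor_add_one _⟩
    · intro s hs
      obtain ⟨p, _, hp⟩ := Set.mem_iUnion₂.mp hs
      exact ⟨(hEsub p) hp, hp.2⟩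
  set J' : Finset (BoundedContinuousFunction (DualUnitBall X) ℝ × ℕ) :=
    J.filter (fun p => (E p).Nonempty) with hJ'def
  -- the value function and the near-infimum points
  set vG : ℝ → ℝ := fun s => μ ((fun g : ℝ → X => g s) '' G) with hvGdef
  set cP : BoundedContinuousFunction (DualUnitBall X) ℝ × ℕ → ℝ :=
    fun p => sInf (vG '' E p) with hcPdef
  have hptex : ∀ p : BoundedContinuousFunction (DualUnitBall X) ℝ × ℕ, ∃ s : ℝ,
      (E p).Nonempty → (s ∈ E p ∧ vG s < cP p + ε) := by
    intro p
    by_cases h : (E p).Nonempty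
    · obtain ⟨y, hy1, hy2⟩ := Real.lt_sInf_add_pos (h.image vG) hε0
      obtain ⟨s, hsE, rfl⟩ := hy1
      exact ⟨s, fun _ => ⟨hsE, hy2⟩⟩
    · exact ⟨0, fun hn => absurd hn h⟩
  choose pt hpt using hptex
  haveI hGnonempty : Nonempty G := ⟨⟨g₀, hg₀⟩⟩
  -- iSup bounded above at good points
  have hbddP : ∀ s : ℝ, P s → ∀ ω : DualUnitBall X,
      BddAbove (Set.range fun g : G => (ω : StrongDual ℝ X) ((g : ℝ → X) s)) := by
    intro s hPs ω
    refine ⟨ψ s, ?_⟩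
    rintro y ⟨g, rfl⟩
    have hωle : ‖(ω : StrongDual ℝ X)‖ ≤ 1 := mem_closedBall_zero_iff.mp ω.2
    calc (ω : StrongDual ℝ X) ((g : ℝ → X) s)
        ≤ ‖(ω : StrongDual ℝ X) ((g : ℝ → X) s)‖ := le_abs_self _
      _ ≤ ‖(ω : StrongDual ℝ X)‖ * ‖(g : ℝ → X) s‖ :=
          (ω : StrongDual ℝ X).le_opNorm _
      _ ≤ 1 * ψ s := mul_le_mul hωle (hPs.1 g g.2) (norm_nonneg _) zero_le_one
      _ = ψ s := one_mul _
  -- data associated to each piece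
  set Gp : BoundedContinuousFunction (DualUnitBall X) ℝ × ℕ → Set X :=
    fun p => (fun g : ℝ → X => g (pt p)) '' G with hGpdef
  set A : BoundedContinuousFunction (DualUnitBall X) ℝ × ℕ → Set X :=
    fun p => convexHull ℝ (Gp p) with hAdef
  set D : BoundedContinuousFunction (DualUnitBall X) ℝ × ℕ → Set X :=
    fun p => closure (A p + Metric.closedBall 0 (2*ε)) with hDdef
  set m : BoundedContinuousFunction (DualUnitBall X) ℝ × ℕ → ℝ :=
    fun p => (volume (E p)).toReal with hmdef
  have hm0 : ∀ p, 0 ≤ m p := fun p => ENNReal.toReal_nonneg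
  have hGp_ne : ∀ p, (Gp p).Nonempty := fun p => hGne.image _
  have hA_ne : ∀ p, (A p).Nonempty := fun p => (hGp_ne p).mono (subset_convexHull ℝ _)
  have hptE : ∀ p, (E p).Nonempty → pt p ∈ E p := fun p h => (hpt p h).1
  have hptP : ∀ p, (E p).Nonempty → P (pt p) := fun p h =>
    hgood _ (hEsub p (hptE p h)) (fun hT => (hptE p h).2 (Or.inr hT))
  have hGp_ball : ∀ p, (E p).Nonempty → Gp p ⊆ Metric.closedBall 0 (ψ (pt p)) := by
    intro p h x hx
    obtain ⟨g, hg, rfl⟩ := hx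
    simp only [Metric.mem_closedBall, dist_zero_right]
    exact (hptP p h).1 g hg
  have hA_ball : ∀ p, (E p).Nonempty → A p ⊆ Metric.closedBall 0 (ψ (pt p)) := fun p h =>
    convexHull_min (hGp_ball p h) (convex_closedBall _ _)
  have hψpt_lt : ∀ p, (E p).Nonempty → ψ (pt p) < (p.2:ℝ) + 1 := by
    intro p h
    have h1 : ψm (pt p) < (p.2:ℝ) + 1 := ((hptE p h).1.1.2).2
    rw [(hptP p h).2.2.1]
    exact h1
  have hψpt_ge : ∀ p, (E p).Nonempty → (p.2:ℝ) ≤ ψm (pt p) := fun p h =>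
    ((hptE p h).1.1.2).1
  -- closeness of JG on each piece
  have hclose : ∀ p, (E p).Nonempty → ∀ s ∈ E p, ‖JG s - JG (pt p)‖ ≤ 2*ε := by
    intro p h s hs
    have hPs : P s := hgood s (hEsub p hs) (fun hT => hs.2 (Or.inr hT))
    have hfs : φ s = p.1 := hs.1.1.1
    have hfpt : φ (pt p) = p.1 := (hptE p h).1.1.1
    have hs1 : ‖JGm s - φ s‖ < ε := by
      have hnot : s ∉ N₁ := fun hmem => hs.2 (Or.inl (Or.inl hmem))
      exact lt_of_not_ge (by simpa [hN₁def] using hnot)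
    have hpt1 : ‖JGm (pt p) - φ (pt p)‖ < ε := by
      have hnot : pt p ∉ N₁ := fun hmem => (hptE p h).2 (Or.inl (Or.inl hmem))
      exact lt_of_not_ge (by simpa [hN₁def] using hnot)
    rw [hPs.2.2.2, (hptP p h).2.2.2]
    have : JGm s - JGm (pt p) = (JGm s - φ s) - (JGm (pt p) - φ (pt p)) := by
      rw [hfs, hfpt]
      abel
    rw [this]
    calc ‖(JGm s - φ s) - (JGm (pt p) - φ (pt p))‖
        ≤ ‖JGm s - φ s‖ + ‖JGm (pt p) - φ (pt p)‖ := norm_sub_le _ _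
      _ ≤ 2*ε := by linarith
  -- every value g s with s in the piece lies in the fattened hull D p
  have hmemD : ∀ p, (E p).Nonempty → ∀ s ∈ E p, ∀ g ∈ G, g s ∈ D p := by
    intro p h s hs g hg
    have hPs : P s := hgood s (hEsub p hs) (fun hT => hs.2 (Or.inr hT))
    rw [hDdef]
    refine aux_sep (hGp_ne p) (by positivity : (0:ℝ) < 2*ε) (g s) ?_
    intro ω' hω' δ hδ
    set ωe : DualUnitBall X := ⟨ω', mem_closedBall_zero_iff.mpr hω'⟩ with hωedef
    have step1 : ω' (g s) ≤ JG s ωe := by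
      rw [hPs.2.1 ωe]
      exact le_ciSup (hbddP s hPs ωe) ⟨g, hg⟩
    have step2 : JG s ωe ≤ JG (pt p) ωe + 2*ε := by
      have h1 : |JG s ωe - JG (pt p) ωe| ≤ ‖JG s - JG (pt p)‖ := by
        have h2 := BoundedContinuousFunction.norm_coe_le_norm (JG s - JG (pt p)) ωe
        rwa [BoundedContinuousFunction.sub_apply, Real.norm_eq_abs] at h2
      have := (abs_le.mp (h1.trans (hclose p h s hs))).2
      linarith
    have step3 : ∃ b ∈ Gp p, JG (pt p) ωe - δ < ω' b := by
      have h1 : JG (pt p) ωe - δ < ⨆ g' : G, (ωe : StrongDual ℝ X) ((g' : ℝ → X) (pt p)) := by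
        rw [← (hptP p h).2.1 ωe]
        linarith
      obtain ⟨g', hg'⟩ := exists_lt_of_lt_ciSup h1
      exact ⟨(g' : ℝ → X) (pt p), ⟨g', g'.2, rfl⟩, hg'⟩
    obtain ⟨b, hbGp, hb⟩ := step3
    exact ⟨b, hbGp, by linarith⟩
  -- integral over each piece lies in m p • D p
  have hintmem : ∀ p, (E p).Nonempty → ∀ g ∈ G, ∫ s in E p, g s ∈ m p • D p := by
    intro p h g hg
    refine aux_integral_mem (hEmeas p) (hEfin p) g ((hgI g hg).mono_set (hEsub p))
      ?_ isClosed_closure ?_ ?_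
    · exact (((convex_convexHull ℝ (Gp p)).add (convex_closedBall _ _)).closure)
    · exact ((hA_ne p).add ⟨0, by simp [Metric.mem_closedBall]; positivity⟩).mono subset_closure
    · intro s hs
      exact hmemD p h s hs g hg
  -- the set W and basic quantities
  set W : Set X := ∑ p ∈ J', m p • A p with hWdef
  set mJ : ℝ := ∑ p ∈ J', m p with hmJdef
  have hNIoc_meas : MeasurableSet (Ioc (0:ℝ) t ∩ N) := measurableSet_Ioc.inter hNmeas
  set η : ℝ := ∫ s in Ioc (0:ℝ) t ∩ N, ψ s with hηdef
  set δh : ℝ := (3*t+1)*ε + η with hδhdef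
  have hψ0ae : ∀ {U : Set ℝ}, 0 ≤ᵐ[volume.restrict U] ψ := fun {U} =>
    ae_of_all _ fun x => hψ0 x
  have hη0 : 0 ≤ η := setIntegral_nonneg hNIoc_meas fun x _ => hψ0 x
  -- mJ ≤ t
  have hmJt : mJ ≤ t := by
    have hsum : ∑ p ∈ J', volume (E p) = volume (⋃ p ∈ J', E p) :=
      (measure_biUnion_finset (fun p _ q _ hpq => hEdisj hpq) (fun p _ => hEmeas p)).symm
    have h1 : ∑ p ∈ J', volume (E p) ≤ ENNReal.ofReal t := by
      rw [hsum]
      refine (measure_mono (Set.iUnion₂_subset fun p _ => hEsub p)).trans ?_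
      rw [Real.volume_Ioc, sub_zero]
    have h2 : mJ = (∑ p ∈ J', volume (E p)).toReal := by
      rw [hmJdef, ENNReal.toReal_sum (fun p _ => hEfin p)]
    rw [h2]
    exact ENNReal.toReal_le_of_le_ofReal ht0.le h1
  -- η ≤ γ + ε
  have hηle : η ≤ γ + ε := by
    have hsplit : η = (∫ s in (Ioc (0:ℝ) t ∩ N) ∩ Nψ, ψ s) +
        ∫ s in (Ioc (0:ℝ) t ∩ N) \ Nψ, ψ s := by
      rw [hηdef, ← setIntegral_union]
      · rw [Set.inter_union_diff]
      · exact Set.disjoint_left.mpr fun x hx1 hx2 => hx2.2 hx1.2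
      · exact hNIoc_meas.diff hNψmeas
      · exact hψI.mono_set (Set.inter_subset_left.trans Set.inter_subset_left)
      · exact hψI.mono_set ((Set.diff_subset).trans Set.inter_subset_left)
    have hfirst : (∫ s in (Ioc (0:ℝ) t ∩ N) ∩ Nψ, ψ s) ≤ γ := by
      refine le_trans ?_ hMtail
      refine setIntegral_mono_set (hψI.mono_set Set.inter_subset_left) hψ0ae ?_
      exact HasSubset.Subset.eventuallyLE fun x hx => ⟨hx.1.1, hx.2⟩
    have hsecond : (∫ s in (Ioc (0:ℝ) t ∩ N) \ Nψ, ψ s) ≤ ε := by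
      set U : Set ℝ := (Ioc (0:ℝ) t ∩ N) \ Nψ with hUdefn
      have hUmeas : MeasurableSet U := hNIoc_meas.diff hNψmeas
      have hUsub : U ⊆ (N₁ ∩ Ioc 0 t) ∪ T₀ := by
        rintro x ⟨⟨hxI, hxN⟩, hxψ⟩
        rcases hxN with (h | h) | h
        · exact Or.inl ⟨h, hxI⟩
        · exact absurd h hxψ
        · exact Or.inr h
      have hUvol : volume U ≤ ENNReal.ofReal (ε/(M+1)) := by
        calc volume U ≤ volume ((N₁ ∩ Ioc 0 t) ∪ T₀) := measure_mono hUsub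
          _ ≤ volume (N₁ ∩ Ioc 0 t) + volume T₀ := measure_union_le _ _
          _ = volume (N₁ ∩ Ioc 0 t) := by rw [hT₀0, add_zero]
          _ = ν N₁ := by rw [hν, Measure.restrict_apply hN₁meas]
          _ ≤ ENNReal.ofReal (ε/(M+1)) := hνN₁
      have haeψM : ∀ᵐ s ∂volume.restrict U, ψ s ≤ (M:ℝ) := by
        have h1 : ∀ᵐ s ∂volume.restrict U, ψ s = ψm s :=
          ae_restrict_of_ae_restrict_of_subset
            (hUdefn ▸ (Set.diff_subset.trans Set.inter_subset_left)) hψm_ae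
        filter_upwards [h1, ae_restrict_mem hUmeas] with s h2 h3
        have : ψm s < (M:ℝ) := lt_of_not_ge h3.2
        linarith [h2]
      have hintU : IntegrableOn ψ U volume :=
        hψI.mono_set (Set.diff_subset.trans Set.inter_subset_left)
      calc (∫ s in U, ψ s) ≤ ∫ _ in U, (M:ℝ) := by
            refine integral_mono_ae hintU ?_ haeψM
            exact (integrableOn_const_iff (by finiteness)).mpr (Or.inr ((measure_mono
              (Set.diff_subset.trans Set.inter_subset_left)).trans_lt measure_Ioc_lt_top))
        _ = (volume U).toReal * M := by rw [setIntegral_const, smul_eq_mul, measureReal_def]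
        _ ≤ (ε/(M+1)) * M := by
            refine mul_le_mul_of_nonneg_right ?_ (Nat.cast_nonneg M)
            exact ENNReal.toReal_le_of_le_ofReal (by positivity) hUvol
        _ ≤ ε := by
            rw [div_mul_eq_mul_div, div_le_iff₀ (by positivity)]
            nlinarith [hε0.le]
    linarith [hsplit, hfirst, hsecond]
  -- decomposition of integrals, and the master inclusion
  have hDsub : ∀ p, D p ⊆ A p + Metric.closedBall 0 (3*ε) := by
    intro p
    rw [hDdef]
    refine (aux_closure_subset_add_ball hε0).trans ?_
    rw [add_assoc]
    refine Set.add_subset_add_left ?_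
    exact (aux_ball_add (2*ε) ε).trans
      (Metric.closedBall_subset_closedBall (by linarith))
  have hdecomp : ∀ g ∈ G, ∫ s in Ioc (0:ℝ) t, g s =
      (∑ p ∈ J', ∫ s in E p, g s) + ∫ s in Ioc (0:ℝ) t ∩ N, g s := by
    intro g hg
    have h0 : ∫ s in Ioc (0:ℝ) t, g s = ∫ s in (Ioc (0:ℝ) t \ N) ∪ (Ioc (0:ℝ) t ∩ N), g s := by
      rw [Set.diff_union_inter]
    rw [h0, setIntegral_union (Set.disjoint_left.mpr fun x hx1 hx2 => hx1.2 hx2.2)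
      hNIoc_meas ((hgI g hg).mono_set Set.diff_subset)
      ((hgI g hg).mono_set Set.inter_subset_left)]
    congr 1
    rw [hcover, integral_biUnion_finset J (fun p _ => hEmeas p)
      (fun p _ q _ hpq => hEdisj hpq) (fun p _ => (hgI g hg).mono_set (hEsub p))]
    refine (Finset.sum_subset (Finset.filter_subset _ _) fun p hp hnp => ?_).symm
    have : E p = ∅ := by
      by_contra h
      exact hnp (Finset.mem_filter.mpr ⟨hp, Set.nonempty_iff_ne_empty.mpr h⟩)
    rw [this, Measure.restrict_empty, integral_zero_measure]
  have hNpart : ∀ g ∈ G, ∫ s in Ioc (0:ℝ) t ∩ N, g s ∈ Metric.closedBall (0:X) η := by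
    intro g hg
    simp only [Metric.mem_closedBall, dist_zero_right]
    refine norm_integral_le_of_norm_le (hψI.mono_set Set.inter_subset_left) ?_
    exact (ae_restrict_of_ae_restrict_of_subset Set.inter_subset_left hdom').mono
      fun s hs => hs g hg
  have hmem_main : ∀ g ∈ G, (∫ s in Ioc (0:ℝ) t, g s) ∈ W + Metric.closedBall 0 δh := by
    intro g hg
    rw [hdecomp g hg]
    have h1 : (∑ p ∈ J', ∫ s in E p, g s) ∈
        ∑ p ∈ J', (m p • A p + Metric.closedBall 0 (m p * (3*ε))) := by
      refine Set.finset_sum_mem_finset_sum J' _ _ fun p hp => ?_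
      have hpn : (E p).Nonempty := (Finset.mem_filter.mp hp).2
      have h2 := hintmem p hpn g hg
      have h3 : m p • D p ⊆ m p • A p + Metric.closedBall 0 (m p * (3*ε)) := by
        refine (Set.smul_set_mono (hDsub p)).trans ?_
        rw [smul_add, smul_closedBall _ _ (by positivity : (0:ℝ) ≤ 3*ε), smul_zero,
          Real.norm_of_nonneg (hm0 p)]
      exact h3 h2
    have h2 : ∑ p ∈ J', (m p • A p + Metric.closedBall 0 (m p * (3*ε)))
        = W + ∑ p ∈ J', Metric.closedBall (0:X) (m p * (3*ε)) := by
      rw [hWdef, Finset.sum_add_distrib]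
    rw [h2] at h1
    have h3 : (∑ p ∈ J', Metric.closedBall (0:X) (m p * (3*ε))) ⊆
        Metric.closedBall (0:X) (3*t*ε) := by
      refine (aux_sum_ball J' _).trans (Metric.closedBall_subset_closedBall ?_)
      rw [← Finset.sum_mul]
      calc mJ * (3*ε) ≤ t * (3*ε) := by
            refine mul_le_mul_of_nonneg_right hmJt (by positivity)
        _ = 3*t*ε := by ring
    have h4 := Set.add_mem_add h1 (hNpart g hg)
    have h5 : W + ∑ p ∈ J', Metric.closedBall (0:X) (m p * (3*ε)) +
        Metric.closedBall (0:X) η ⊆ W + Metric.closedBall 0 δh := by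
      rw [add_assoc]
      refine Set.add_subset_add_left ?_
      refine (Set.add_subset_add_right h3).trans ?_
      refine (aux_ball_add _ _).trans (Metric.closedBall_subset_closedBall ?_)
      rw [hδhdef]
      linarith
    exact h5 h4
  -- bound on W
  have hAball' : ∀ p ∈ J', m p • A p ⊆ Metric.closedBall 0 (m p * ψ (pt p)) := fun p hp =>
    aux_smul_subset_ball (hm0 p) (hA_ball p (Finset.mem_filter.mp hp).2)
  have hW_ball : W ⊆ Metric.closedBall 0 (∑ p ∈ J'.attach, m p.1 * ψ (pt p.1)) := by
    rw [hWdef, ← Finset.sum_attach J' fun p => m p • A p]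
    exact aux_sum_sets_subset_ball _ _ _ fun p _ => hAball' p.1 p.2
  have hsum_ψ : ∑ p ∈ J'.attach, m p.1 * ψ (pt p.1) ≤ Ψ₀ + t := by
    have hper : ∀ p : {x // x ∈ J'}, m p.1 * ψ (pt p.1) ≤ (∫ s in E p.1, ψ s) + m p.1 := by
      intro p
      have hpn : (E p.1).Nonempty := (Finset.mem_filter.mp p.2).2
      have h1 : m p.1 * ψ (pt p.1) ≤ m p.1 * ((p.1.2 : ℝ) + 1) :=
        mul_le_mul_of_nonneg_left (hψpt_lt p.1 hpn).le (hm0 p.1)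
      have h2 : m p.1 * (p.1.2 : ℝ) ≤ ∫ s in E p.1, ψ s := by
        have hlow : ∀ s ∈ E p.1, (p.1.2:ℝ) ≤ ψ s := by
          intro s hs
          have hPs : P s := hgood s (hEsub p.1 hs) (fun hT => hs.2 (Or.inr hT))
          have := hs.1.1.2
          simp only [Set.mem_preimage, Set.mem_Ico] at this
          rw [hPs.2.2.1]
          exact this.1
        calc m p.1 * (p.1.2:ℝ) = ∫ _ in E p.1, (p.1.2:ℝ) := by
              rw [setIntegral_const, smul_eq_mul, hmdef, measureReal_def]
          _ ≤ ∫ s in E p.1, ψ s := by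
              refine setIntegral_mono_on ((integrableOn_const_iff (by finiteness)).mpr (Or.inr
                ((measure_mono (hEsub p.1)).trans_lt measure_Ioc_lt_top)))
                (hψI.mono_set (hEsub p.1)) (hEmeas p.1) hlow
      nlinarith [h1, h2]
    calc ∑ p ∈ J'.attach, m p.1 * ψ (pt p.1)
        ≤ ∑ p ∈ J'.attach, ((∫ s in E p.1, ψ s) + m p.1) := Finset.sum_le_sum fun p _ => hper p
      _ = (∑ p ∈ J', ∫ s in E p, ψ s) + mJ := by
          rw [Finset.sum_add_distrib, hmJdef]
          congr 1
          · exact Finset.sum_attach J' fun p => ∫ s in E p, ψ s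
          · exact Finset.sum_attach J' m
      _ ≤ Ψ₀ + t := by
          have hbi : ∑ p ∈ J', ∫ s in E p, ψ s = ∫ s in ⋃ p ∈ J', E p, ψ s :=
            (integral_biUnion_finset J' (fun p _ => hEmeas p)
              (fun p _ q _ hpq => hEdisj hpq) (fun p _ => hψI.mono_set (hEsub p))).symm
          have hbile : (∫ s in ⋃ p ∈ J', E p, ψ s) ≤ Ψ₀ := by
            rw [hΨ₀def]
            refine setIntegral_mono_set hψint hψ0ae ?_
            exact HasSubset.Subset.eventuallyLE
              ((Set.iUnion₂_subset fun p _ => hEsub p).trans htIoc)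
          rw [hbi]
          linarith [hmJt]
  have hW_ball2 : W ⊆ Metric.closedBall 0 (Ψ₀ + t) :=
    hW_ball.trans (Metric.closedBall_subset_closedBall hsum_ψ)
  have hWne : W.Nonempty :=
    aux_sum_sets_nonempty' J' _ fun p _ => (hA_ne p).smul_set
  have hWb : IsBounded W := Metric.isBounded_closedBall.subset hW_ball2
  -- positivity and size of δh
  have hδh0 : 0 < δh := by
    rw [hδhdef]
    nlinarith [hε0, hη0, ht0]
  have hδh1 : δh ≤ 1 := by
    have hγ12 : γ ≤ 1/2 := min_le_right _ _
    rw [hδhdef]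
    nlinarith [hηle, hε12, hε0.le]
  -- μ of the fattened W
  have hWball1sub : W + Metric.closedBall 0 1 ⊆ Metric.closedBall (0:X) (Ψ₀ + t + 1) :=
    (Set.add_subset_add_right hW_ball2).trans (aux_ball_add _ _)
  have hWδsub : W + Metric.closedBall 0 δh ⊆ Metric.closedBall (0:X) (Ψ₀ + t + 1) :=
    (Set.add_subset_add_right hW_ball2).trans ((aux_ball_add _ _).trans
      (Metric.closedBall_subset_closedBall (by linarith)))
  have hWδne : (W + Metric.closedBall 0 δh).Nonempty :=
    hWne.add ⟨0, by simp [Metric.mem_closedBall]; positivity⟩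
  have hWδb : IsBounded (W + Metric.closedBall 0 δh) :=
    Metric.isBounded_closedBall.subset hWδsub
  have hball1ne : (Metric.closedBall (0:X) 1).Nonempty := ⟨0, by simp⟩
  have hstep2 : μ (W + Metric.closedBall 0 δh) ≤ μ W + δh * K := by
    have hμW0 : 0 ≤ μ W := hμ.nonneg W hWne hWb
    rcases hcase with ⟨_, ht1a⟩ | ⟨hsub, _, _⟩
    · -- convex case, t ≤ 1
      have hsplit : W + Metric.closedBall 0 δh ⊆
          (1-δh) • W + δh • (W + Metric.closedBall 0 1) := by
        rintro x ⟨w, hw, v, hv, rfl⟩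
        refine ⟨(1-δh) • w, Set.smul_mem_smul_set hw,
          δh • (w + δh⁻¹ • v), Set.smul_mem_smul_set ⟨w, hw, δh⁻¹ • v, ?_, rfl⟩, ?_⟩
        · simp only [Metric.mem_closedBall, dist_zero_right] at hv ⊢
          rw [norm_smul, Real.norm_of_nonneg (by positivity : (0:ℝ) ≤ δh⁻¹)]
          rw [← inv_mul_cancel₀ hδh0.ne']
          exact mul_le_mul_of_nonneg_left hv (by positivity)
        · rw [smul_add, smul_smul, mul_inv_cancel₀ hδh0.ne', one_smul, sub_smul, one_smul]
          abel
      have hWB1ne : (W + Metric.closedBall 0 1).Nonempty := hWne.add hball1ne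
      have hWB1b : IsBounded (W + Metric.closedBall 0 1) :=
        Metric.isBounded_closedBall.subset hWball1sub
      have hμc := hμ.convex W (W + Metric.closedBall 0 1) hWne hWB1ne hWb hWB1b
        (1-δh) (by linarith) (by linarith)
      rw [sub_sub_cancel] at hμc
      have hcombb : IsBounded ((1-δh) • W + δh • (W + Metric.closedBall 0 1)) := by
        refine Metric.isBounded_closedBall
          (x := (0:X)) (r := (1-δh)*(Ψ₀+t) + δh*(Ψ₀+t+1)) |>.subset ?_
        refine (Set.add_subset_add (aux_smul_subset_ball (by linarith) hW_ball2)
          (aux_smul_subset_ball hδh0.le hWball1sub)).trans ?_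
        exact aux_ball_add _ _
      have hmono := hμ.mono _ _ hWδne hcombb hsplit
      have hμWB1 : μ (W + Metric.closedBall 0 1) ≤ K := by
        rw [hKdef]
        exact hμ.mono _ _ hWB1ne Metric.isBounded_closedBall hWball1sub
      calc μ (W + Metric.closedBall 0 δh)
          ≤ μ ((1-δh) • W + δh • (W + Metric.closedBall 0 1)) := hmono
        _ ≤ (1-δh) * μ W + δh * μ (W + Metric.closedBall 0 1) := hμc
        _ ≤ μ W + δh * K := by nlinarith [hμWB1, hδh0.le]
    · -- sublinear case
      have hball : Metric.closedBall (0:X) δh = δh • Metric.closedBall 0 1 :=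
        (aux_ball_smul hδh0.le).symm
      rw [hball]
      have hb1b : IsBounded (Metric.closedBall (0:X) 1) := Metric.isBounded_closedBall
      calc μ (W + δh • Metric.closedBall 0 1)
          ≤ μ W + μ (δh • Metric.closedBall (0:X) 1) :=
            hsub.add_le _ _ hWne (hball1ne.smul_set) hWb
              (Metric.isBounded_closedBall.subset
                (aux_smul_subset_ball hδh0.le (Set.Subset.refl _)))
        _ = μ W + δh * μ (Metric.closedBall (0:X) 1) := by
            rw [hsub.smul_eq _ hball1ne hb1b δh hδh0.le]
        _ ≤ μ W + δh * K := by
            have : μ (Metric.closedBall (0:X) 1) ≤ K := by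
              rw [hKdef]
              exact hμ.mono _ _ hball1ne Metric.isBounded_closedBall
                (Metric.closedBall_subset_closedBall (by linarith))
            nlinarith [hδh0.le]
  -- μ W via the convex-combination bound
  have hApn : ∀ p ∈ J', (A p).Nonempty := fun p _ => hA_ne p
  have hApb : ∀ p ∈ J', ∃ R, A p ⊆ Metric.closedBall 0 R := fun p hp =>
    ⟨ψ (pt p), hA_ball p (Finset.mem_filter.mp hp).2⟩
  have hcombo : μ W ≤ ∑ p ∈ J', m p * μ (A p) := by
    rcases hcase with ⟨_, ht1a⟩ | ⟨hsub, _, _⟩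
    · have ht1 : t ≤ 1 := ht1a.trans (min_le_left 1 a)
      exact aux_combo_convex hμ J' m A (fun p _ => hm0 p) (hmJdef ▸ hmJt.trans ht1) hApn hApb
    · exact aux_combo_sub hsub J' m A (fun p _ => hm0 p) hApn hApb
  have hμA : ∀ p ∈ J', μ (A p) < cP p + ε := by
    intro p hp
    have hpn : (E p).Nonempty := (Finset.mem_filter.mp hp).2
    have h1 : μ (A p) = μ (Gp p) :=
      hμ.convexHull_inv (Gp p) (hGp_ne p)
        (Metric.isBounded_closedBall.subset (hGp_ball p hpn))
    rw [h1]
    exact (hpt p hpn).2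
  have hstep3 : μ W ≤ (∑ p ∈ J', m p * cP p) + t*ε := by
    calc μ W ≤ ∑ p ∈ J', m p * μ (A p) := hcombo
      _ ≤ ∑ p ∈ J', m p * (cP p + ε) := Finset.sum_le_sum fun p hp =>
          mul_le_mul_of_nonneg_left (hμA p hp).le (hm0 p)
      _ = (∑ p ∈ J', m p * cP p) + mJ * ε := by
          rw [hmJdef, Finset.sum_mul]
          rw [← Finset.sum_add_distrib]
          exact Finset.sum_congr rfl fun p _ => by ring
      _ ≤ (∑ p ∈ J', m p * cP p) + t*ε := by
          have : mJ * ε ≤ t * ε := mul_le_mul_of_nonneg_right hmJt hε0.le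
          linarith
  -- total error bound
  have herr : t*ε + δh * K ≤ (ρ:ℝ) := by
    have hδhle : δh ≤ (3*t+2)*ε + γ := by
      rw [hδhdef]
      nlinarith [hηle]
    have h1 : δh * K ≤ ((3*t+2)*ε + γ) * K := mul_le_mul_of_nonneg_right hδhle hK0
    have h2 : t*ε + ((3*t+2)*ε + γ) * K = ε * (t+(3*t+2)*K) + γ * K := by ring
    nlinarith [hεsmall, hγK]
  -- nonnegativity of the piecewise infima
  have hvG0 : ∀ s ∈ Ioc (0:ℝ) t, s ∉ T₀ → 0 ≤ vG s := by
    intro s hsI hsT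
    have hPs : P s := hgood s hsI hsT
    refine hμ.nonneg _ ⟨g₀ s, ⟨g₀, hg₀, rfl⟩⟩ ?_
    refine Metric.isBounded_closedBall (x := (0:X)) (r := ψ s) |>.subset ?_
    rintro x ⟨g, hg, rfl⟩
    simp only [Metric.mem_closedBall, dist_zero_right]
    exact hPs.1 g hg
  have hcP0 : ∀ p ∈ J', 0 ≤ cP p := by
    intro p hp
    refine Real.sInf_nonneg ?_
    rintro y ⟨s, hs, rfl⟩
    exact hvG0 s (hEsub p hs) (fun hT => hs.2 (Or.inr hT))
  have hcPle : ∀ p ∈ J', ∀ s ∈ E p, cP p ≤ vG s := by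
    intro p hp s hs
    refine csInf_le ⟨0, ?_⟩ (Set.mem_image_of_mem vG hs)
    rintro y ⟨s', hs', rfl⟩
    exact hvG0 s' (hEsub p hs') (fun hT => hs'.2 (Or.inr hT))
  -- the lintegral lower bound
  have hlintpart : ENNReal.ofReal (∑ p ∈ J', m p * cP p) ≤
      ∫⁻ s in Ioc (0:ℝ) t, ENNReal.ofReal (vG s) := by
    rw [ENNReal.ofReal_sum_of_nonneg fun p hp => mul_nonneg (hm0 p) (hcP0 p hp)]
    have heq : ∀ p ∈ J', ENNReal.ofReal (m p * cP p) =
        ∫⁻ s in Ioc (0:ℝ) t, (E p).indicator (fun _ => ENNReal.ofReal (cP p)) s := by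
      intro p hp
      rw [← hν, lintegral_indicator (hEmeas p), Measure.restrict_restrict (hEmeas p),
        Set.inter_eq_self_of_subset_left (hEsub p), setLIntegral_const,
        ENNReal.ofReal_mul (hm0 p), ENNReal.ofReal_toReal (hEfin p), mul_comm]
    rw [Finset.sum_congr rfl heq, ← lintegral_finset_sum J'
      (fun p _ => (measurable_const.indicator (hEmeas p)))]
    refine lintegral_mono fun s => ?_
    by_cases hs : ∃ p ∈ J', s ∈ E p
    · obtain ⟨p, hpJ, hpE⟩ := hs
      rw [Finset.sum_eq_single_of_mem p hpJ (fun q hqJ hqp =>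
        Set.indicator_of_notMem (fun hsq =>
          (Set.disjoint_left.mp (hEdisj hqp) hsq) hpE) _)]
      rw [Set.indicator_of_mem hpE]
      exact ENNReal.ofReal_le_ofReal (hcPle p hpJ s hpE)
    · push_neg at hs
      rw [Finset.sum_eq_zero fun p hp => Set.indicator_of_notMem (hs p hp) _]
      exact zero_le
  -- final chain
  have hμSS : μ ((fun g : ℝ → X => ∫ s in Ioc (0 : ℝ) t, g s) '' G) ≤
      (∑ p ∈ J', m p * cP p) + (t*ε + δh*K) := by
    have hSSne : ((fun g : ℝ → X => ∫ s in Ioc (0 : ℝ) t, g s) '' G).Nonempty :=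
      ⟨_, ⟨g₀, hg₀, rfl⟩⟩
    have hsub2 : ((fun g : ℝ → X => ∫ s in Ioc (0 : ℝ) t, g s) '' G) ⊆
        W + Metric.closedBall 0 δh := by
      rintro x ⟨g, hg, rfl⟩
      exact hmem_main g hg
    have hmono := hμ.mono _ _ hSSne hWδb hsub2
    linarith [hstep2, hstep3]
  calc ENNReal.ofReal (μ ((fun g : ℝ → X => ∫ s in Ioc (0 : ℝ) t, g s) '' G))
      ≤ ENNReal.ofReal ((∑ p ∈ J', m p * cP p) + (t*ε + δh*K)) :=
        ENNReal.ofReal_le_ofReal hμSS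
    _ ≤ ENNReal.ofReal (∑ p ∈ J', m p * cP p) + ENNReal.ofReal (t*ε + δh*K) :=
        ENNReal.ofReal_add_le
    _ ≤ (∫⁻ s in Ioc (0:ℝ) t, ENNReal.ofReal (vG s)) + (ρ : ℝ≥0∞) := by
        refine add_le_add hlintpart ?_
        calc ENNReal.ofReal (t*ε + δh*K) ≤ ENNReal.ofReal (ρ:ℝ) :=
              ENNReal.ofReal_le_ofReal herr
          _ = (ρ : ℝ≥0∞) := ENNReal.ofReal_coe_nnreal
end

section
/- Let X be a real Banach space and I = [0,a]. Let G ⊆ C(I,X) be a nonempty equicontinuous family of continuous functions that is pointwise bounded (sup_{g∈G} ‖g(t)‖ < ∞ for every t ∈ I). Then the map 𝕁_G : I → C_b(Ω) is continuous; in particular it is strongly measurable. -/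
open Set MeasureTheory

lemma ciSup_abs_sub_le {ι : Type*} [Nonempty ι] (f h : ι → ℝ)
    (hf : BddAbove (Set.range f)) (hh : BddAbove (Set.range h))
    (ε : ℝ) (hfh : ∀ i, |f i - h i| ≤ ε) :
    |(⨆ i, f i) - ⨆ i, h i| ≤ ε := by
  rw [abs_sub_le_iff]
  constructor
  · rw [sub_le_iff_le_add]
    refine ciSup_le fun i => ?_
    have := abs_le.1 (hfh i)
    have : f i ≤ ε + h i := by linarith [this.2]
    exact this.trans (add_le_add_right (le_ciSup hh i) ε)
  · rw [sub_le_iff_le_add]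
    refine ciSup_le fun i => ?_
    have := abs_le.1 (hfh i)
    have : h i ≤ ε + f i := by linarith [this.1]
    exact this.trans (add_le_add_right (le_ciSup hf i) ε)

/-- If `G ⊆ C([0,a],X)` is a nonempty equicontinuous and pointwise bounded family, then
the map `𝕁_G : [0,a] → C_b(Ω)` (given by `𝕁_G(t)(x*) = sup_{g∈G} x*(g t)`) is continuous
on `[0,a]`; in particular it is strongly measurable. -/
theorem JG_continuous_of_equicontinuous {X : Type*} [NormedAddCommGroup X]
    [NormedSpace ℝ X] [CompleteSpace X] (a : ℝ) (ha : 0 < a)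
    (G : Set (ℝ → X)) (hGne : G.Nonempty)
    (hGcont : ∀ g ∈ G, ContinuousOn g (Icc 0 a))
    (hGequi : ∀ ε : ℝ, 0 < ε → ∀ t₀ ∈ Icc (0 : ℝ) a, ∃ δ : ℝ, 0 < δ ∧
      ∀ g ∈ G, ∀ t ∈ Icc (0 : ℝ) a, |t - t₀| < δ → ‖g t - g t₀‖ ≤ ε)
    (hGbdd : ∀ t ∈ Icc (0 : ℝ) a, ∃ M : ℝ, ∀ g ∈ G, ‖g t‖ ≤ M)
    (JG : ℝ → BoundedContinuousFunction (DualUnitBall X) ℝ)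
    (hJG_eq : ∀ t ∈ Icc (0 : ℝ) a, ∀ ω : DualUnitBall X,
      JG t ω = ⨆ g : G, (ω : StrongDual ℝ X) ((g : ℝ → X) t)) :
    ContinuousOn JG (Icc 0 a) ∧
      AEStronglyMeasurable JG (volume.restrict (Icc 0 a)) := by
  haveI : Nonempty G := hGne.to_subtype
  have hbdd : ∀ t ∈ Icc (0 : ℝ) a, ∀ ω : DualUnitBall X,
      BddAbove (Set.range fun g : G => (ω : StrongDual ℝ X) ((g : ℝ → X) t)) := by
    intro t ht ω
    obtain ⟨M, hM⟩ := hGbdd t ht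
    refine ⟨M, fun y hy => ?_⟩
    obtain ⟨g, rfl⟩ := hy
    calc (ω : StrongDual ℝ X) ((g : ℝ → X) t)
        ≤ ‖(ω : StrongDual ℝ X) ((g : ℝ → X) t)‖ := le_abs_self _
      _ ≤ ‖(ω : StrongDual ℝ X)‖ * ‖(g : ℝ → X) t‖ :=
          (ω : StrongDual ℝ X).le_opNorm _
      _ ≤ 1 * M := by
          refine mul_le_mul ?_ (hM g g.2) (norm_nonneg _) zero_le_one
          exact mem_closedBall_zero_iff.1 ω.2
      _ = M := one_mul M
  have hcont : ContinuousOn JG (Icc 0 a) := by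
    intro t₀ ht₀
    rw [Metric.continuousWithinAt_iff]
    intro ε hε
    obtain ⟨δ, hδ, hδ'⟩ := hGequi (ε / 2) (by linarith) t₀ ht₀
    refine ⟨δ, hδ, fun t ht hdist => ?_⟩
    have key : dist (JG t) (JG t₀) ≤ ε / 2 := by
      refine BoundedContinuousFunction.dist_le (by linarith) |>.2 fun ω => ?_
      rw [Real.dist_eq, hJG_eq t ht ω, hJG_eq t₀ ht₀ ω]
      refine ciSup_abs_sub_le _ _ (hbdd t ht ω) (hbdd t₀ ht₀ ω) (ε / 2) fun g => ?_
      calc |(ω : StrongDual ℝ X) ((g : ℝ → X) t) -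
            (ω : StrongDual ℝ X) ((g : ℝ → X) t₀)|
          = ‖(ω : StrongDual ℝ X) ((g : ℝ → X) t - (g : ℝ → X) t₀)‖ := by
            rw [map_sub]; rfl
        _ ≤ ‖(ω : StrongDual ℝ X)‖ * ‖(g : ℝ → X) t - (g : ℝ → X) t₀‖ :=
            (ω : StrongDual ℝ X).le_opNorm _
        _ ≤ 1 * (ε / 2) := by
            refine mul_le_mul ?_ (hδ' g g.2 t ht (by simpa [Real.dist_eq] using hdist))
              (norm_nonneg _) zero_le_one
            exact mem_closedBall_zero_iff.1 ω.2
        _ = ε / 2 := one_mul _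
    linarith [key]
  exact ⟨hcont, hcont.aestronglyMeasurable measurableSet_Icc⟩
end

section
/- Let X be a real Banach space, μ a convex MNC on X, I = [0,a] with a > 0, and G ⊆ C(I,X) a nonempty equicontinuous family that is uniformly bounded (sup_{g∈G, t∈I} ‖g(t)‖ < ∞). Then μ(∫₀ᵗ G(s) ds) ≤ (1/t) ∫₀ᵗ μ(t·G(s)) ds for every 0 < t ≤ a. Moreover, μ(∫₀ᵗ G(s) ds) ≤ ∫₀ᵗ μ(G(s)) ds whenever either (i) 0 < t ≤ min{1,a}, or (ii) μ is a sublinear MNC and 0 < t ≤ a. -/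
open Set MeasureTheory Bornology Pointwise

section Aux
variable {X : Type*} [NormedAddCommGroup X] [NormedSpace ℝ X] {μ : Set X → ℝ}

set_option linter.unusedSectionVars false

lemma mem_sumSet (f : ℕ → X) (S : ℕ → Set X) :
    ∀ n : ℕ, (∀ i, i < n → f i ∈ S i) →
      (∑ i ∈ Finset.range n, f i) ∈ ∑ i ∈ Finset.range n, S i := by
  intro n
  induction n with
  | zero => intro _; simp [Set.mem_zero]
  | succ n ih =>
      intro h
      rw [Finset.sum_range_succ, Finset.sum_range_succ]
      exact Set.add_mem_add (ih fun i hi => h i (hi.trans (Nat.lt_succ_self n)))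
        (h n (Nat.lt_succ_self n))

lemma norm_le_of_mem_sumSet (S : ℕ → Set X) (r : ℝ) :
    ∀ n : ℕ, (∀ i, i < n → ∀ x ∈ S i, ‖x‖ ≤ r) →
      ∀ x ∈ ∑ i ∈ Finset.range n, S i, ‖x‖ ≤ n * r := by
  intro n
  induction n with
  | zero =>
      intro _ x hx
      simp only [Finset.range_zero, Finset.sum_empty] at hx
      rw [Set.mem_zero] at hx; simp [hx]
  | succ n ih =>
      intro h x hx
      rw [Finset.sum_range_succ, Set.mem_add] at hx
      obtain ⟨y, hy, z, hz, rfl⟩ := hx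
      have h1 := ih (fun i hi => h i (hi.trans (Nat.lt_succ_self n))) y hy
      have h2 := h n (Nat.lt_succ_self n) z hz
      calc ‖y + z‖ ≤ ‖y‖ + ‖z‖ := norm_add_le _ _
        _ ≤ (n:ℝ) * r + r := by linarith
        _ = ((n:ℕ) + 1 : ℝ) * r := by ring
        _ = ((n+1 : ℕ) : ℝ) * r := by push_cast; ring

lemma sumSet_nonempty (A : ℕ → Set X) (n : ℕ) (h : ∀ i, i < n → (A i).Nonempty) :
    (∑ i ∈ Finset.range n, A i).Nonempty := by
  induction n with
  | zero => exact ⟨0, by simp [Set.mem_zero]⟩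
  | succ n ih =>
      rw [Finset.sum_range_succ]
      exact (ih fun i hi => h i (hi.trans (Nat.lt_succ_self n))).add
        (h n (Nat.lt_succ_self n))

lemma sumSet_bounded (A : ℕ → Set X) (n : ℕ) (h : ∀ i, i < n → IsBounded (A i)) :
    IsBounded (∑ i ∈ Finset.range n, A i) := by
  induction n with
  | zero =>
      simp only [Finset.range_zero, Finset.sum_empty]
      have : (0 : Set X) = {0} := rfl
      rw [this]; exact isBounded_singleton
  | succ n ih =>
      rw [Finset.sum_range_succ]
      exact (ih fun i hi => h i (hi.trans (Nat.lt_succ_self n))).add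
        (h n (Nat.lt_succ_self n))

lemma IsConvexMNC.le_add_sqrt (hμ : IsConvexMNC X μ) {A B : Set X} {R ε : ℝ}
    (hR : 0 ≤ R) (hε : 0 < ε) (hε1 : ε ≤ 1)
    (hAne : A.Nonempty) (hBne : B.Nonempty)
    (hA : A ⊆ Metric.closedBall 0 R)
    (hsub : B ⊆ A + Metric.closedBall 0 ε) :
    μ B ≤ μ A + Real.sqrt ε * μ (Metric.closedBall (0:X) (R+1)) := by
  set r := Real.sqrt ε with hr
  have hr0 : 0 < r := Real.sqrt_pos.2 hε
  have hrr : r * r = ε := Real.mul_self_sqrt hε.le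
  have hr1 : r ≤ 1 := by
    calc r ≤ Real.sqrt 1 := Real.sqrt_le_sqrt hε1
    _ = 1 := Real.sqrt_one
  set D := Metric.closedBall (0:X) (R+1) with hD
  have hDne : D.Nonempty := ⟨0, by simp [hD]; linarith⟩
  have hDbd : IsBounded D := Metric.isBounded_closedBall
  have hAbd : IsBounded A := Metric.isBounded_closedBall.subset hA
  have hsub2 : B ⊆ (1 - r) • A + (1 - (1 - r)) • D := by
    intro b hb
    obtain ⟨x, hx, e, he, rfl⟩ := hsub hb
    have hxR : ‖x‖ ≤ R := by simpa using hA hx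
    have heε : ‖e‖ ≤ ε := by simpa using he
    have hdD : x + r⁻¹ • e ∈ D := by
      simp only [hD, Metric.mem_closedBall, dist_zero_right]
      calc ‖x + r⁻¹ • e‖ ≤ ‖x‖ + ‖r⁻¹ • e‖ := norm_add_le _ _
        _ = ‖x‖ + r⁻¹ * ‖e‖ := by
            rw [norm_smul, Real.norm_eq_abs, abs_of_pos (inv_pos.2 hr0)]
        _ ≤ R + r⁻¹ * ε := by
            have := mul_le_mul_of_nonneg_left heε (inv_pos.2 hr0).le
            linarith
        _ = R + r := by rw [← hrr]; field_simp
        _ ≤ R + 1 := by linarith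
    have key : x + e = (1 - r) • x + (1 - (1 - r)) • (x + r⁻¹ • e) := by
      rw [show (1 - (1 - r)) = r by ring, smul_add, smul_smul,
        mul_inv_cancel₀ hr0.ne', one_smul, ← add_assoc, ← add_smul,
        show (1 - r) + r = (1:ℝ) by ring, one_smul]
    show x + e ∈ (1 - r) • A + (1 - (1 - r)) • D
    rw [key]
    exact Set.add_mem_add (Set.smul_mem_smul_set hx) (Set.smul_mem_smul_set hdD)
  have h1 : μ B ≤ μ ((1 - r) • A + (1 - (1 - r)) • D) := by
    refine hμ.mono _ _ hBne ?_ hsub2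
    exact ((hAbd.smul₀ _).add (hDbd.smul₀ _))
  have h2 := hμ.convex A D hAne hDne hAbd hDbd (1 - r) (by linarith) (by linarith)
  have hμA := hμ.nonneg A hAne hAbd
  calc μ B ≤ (1 - r) * μ A + (1 - (1 - r)) * μ D := h1.trans h2
    _ ≤ μ A + r * μ D := by nlinarith [hμ.nonneg D hDne hDbd]

lemma IsConvexMNC.sum_inv_smul_le (hμ : IsConvexMNC X μ) :
    ∀ n : ℕ, ∀ A : ℕ → Set X, (∀ i, i < n → (A i).Nonempty) →
      (∀ i, i < n → IsBounded (A i)) → 0 < n →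
      μ (∑ i ∈ Finset.range n, ((n:ℝ)⁻¹) • A i)
        ≤ ∑ i ∈ Finset.range n, (n:ℝ)⁻¹ * μ (A i) := by
  intro n
  induction n with
  | zero => intro A _ _ h; exact absurd h (lt_irrefl 0)
  | succ n ih =>
    intro A hne hbd _
    rcases Nat.eq_zero_or_pos n with h0 | hn
    · subst h0
      push_cast
      simp only [zero_add, Finset.range_one, Finset.sum_singleton, inv_one, one_smul, one_mul]
      exact le_rfl
    · have hn' : (0:ℝ) < n := by exact_mod_cast hn
      have hn1 : (0:ℝ) < (n:ℝ) + 1 := by linarith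
      push_cast
      set l : ℝ := (n:ℝ) / ((n:ℝ) + 1) with hl
      have hl0 : 0 ≤ l := by positivity
      have hl1 : l ≤ 1 := by rw [hl, div_le_one hn1]; linarith
      have hscal : l * (n:ℝ)⁻¹ = ((n:ℝ) + 1)⁻¹ := by
        rw [hl]; field_simp; try ring
      have h1l : 1 - l = ((n:ℝ) + 1)⁻¹ := by
        rw [hl]; field_simp; try ring
      have key : ∑ i ∈ Finset.range (n+1), ((n:ℝ) + 1)⁻¹ • A i
          = l • (∑ i ∈ Finset.range n, ((n:ℝ))⁻¹ • A i) + (1 - l) • A n := by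
        rw [Finset.sum_range_succ, Finset.smul_sum, h1l]
        congr 1
        refine Finset.sum_congr rfl fun i _ => ?_
        rw [smul_smul, hscal]
      have hlt : ∀ i, i < n → i < n + 1 := fun i hi => hi.trans (Nat.lt_succ_self n)
      have hSne := sumSet_nonempty (fun i => ((n:ℝ))⁻¹ • A i) n
        (fun i hi => (hne i (hlt i hi)).smul_set)
      have hSbd := sumSet_bounded (fun i => ((n:ℝ))⁻¹ • A i) n
        (fun i hi => (hbd i (hlt i hi)).smul₀ _)
      have hconv := hμ.convex _ _ hSne (hne n (Nat.lt_succ_self n)) hSbd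
        (hbd n (Nat.lt_succ_self n)) l hl0 hl1
      have hih := ih A (fun i hi => hne i (hlt i hi)) (fun i hi => hbd i (hlt i hi)) hn
      have goalrw : ∑ i ∈ Finset.range (n+1), ((n:ℝ) + 1)⁻¹ * μ (A i)
          = l * (∑ i ∈ Finset.range n, (n:ℝ)⁻¹ * μ (A i)) + (1 - l) * μ (A n) := by
        rw [Finset.sum_range_succ, Finset.mul_sum, h1l]
        congr 1
        refine Finset.sum_congr rfl fun i _ => ?_
        rw [← mul_assoc, hscal]
      rw [key, goalrw]
      refine hconv.trans ?_
      have := mul_le_mul_of_nonneg_left hih hl0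
      linarith

end Aux

/-- Integral inequalities for a convex MNC over a nonempty equicontinuous, uniformly
bounded family `G ⊆ C([0,a],X)`:
`μ(∫₀ᵗ G(s) ds) ≤ (1/t)∫₀ᵗ μ(t•G(s)) ds` for all `0 < t ≤ a`, and
`μ(∫₀ᵗ G(s) ds) ≤ ∫₀ᵗ μ(G(s)) ds` whenever `0 < t ≤ min{1,a}` or `μ` is sublinear. -/
theorem convexMNC_integral_ineq_of_equicontinuous {X : Type*} [NormedAddCommGroup X]
    [NormedSpace ℝ X] [CompleteSpace X] (μ : Set X → ℝ) (hμ : IsConvexMNC X μ)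
    (a : ℝ) (ha : 0 < a)
    (G : Set (ℝ → X)) (hGne : G.Nonempty)
    (hGcont : ∀ g ∈ G, ContinuousOn g (Icc 0 a))
    (hGequi : ∀ ε : ℝ, 0 < ε → ∀ t₀ ∈ Icc (0 : ℝ) a, ∃ δ : ℝ, 0 < δ ∧
      ∀ g ∈ G, ∀ t ∈ Icc (0 : ℝ) a, |t - t₀| < δ → ‖g t - g t₀‖ ≤ ε)
    (hGbdd : ∃ M : ℝ, ∀ g ∈ G, ∀ t ∈ Icc (0 : ℝ) a, ‖g t‖ ≤ M) :
    (∀ t : ℝ, 0 < t → t ≤ a →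
      ENNReal.ofReal (μ ((fun g : ℝ → X => ∫ s in Ioc (0 : ℝ) t, g s) '' G)) ≤
        (ENNReal.ofReal t)⁻¹ *
          ∫⁻ s in Ioc (0 : ℝ) t,
            ENNReal.ofReal (μ (t • ((fun g : ℝ → X => g s) '' G)))) ∧
    (∀ t : ℝ, (0 < t ∧ t ≤ min 1 a) ∨ (IsSublinearMNC X μ ∧ 0 < t ∧ t ≤ a) →
      ENNReal.ofReal (μ ((fun g : ℝ → X => ∫ s in Ioc (0 : ℝ) t, g s) '' G)) ≤
        ∫⁻ s in Ioc (0 : ℝ) t, ENNReal.ofReal (μ ((fun g : ℝ → X => g s) '' G))) := by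
  obtain ⟨M, hM⟩ := hGbdd
  obtain ⟨g₀, hg₀⟩ := hGne
  have h0Icc : (0:ℝ) ∈ Icc (0:ℝ) a := ⟨le_rfl, ha.le⟩
  have hM0 : 0 ≤ M := (norm_nonneg _).trans (hM g₀ hg₀ 0 h0Icc)
  have hGsne : ∀ s : ℝ, ((fun g : ℝ → X => g s) '' G).Nonempty :=
    fun s => ⟨g₀ s, mem_image_of_mem _ hg₀⟩
  have hGsbd : ∀ s ∈ Icc (0:ℝ) a, IsBounded ((fun g : ℝ → X => g s) '' G) := by
    intro s hs
    have hsub : ((fun g : ℝ → X => g s) '' G) ⊆ Metric.closedBall 0 M := by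
      rintro x ⟨g, hg, rfl⟩
      simpa [Metric.mem_closedBall, dist_zero_right] using hM g hg s hs
    exact Metric.isBounded_closedBall.subset hsub
  -- uniform equicontinuity
  have hunif : ∀ ε : ℝ, 0 < ε → ∃ δ : ℝ, 0 < δ ∧ ∀ g ∈ G, ∀ s ∈ Icc (0:ℝ) a,
      ∀ s' ∈ Icc (0:ℝ) a, |s - s'| < δ → ‖g s - g s'‖ ≤ ε := by
    intro ε hε
    have hpt : ∀ t₀ : ℝ, ∃ d : ℝ, 0 < d ∧ (t₀ ∈ Icc (0:ℝ) a → ∀ g ∈ G, ∀ s ∈ Icc (0:ℝ) a,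
        |s - t₀| < d → ‖g s - g t₀‖ ≤ ε / 2) := by
      intro t₀
      by_cases h : t₀ ∈ Icc (0:ℝ) a
      · obtain ⟨d, hd, hdd⟩ := hGequi (ε/2) (by linarith) t₀ h
        exact ⟨d, hd, fun _ => hdd⟩
      · exact ⟨1, one_pos, fun h' => absurd h' h⟩
    choose d hd0 hd using hpt
    have hcover : Icc (0:ℝ) a ⊆ ⋃ t₀ ∈ Icc (0:ℝ) a, Metric.ball t₀ (d t₀ / 2) := by
      intro s hs
      exact mem_biUnion hs (Metric.mem_ball.2 (by simpa [dist_self] using half_pos (hd0 s)))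
    obtain ⟨b, hbsub, hbfin, hbcov⟩ := isCompact_Icc.elim_finite_subcover_image
      (fun t₀ _ => Metric.isOpen_ball) hcover
    obtain ⟨t₁, ht₁b, _⟩ := mem_iUnion₂.1 (hbcov h0Icc)
    have hFne : hbfin.toFinset.Nonempty := ⟨t₁, hbfin.mem_toFinset.2 ht₁b⟩
    set δ := hbfin.toFinset.inf' hFne (fun t₀ => d t₀ / 2) with hδdef
    have hδ0 : 0 < δ := by
      rw [hδdef, Finset.lt_inf'_iff]
      intro t₀ _
      exact half_pos (hd0 t₀)
    refine ⟨δ, hδ0, ?_⟩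
    intro g hg s hs s' hs' hss
    obtain ⟨t₀, ht₀b, hsball⟩ := mem_iUnion₂.1 (hbcov hs)
    have ht₀Icc : t₀ ∈ Icc (0:ℝ) a := hbsub ht₀b
    have hδle : δ ≤ d t₀ / 2 := Finset.inf'_le _ (hbfin.mem_toFinset.2 ht₀b)
    have hds : |s - t₀| < d t₀ / 2 := by
      have := Metric.mem_ball.1 hsball
      rwa [Real.dist_eq] at this
    have h1 : |s - t₀| < d t₀ := hds.trans_le (by linarith [hd0 t₀])
    have h2 : |s' - t₀| < d t₀ := by
      have htri : |s' - t₀| ≤ |s' - s| + |s - t₀| := by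
        calc |s' - t₀| = |(s' - s) + (s - t₀)| := by rw [sub_add_sub_cancel]
          _ ≤ |s' - s| + |s - t₀| := abs_add_le _ _
      have h4 : |s' - s| < δ := by rwa [abs_sub_comm]
      linarith
    have e1 := hd t₀ ht₀Icc g hg s hs h1
    have e2 := hd t₀ ht₀Icc g hg s' hs' h2
    calc ‖g s - g s'‖ = ‖(g s - g t₀) - (g s' - g t₀)‖ := by rw [sub_sub_sub_cancel_right]
      _ ≤ ‖g s - g t₀‖ + ‖g s' - g t₀‖ := norm_sub_le _ _
      _ ≤ ε := by linarith
  -- PART 1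
  have part1 : ∀ t : ℝ, 0 < t → t ≤ a →
      ENNReal.ofReal (μ ((fun g : ℝ → X => ∫ s in Ioc (0 : ℝ) t, g s) '' G)) ≤
        (ENNReal.ofReal t)⁻¹ *
          ∫⁻ s in Ioc (0 : ℝ) t,
            ENNReal.ofReal (μ (t • ((fun g : ℝ → X => g s) '' G))) := by
    intro t ht hta
    set C := μ (Metric.closedBall (0:X) (t*M+1)) with hCdef
    have htM0 : 0 ≤ t * M := by positivity
    have hC0 : 0 ≤ C := by
      rw [hCdef]
      exact hμ.nonneg _ ⟨0, by simp; positivity⟩ Metric.isBounded_closedBall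
    have hGsball : ∀ s ∈ Icc (0:ℝ) a, ∀ x ∈ t • ((fun g : ℝ → X => g s) '' G), ‖x‖ ≤ t*M := by
      intro s hs x hx
      obtain ⟨y, ⟨g, hg, rfl⟩, rfl⟩ := hx
      rw [norm_smul, Real.norm_eq_abs, abs_of_pos ht]
      exact mul_le_mul_of_nonneg_left (hM g hg s hs) ht.le
    have htGsbd : ∀ s ∈ Icc (0:ℝ) a, IsBounded (t • ((fun g : ℝ → X => g s) '' G)) :=
      fun s hs => (hGsbd s hs).smul₀ t
    -- modulus of continuity for φ
    have hφkey : ∀ ε : ℝ, 0 < ε → ε ≤ 1 → ∀ s ∈ Icc (0:ℝ) a, ∀ s' ∈ Icc (0:ℝ) a,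
        (∀ g ∈ G, ‖g s - g s'‖ ≤ ε / t) →
        μ (t • ((fun g : ℝ → X => g s') '' G))
          ≤ μ (t • ((fun g : ℝ → X => g s) '' G)) + Real.sqrt ε * C := by
      intro ε hε hε1 s hs s' hs' hgs
      rw [hCdef]
      refine hμ.le_add_sqrt (R := t*M) htM0 hε hε1 ((hGsne s).smul_set)
        ((hGsne s').smul_set) ?_ ?_
      · intro x hx
        simpa [Metric.mem_closedBall, dist_zero_right] using hGsball s hs x hx
      · rintro x ⟨y, ⟨g, hg, rfl⟩, rfl⟩
        rw [Set.mem_add]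
        refine ⟨t • g s, Set.smul_mem_smul_set (mem_image_of_mem _ hg),
          t • g s' - t • g s, ?_, by abel⟩
        rw [mem_closedBall_zero_iff, ← smul_sub, norm_smul, Real.norm_eq_abs, abs_of_pos ht]
        have h1 : ‖g s' - g s‖ ≤ ε / t := by rw [norm_sub_rev]; exact hgs g hg
        calc t * ‖g s' - g s‖ ≤ t * (ε / t) := mul_le_mul_of_nonneg_left h1 ht.le
          _ = ε := by field_simp
    set φ : ℝ → ℝ := fun s => μ (t • ((fun g : ℝ → X => g s) '' G)) with hφdef
    have hφ0 : ∀ s ∈ Icc (0:ℝ) a, 0 ≤ φ s :=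
      fun s hs => hμ.nonneg _ ((hGsne s).smul_set) (htGsbd s hs)
    -- continuity of φ
    have hφcont : ContinuousOn φ (Icc (0:ℝ) a) := by
      intro s₀ hs₀
      rw [Metric.continuousWithinAt_iff]
      intro η hη
      set ε : ℝ := min 1 ((η / (2*(C+1)))^2) with hεdef
      have hε0 : 0 < ε := lt_min one_pos (by positivity)
      have hε1 : ε ≤ 1 := min_le_left _ _
      have hsqrt : Real.sqrt ε * C < η := by
        have h1 : Real.sqrt ε ≤ η/(2*(C+1)) := by
          calc Real.sqrt ε ≤ Real.sqrt ((η / (2*(C+1)))^2) :=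
                Real.sqrt_le_sqrt (min_le_right _ _)
            _ = η/(2*(C+1)) := Real.sqrt_sq (by positivity)
        have h2 : Real.sqrt ε * C ≤ (η/(2*(C+1))) * C :=
          mul_le_mul_of_nonneg_right h1 hC0
        have h3 : (η/(2*(C+1))) * C < η := by
          rw [div_mul_eq_mul_div, div_lt_iff₀ (by positivity : (0:ℝ) < 2*(C+1))]
          nlinarith
        linarith
      obtain ⟨δ, hδ0, hδ⟩ := hGequi (ε/t) (by positivity) s₀ hs₀
      refine ⟨δ, hδ0, ?_⟩
      intro s hs hdist
      rw [Real.dist_eq] at hdist ⊢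
      have hb1 : ∀ g ∈ G, ‖g s - g s₀‖ ≤ ε/t := fun g hg => hδ g hg s hs hdist
      have hb2 : ∀ g ∈ G, ‖g s₀ - g s‖ ≤ ε/t := fun g hg => by
        rw [norm_sub_rev]; exact hb1 g hg
      have e1 := hφkey ε hε0 hε1 s hs s₀ hs₀ hb1
      have e2 := hφkey ε hε0 hε1 s₀ hs₀ s hs hb2
      rw [abs_sub_lt_iff]
      constructor <;> [skip; skip] <;> linarith
    -- integrability
    have hIccsub : Icc (0:ℝ) t ⊆ Icc (0:ℝ) a := Icc_subset_Icc le_rfl hta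
    have hφint : IntegrableOn φ (Ioc (0:ℝ) t) :=
      ((hφcont.mono hIccsub).integrableOn_Icc).mono_set Ioc_subset_Icc_self
    set J := ∫ s in Ioc (0:ℝ) t, φ s with hJdef
    have hJ' : ∫ s in (0:ℝ)..t, φ s = J := intervalIntegral.integral_of_le ht.le
    -- the image of integrals
    have hIntne : ((fun g : ℝ → X => ∫ s in Ioc (0 : ℝ) t, g s) '' G).Nonempty :=
      ⟨_, mem_image_of_mem _ hg₀⟩
    -- the main estimate
    have hmain : ∀ η : ℝ, 0 < η →
        μ ((fun g : ℝ → X => ∫ s in Ioc (0 : ℝ) t, g s) '' G) ≤ t⁻¹ * J + η := by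
      intro η hη
      set ε : ℝ := min ((t+1)⁻¹) ((η / (2*C+1))^2 / (t+1)) with hεdef
      have hε0 : 0 < ε := lt_min (by positivity) (by positivity)
      have htε0 : 0 < t * ε := mul_pos ht hε0
      have htε1 : t * ε ≤ 1 := by
        have h1 : ε ≤ (t+1)⁻¹ := min_le_left _ _
        have h2 : t * ε ≤ t * (t+1)⁻¹ := mul_le_mul_of_nonneg_left h1 ht.le
        have h3 : t * (t+1)⁻¹ ≤ 1 := by
          rw [← div_eq_mul_inv, div_le_one (by linarith)]
          linarith
        linarith
      set κ := Real.sqrt (t*ε) * C with hκdef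
      have hκ0 : 0 ≤ κ := mul_nonneg (Real.sqrt_nonneg _) hC0
      have h2κ : 2 * κ ≤ η := by
        set w := η / (2*C+1) with hw
        have hw0 : 0 ≤ w := by positivity
        have hwη : w * (2*C+1) = η := by rw [hw]; field_simp
        have h1 : t * ε ≤ w^2 := by
          have h2 : ε ≤ w^2 / (t+1) := min_le_right _ _
          have h3 : t * ε ≤ t * (w^2/(t+1)) := mul_le_mul_of_nonneg_left h2 ht.le
          have h4 : t * (w^2/(t+1)) ≤ w^2 := by
            rw [mul_div_assoc']
            rw [div_le_iff₀ (by linarith : (0:ℝ) < t+1)]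
            nlinarith [sq_nonneg w]
          linarith
        have h5 : Real.sqrt (t*ε) ≤ w := by
          calc Real.sqrt (t*ε) ≤ Real.sqrt (w^2) := Real.sqrt_le_sqrt h1
            _ = w := Real.sqrt_sq hw0
        have h6 : κ ≤ w * C := by
          rw [hκdef]; exact mul_le_mul_of_nonneg_right h5 hC0
        nlinarith
      obtain ⟨δ, hδ0, hδ⟩ := hunif ε hε0
      obtain ⟨n, hn⟩ := exists_nat_gt (t/δ)
      have hn0' : (0:ℝ) < n := lt_of_le_of_lt (by positivity : (0:ℝ) ≤ t/δ) hn
      have hn0 : 0 < n := by exact_mod_cast hn0'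
      have htn : t / n < δ := by
        rw [div_lt_iff₀ hn0']
        calc t = (t/δ) * δ := by field_simp
          _ < (n:ℝ) * δ := mul_lt_mul_of_pos_right hn hδ0
          _ = δ * n := mul_comm _ _
      have htn0 : 0 < t/(n:ℝ) := by positivity
      set p : ℕ → ℝ := fun i => i * (t/n) with hpdef
      have hp0 : p 0 = 0 := by simp [hpdef]
      have hpn : p n = t := by rw [hpdef]; field_simp
      have hpstep : ∀ i : ℕ, p (i+1) - p i = t/n := by
        intro i; rw [hpdef]; push_cast; ring
      have hpmono : ∀ i : ℕ, p i ≤ p (i+1) := fun i => by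
        have := hpstep i; linarith [htn0.le]
      have hpIcc : ∀ i : ℕ, i ≤ n → p i ∈ Icc (0:ℝ) a := by
        intro i hi
        constructor
        · rw [hpdef]; positivity
        · rw [hpdef]
          calc (i:ℝ) * (t/n) ≤ (n:ℝ) * (t/n) :=
                mul_le_mul_of_nonneg_right (by exact_mod_cast hi) htn0.le
            _ = t := by field_simp
            _ ≤ a := hta
      have hIccsub' : ∀ i : ℕ, i < n → Icc (p i) (p (i+1)) ⊆ Icc (0:ℝ) a :=
        fun i hi => Icc_subset_Icc (hpIcc i hi.le).1 (hpIcc (i+1) hi).2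
      have hqdist : ∀ i : ℕ, ∀ x ∈ Icc (p i) (p (i+1)), |x - p (i+1)| < δ := by
        intro i x hx
        have h := hpstep i
        rw [abs_sub_comm, abs_of_nonneg (by linarith [hx.2] : (0:ℝ) ≤ p (i+1) - x)]
        have := hx.1
        linarith
      set A : ℕ → Set X := fun i => t • ((fun g : ℝ → X => g (p (i+1))) '' G) with hAdef
      have hAne : ∀ i, i < n → (A i).Nonempty := fun i _ => (hGsne _).smul_set
      have hAball : ∀ i, i < n → ∀ x ∈ A i, ‖x‖ ≤ t*M :=
        fun i hi => hGsball (p (i+1)) (hpIcc (i+1) hi)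
      have hAbd : ∀ i, i < n → IsBounded (A i) :=
        fun i hi => htGsbd (p (i+1)) (hpIcc (i+1) hi)
      set Q := ∑ i ∈ Finset.range n, ((n:ℝ)⁻¹) • A i with hQdef
      have hQball : ∀ x ∈ Q, ‖x‖ ≤ t*M := by
        intro x hx
        have hb : ∀ i, i < n → ∀ y ∈ ((n:ℝ)⁻¹) • A i, ‖y‖ ≤ (n:ℝ)⁻¹ * (t*M) := by
          intro i hi y hy
          obtain ⟨z, hz, rfl⟩ := hy
          rw [norm_smul, Real.norm_eq_abs, abs_of_nonneg (by positivity : (0:ℝ) ≤ (n:ℝ)⁻¹)]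
          exact mul_le_mul_of_nonneg_left (hAball i hi z hz) (by positivity)
        have := norm_le_of_mem_sumSet _ _ n hb x hx
        calc ‖x‖ ≤ (n:ℝ) * ((n:ℝ)⁻¹ * (t*M)) := this
          _ = t*M := by field_simp
      have hQne : Q.Nonempty := sumSet_nonempty _ n (fun i hi => (hAne i hi).smul_set)
      have hgInt : ∀ g ∈ G, ∀ i, i < n → IntervalIntegrable g volume (p i) (p (i+1)) := by
        intro g hg i hi
        apply ContinuousOn.intervalIntegrable
        rw [uIcc_of_le (hpmono i)]
        exact (hGcont g hg).mono (hIccsub' i hi)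
      -- claim 1 : the integrals lie close to Q
      have hsubQ : ((fun g : ℝ → X => ∫ s in Ioc (0 : ℝ) t, g s) '' G)
          ⊆ Q + Metric.closedBall 0 (t*ε) := by
        rintro x ⟨g, hg, rfl⟩
        set v := ∑ i ∈ Finset.range n, (t/(n:ℝ)) • g (p (i+1)) with hvdef
        have hvQ : v ∈ Q := by
          rw [hQdef, hvdef]
          apply mem_sumSet
          intro i hi
          have h1 : t • g (p (i+1)) ∈ A i :=
            Set.smul_mem_smul_set (mem_image_of_mem _ hg)
          have h3 : (t / (n:ℝ)) • g (p (i+1)) = ((n:ℝ)⁻¹) • (t • g (p (i+1))) := by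
            rw [smul_smul]
            congr 1
            field_simp
          rw [h3]
          exact Set.smul_mem_smul_set h1
        have hsplit : (∫ s in Ioc (0 : ℝ) t, g s)
            = ∑ i ∈ Finset.range n, ∫ x in p i..p (i+1), g x := by
          have h := intervalIntegral.sum_integral_adjacent_intervals
            (f := g) (μ := volume) (a := p) (n := n) (fun k hk => hgInt g hg k hk)
          rw [hp0, hpn] at h
          rw [← intervalIntegral.integral_of_le ht.le, ← h]
        have hterm : ∀ i ∈ Finset.range n,
            ‖(∫ x in p i..p (i+1), g x) - (t/(n:ℝ)) • g (p (i+1))‖ ≤ ε * (t/n) := by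
          intro i hi'
          have hi : i < n := Finset.mem_range.1 hi'
          have heq : (∫ x in p i..p (i+1), g x) - (t/(n:ℝ)) • g (p (i+1))
              = ∫ x in p i..p (i+1), (g x - g (p (i+1))) := by
            rw [intervalIntegral.integral_sub (hgInt g hg i hi) intervalIntegrable_const,
              intervalIntegral.integral_const, hpstep i]
          rw [heq]
          have hbound : ∀ x ∈ Set.uIoc (p i) (p (i+1)), ‖g x - g (p (i+1))‖ ≤ ε := by
            intro x hx
            rw [uIoc_of_le (hpmono i)] at hx
            have hxIcc : x ∈ Icc (p i) (p (i+1)) := Ioc_subset_Icc_self hx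
            exact hδ g hg x (hIccsub' i hi hxIcc) (p (i+1)) (hpIcc (i+1) hi)
              (hqdist i x hxIcc)
          calc ‖∫ x in p i..p (i+1), (g x - g (p (i+1)))‖ ≤ ε * |p (i+1) - p i| :=
                intervalIntegral.norm_integral_le_of_norm_le_const hbound
            _ = ε * (t/n) := by rw [hpstep i, abs_of_pos htn0]
        have hdiff : ‖(∫ s in Ioc (0 : ℝ) t, g s) - v‖ ≤ t * ε := by
          rw [hsplit, hvdef, ← Finset.sum_sub_distrib]
          calc ‖∑ i ∈ Finset.range n,
                ((∫ x in p i..p (i+1), g x) - (t/(n:ℝ)) • g (p (i+1)))‖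
              ≤ ∑ i ∈ Finset.range n,
                ‖(∫ x in p i..p (i+1), g x) - (t/(n:ℝ)) • g (p (i+1))‖ := norm_sum_le _ _
            _ ≤ ∑ _i ∈ Finset.range n, ε * (t/n) := Finset.sum_le_sum hterm
            _ = n * (ε * (t/n)) := by
                rw [Finset.sum_const, Finset.card_range, nsmul_eq_mul]
            _ = t * ε := by field_simp
        rw [Set.mem_add]
        refine ⟨v, hvQ, (∫ s in Ioc (0 : ℝ) t, g s) - v, ?_, by abel⟩
        rw [mem_closedBall_zero_iff]
        exact hdiff
      -- step A
      have hAA : μ ((fun g : ℝ → X => ∫ s in Ioc (0 : ℝ) t, g s) '' G) ≤ μ Q + κ := by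
        have h := hμ.le_add_sqrt (R := t*M) htM0 htε0 htε1 hQne hIntne
          (fun x hx => by
            simpa [Metric.mem_closedBall, dist_zero_right] using hQball x hx)
          hsubQ
        rw [← hCdef] at h
        rw [hκdef]
        exact h
      -- claim 2
      have hQle : μ Q ≤ ∑ i ∈ Finset.range n, (n:ℝ)⁻¹ * μ (A i) :=
        hμ.sum_inv_smul_le n A hAne hAbd hn0
      -- claim 3
      have hφII : ∀ i, i < n → IntervalIntegrable φ volume (p i) (p (i+1)) := by
        intro i hi
        apply ContinuousOn.intervalIntegrable
        rw [uIcc_of_le (hpmono i)]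
        exact hφcont.mono (hIccsub' i hi)
      have hterm3 : ∀ i ∈ Finset.range n,
          (t/(n:ℝ)) * (μ (A i) - κ) ≤ ∫ x in p i..p (i+1), φ x := by
        intro i hi'
        have hi : i < n := Finset.mem_range.1 hi'
        have hpt : ∀ x ∈ Icc (p i) (p (i+1)), μ (A i) - κ ≤ φ x := by
          intro x hx
          have hxI : x ∈ Icc (0:ℝ) a := hIccsub' i hi hx
          have hhyp : ∀ g ∈ G, ‖g x - g (p (i+1))‖ ≤ (t*ε) / t := by
            intro g hg
            have h := hδ g hg x hxI (p (i+1)) (hpIcc (i+1) hi) (hqdist i x hx)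
            calc ‖g x - g (p (i+1))‖ ≤ ε := h
              _ = (t*ε)/t := by field_simp
          have happ := hφkey (t*ε) htε0 htε1 x hxI (p (i+1)) (hpIcc (i+1) hi) hhyp
          rw [← hκdef] at happ
          have : μ (A i) = μ (t • ((fun g : ℝ → X => g (p (i+1))) '' G)) := by rw [hAdef]
          rw [this]
          linarith [happ]
        have h := intervalIntegral.integral_mono_on (hpmono i)
          intervalIntegrable_const (hφII i hi) hpt
        rwa [intervalIntegral.integral_const, hpstep i, smul_eq_mul] at h
      have hsum3 : ∑ i ∈ Finset.range n, (t/(n:ℝ)) * (μ (A i) - κ) ≤ J := by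
        have h := intervalIntegral.sum_integral_adjacent_intervals
          (f := φ) (μ := volume) (a := p) (n := n) hφII
        rw [hp0, hpn, hJ'] at h
        calc ∑ i ∈ Finset.range n, (t/(n:ℝ)) * (μ (A i) - κ)
            ≤ ∑ i ∈ Finset.range n, ∫ x in p i..p (i+1), φ x := Finset.sum_le_sum hterm3
          _ = J := h
      have hsum4 : ∑ i ∈ Finset.range n, (t/(n:ℝ)) * μ (A i) ≤ J + t * κ := by
        have hexp : ∑ i ∈ Finset.range n, (t/(n:ℝ)) * (μ (A i) - κ)
            = (∑ i ∈ Finset.range n, (t/(n:ℝ)) * μ (A i)) - n * ((t/n) * κ) := by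
          rw [show (n:ℝ) * ((t/n) * κ) = ∑ _i ∈ Finset.range n, (t/(n:ℝ)) * κ from by
            rw [Finset.sum_const, Finset.card_range, nsmul_eq_mul]]
          rw [← Finset.sum_sub_distrib]
          exact Finset.sum_congr rfl fun i _ => by ring
        have hnt : (n:ℝ) * ((t/n) * κ) = t * κ := by field_simp
        rw [hexp, hnt] at hsum3
        linarith
      have hfold : ∑ i ∈ Finset.range n, (n:ℝ)⁻¹ * μ (A i)
          = t⁻¹ * ∑ i ∈ Finset.range n, (t/(n:ℝ)) * μ (A i) := by
        rw [Finset.mul_sum]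
        exact Finset.sum_congr rfl fun i _ => by
          rw [← mul_assoc]
          congr 1
          field_simp
      calc μ ((fun g : ℝ → X => ∫ s in Ioc (0 : ℝ) t, g s) '' G)
          ≤ μ Q + κ := hAA
        _ ≤ (∑ i ∈ Finset.range n, (n:ℝ)⁻¹ * μ (A i)) + κ := by linarith [hQle]
        _ = t⁻¹ * (∑ i ∈ Finset.range n, (t/(n:ℝ)) * μ (A i)) + κ := by rw [hfold]
        _ ≤ t⁻¹ * (J + t*κ) + κ := by
            have := mul_le_mul_of_nonneg_left hsum4 (inv_nonneg.2 ht.le)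
            linarith
        _ = t⁻¹ * J + (t⁻¹ * t) * κ + κ := by ring
        _ = t⁻¹ * J + 2*κ := by rw [inv_mul_cancel₀ ht.ne']; ring
        _ ≤ t⁻¹ * J + η := by linarith
    have hreal : μ ((fun g : ℝ → X => ∫ s in Ioc (0 : ℝ) t, g s) '' G) ≤ t⁻¹ * J :=
      le_of_forall_pos_le_add hmain
    have hφae : 0 ≤ᵐ[volume.restrict (Ioc (0:ℝ) t)] φ := by
      filter_upwards [ae_restrict_mem measurableSet_Ioc] with s hs
      exact hφ0 s ⟨hs.1.le, hs.2.trans hta⟩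
    have hlint : ∫⁻ s in Ioc (0:ℝ) t, ENNReal.ofReal (φ s) = ENNReal.ofReal J :=
      (ofReal_integral_eq_lintegral_ofReal hφint hφae).symm
    calc ENNReal.ofReal (μ ((fun g : ℝ → X => ∫ s in Ioc (0 : ℝ) t, g s) '' G))
        ≤ ENNReal.ofReal (t⁻¹ * J) := ENNReal.ofReal_le_ofReal hreal
      _ = ENNReal.ofReal t⁻¹ * ENNReal.ofReal J :=
          ENNReal.ofReal_mul (by positivity)
      _ = (ENNReal.ofReal t)⁻¹ * ENNReal.ofReal J := by
          rw [ENNReal.ofReal_inv_of_pos ht]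
      _ = _ := by rw [hlint]

  refine ⟨part1, ?_⟩
  intro t hcase
  obtain ⟨ht, hta, hkey⟩ : 0 < t ∧ t ≤ a ∧ ∀ s ∈ Icc (0:ℝ) a,
      μ (t • ((fun g : ℝ → X => g s) '' G)) ≤ t * μ ((fun g : ℝ → X => g s) '' G) := by
    rcases hcase with ⟨ht, htm⟩ | ⟨hsub, ht, hta⟩
    · have ht1 : t ≤ 1 := htm.trans (min_le_left _ _)
      have hta : t ≤ a := htm.trans (min_le_right _ _)
      refine ⟨ht, hta, ?_⟩
      intro s hs
      have hB := hGsne s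
      have hBbd := hGsbd s hs
      have hz : μ ({(0:X)}) = 0 := by
        refine (hμ.eq_zero_iff {0} ⟨0, rfl⟩ isBounded_singleton).2 ?_
        rw [closure_singleton]
        exact isCompact_singleton
      have hset : t • ((fun g : ℝ → X => g s) '' G) + (1 - t) • ({(0:X)} : Set X)
          = t • ((fun g : ℝ → X => g s) '' G) := by
        rw [Set.smul_set_singleton, smul_zero, Set.add_singleton]
        simp
      have hc := hμ.convex _ {(0:X)} hB ⟨0, rfl⟩ hBbd isBounded_singleton t ht.le ht1
      rw [hset, hz] at hc
      linarith
    · exact ⟨ht, hta, fun s hs =>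
        le_of_eq (hsub.smul_eq _ (hGsne s) (hGsbd s hs) t ht.le)⟩
  have h1 := part1 t ht hta
  have h2 : (∫⁻ s in Ioc (0:ℝ) t, ENNReal.ofReal (μ (t • ((fun g : ℝ → X => g s) '' G))))
      ≤ ∫⁻ s in Ioc (0:ℝ) t,
          ENNReal.ofReal t * ENNReal.ofReal (μ ((fun g : ℝ → X => g s) '' G)) := by
    refine lintegral_mono_ae ?_
    filter_upwards [ae_restrict_mem measurableSet_Ioc] with s hs
    have hsI : s ∈ Icc (0:ℝ) a := ⟨hs.1.le, hs.2.trans hta⟩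
    calc ENNReal.ofReal (μ (t • ((fun g : ℝ → X => g s) '' G)))
        ≤ ENNReal.ofReal (t * μ ((fun g : ℝ → X => g s) '' G)) :=
          ENNReal.ofReal_le_ofReal (hkey s hsI)
      _ = ENNReal.ofReal t * ENNReal.ofReal (μ ((fun g : ℝ → X => g s) '' G)) :=
          ENNReal.ofReal_mul ht.le
  have h3 : (∫⁻ s in Ioc (0:ℝ) t,
        ENNReal.ofReal t * ENNReal.ofReal (μ ((fun g : ℝ → X => g s) '' G)))
      = ENNReal.ofReal t *
        ∫⁻ s in Ioc (0:ℝ) t, ENNReal.ofReal (μ ((fun g : ℝ → X => g s) '' G)) :=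
    lintegral_const_mul' _ _ ENNReal.ofReal_ne_top
  calc ENNReal.ofReal (μ ((fun g : ℝ → X => ∫ s in Ioc (0 : ℝ) t, g s) '' G))
      ≤ (ENNReal.ofReal t)⁻¹ * ∫⁻ s in Ioc (0:ℝ) t,
          ENNReal.ofReal (μ (t • ((fun g : ℝ → X => g s) '' G))) := h1
    _ ≤ (ENNReal.ofReal t)⁻¹ * (ENNReal.ofReal t *
          ∫⁻ s in Ioc (0:ℝ) t, ENNReal.ofReal (μ ((fun g : ℝ → X => g s) '' G))) := by
        rw [← h3]
        exact mul_le_mul_right h2 _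
    _ = _ := by
        rw [← mul_assoc, ENNReal.inv_mul_cancel ((ENNReal.ofReal_pos.2 ht).ne')
          ENNReal.ofReal_ne_top, one_mul]
end

section
/- Let X be a real Banach space and I = [0,a]. Let G be a nonempty set of regulated functions g : I → X that is bounded and separable with respect to the supremum norm and equi-regulated. Then 𝕁_G : I → C_b(Ω) is strongly measurable. -/
open Set MeasureTheory Filter
open Topology

/-- If `G` is a nonempty family of regulated functions `[0,a] → X` which is bounded and
separable in supremum norm and equi-regulated, then `𝕁_G : [0,a] → C_b(Ω)` (given by
`𝕁_G(t)(x*) = sup_{g∈G} x*(g t)`) is strongly measurable. -/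
theorem JG_stronglyMeasurable_of_equiregulated {X : Type*} [NormedAddCommGroup X]
    [NormedSpace ℝ X] [CompleteSpace X] (a : ℝ) (ha : 0 < a)
    (G : Set (ℝ → X)) (hGne : G.Nonempty)
    -- every `g ∈ G` is regulated on `[0,a]`: one-sided limits exist
    (hGreg_right : ∀ g ∈ G, ∀ t ∈ Ico (0 : ℝ) a,
      ∃ L : X, Tendsto g (nhdsWithin t (Ioi t)) (nhds L))
    (hGreg_left : ∀ g ∈ G, ∀ t ∈ Ioc (0 : ℝ) a,
      ∃ L : X, Tendsto g (nhdsWithin t (Iio t)) (nhds L))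
    -- `G` is bounded in supremum norm
    (hGbdd : ∃ M : ℝ, ∀ g ∈ G, ∀ t ∈ Icc (0 : ℝ) a, ‖g t‖ ≤ M)
    -- `G` is separable with respect to the supremum norm
    (hGsep : ∃ D : Set (ℝ → X), D.Countable ∧ D ⊆ G ∧
      ∀ g ∈ G, ∀ ε : ℝ, 0 < ε → ∃ h ∈ D, ∀ t ∈ Icc (0 : ℝ) a, ‖g t - h t‖ ≤ ε)
    -- `G` is equi-regulated
    (hGequi_left : ∀ t ∈ Ioc (0 : ℝ) a, ∀ ε : ℝ, 0 < ε → ∃ δ : ℝ, 0 < δ ∧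
      ∀ g ∈ G, ∀ t₁ ∈ Ioo (t - δ) t ∩ Icc (0 : ℝ) a, ∀ t₂ ∈ Ioo (t - δ) t ∩ Icc (0 : ℝ) a,
        ‖g t₂ - g t₁‖ ≤ ε)
    (hGequi_right : ∀ t ∈ Ico (0 : ℝ) a, ∀ ε : ℝ, 0 < ε → ∃ δ : ℝ, 0 < δ ∧
      ∀ g ∈ G, ∀ t₁ ∈ Ioo t (t + δ) ∩ Icc (0 : ℝ) a, ∀ t₂ ∈ Ioo t (t + δ) ∩ Icc (0 : ℝ) a,
        ‖g t₂ - g t₁‖ ≤ ε)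
    (JG : ℝ → BoundedContinuousFunction (DualUnitBall X) ℝ)
    (hJG_eq : ∀ t ∈ Icc (0 : ℝ) a, ∀ ω : DualUnitBall X,
      JG t ω = ⨆ g : G, (ω : StrongDual ℝ X) ((g : ℝ → X) t)) :
    AEStronglyMeasurable JG (volume.restrict (Icc 0 a)) := by
  classical
  obtain ⟨M, hM⟩ := hGbdd
  haveI : Nonempty G := hGne.to_subtype
  have hω : ∀ ω : DualUnitBall X, ‖(ω : StrongDual ℝ X)‖ ≤ 1 := fun ω =>
    mem_closedBall_zero_iff.mp ω.2
  -- boundedness of the families defining the sups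
  have hbdd : ∀ t ∈ Icc (0 : ℝ) a, ∀ ω : DualUnitBall X,
      BddAbove (Set.range fun g : G => (ω : StrongDual ℝ X) ((g : ℝ → X) t)) := by
    intro t ht ω
    refine ⟨M, ?_⟩
    rintro _ ⟨g, rfl⟩
    have h1 := (ω : StrongDual ℝ X).le_opNorm ((g : ℝ → X) t)
    have h2 : ‖(ω : StrongDual ℝ X)‖ * ‖(g : ℝ → X) t‖ ≤ ‖(g : ℝ → X) t‖ :=
      mul_le_of_le_one_left (norm_nonneg _) (hω ω)
    have h3 := hM (g : ℝ → X) g.2 t ht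
    have h4 : ((ω : StrongDual ℝ X) ((g : ℝ → X) t)) ≤
        |(ω : StrongDual ℝ X) ((g : ℝ → X) t)| := le_abs_self _
    rw [← Real.norm_eq_abs] at h4
    linarith
  -- the key Lipschitz-type estimate for `JG`
  have key : ∀ ε : ℝ, 0 ≤ ε → ∀ t₁ ∈ Icc (0 : ℝ) a, ∀ t₂ ∈ Icc (0 : ℝ) a,
      (∀ g ∈ G, ‖g t₂ - g t₁‖ ≤ ε) → dist (JG t₁) (JG t₂) ≤ ε := by
    intro ε hε t₁ ht₁ t₂ ht₂ hg
    rw [BoundedContinuousFunction.dist_le hε]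
    intro ω
    have hsub : ∀ s₁ ∈ Icc (0 : ℝ) a, ∀ s₂ ∈ Icc (0 : ℝ) a,
        (∀ g ∈ G, ‖g s₂ - g s₁‖ ≤ ε) → JG s₁ ω ≤ JG s₂ ω + ε := by
      intro s₁ hs₁ s₂ hs₂ h
      rw [hJG_eq s₁ hs₁ ω, hJG_eq s₂ hs₂ ω]
      refine ciSup_le fun g => ?_
      have hb : ‖(g : ℝ → X) s₁ - (g : ℝ → X) s₂‖ ≤ ε := by
        rw [norm_sub_rev]; exact h (g : ℝ → X) g.2
      have h2 : (ω : StrongDual ℝ X) ((g : ℝ → X) s₁) -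
          (ω : StrongDual ℝ X) ((g : ℝ → X) s₂) ≤ ε := by
        rw [← map_sub]
        have h3 := (ω : StrongDual ℝ X).le_opNorm ((g : ℝ → X) s₁ - (g : ℝ → X) s₂)
        have h4 : ‖(ω : StrongDual ℝ X)‖ * ‖(g : ℝ → X) s₁ - (g : ℝ → X) s₂‖ ≤
            ‖(g : ℝ → X) s₁ - (g : ℝ → X) s₂‖ :=
          mul_le_of_le_one_left (norm_nonneg _) (hω ω)
        have h5 : ((ω : StrongDual ℝ X) ((g : ℝ → X) s₁ - (g : ℝ → X) s₂)) ≤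
            |(ω : StrongDual ℝ X) ((g : ℝ → X) s₁ - (g : ℝ → X) s₂)| := le_abs_self _
        rw [← Real.norm_eq_abs] at h5
        linarith
      have h6 := le_ciSup (hbdd s₂ hs₂ ω) g
      linarith
    have h1 := hsub t₁ ht₁ t₂ ht₂ hg
    have h2 := hsub t₂ ht₂ t₁ ht₁ (fun g hg' => by rw [norm_sub_rev]; exact hg g hg')
    rw [Real.dist_eq, abs_le]
    constructor <;> linarith
  -- nontriviality of one-sided filters
  have neR : ∀ t : ℝ, t < a → (𝓝[Ioc t a] t).NeBot := by
    intro t ht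
    refine mem_closure_iff_nhdsWithin_neBot.mp ?_
    rw [closure_Ioc ht.ne]
    exact ⟨le_rfl, ht.le⟩
  have neL : ∀ t : ℝ, 0 < t → (𝓝[Ico 0 t] t).NeBot := by
    intro t ht
    refine mem_closure_iff_nhdsWithin_neBot.mp ?_
    rw [closure_Ico ht.ne]
    exact ⟨ht.le, le_rfl⟩
  -- existence of one-sided limits of `JG`
  have Rex : ∀ t ∈ Ico (0 : ℝ) a, ∃ L, Tendsto JG (𝓝[Ioc t a] t) (𝓝 L) := by
    intro t ht
    haveI := neR t ht.2
    have hc : Cauchy (Filter.map JG (𝓝[Ioc t a] t)) := by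
      refine Metric.cauchy_iff.mpr ⟨Filter.map_neBot, fun ε hε => ?_⟩
      obtain ⟨δ, hδ, hδ'⟩ := hGequi_right t ht (ε / 3) (by linarith)
      refine ⟨JG '' (Ioc t a ∩ Ioo (t - 1) (t + δ)), ?_, ?_⟩
      · exact Filter.image_mem_map (inter_mem self_mem_nhdsWithin
          (mem_nhdsWithin_of_mem_nhds (Ioo_mem_nhds (by linarith) (by linarith))))
      · rintro _ ⟨u, hu, rfl⟩ _ ⟨v, hv, rfl⟩
        have hu' : u ∈ Ioo t (t + δ) ∩ Icc (0 : ℝ) a :=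
          ⟨⟨hu.1.1, hu.2.2⟩, ⟨le_trans ht.1 hu.1.1.le, hu.1.2⟩⟩
        have hv' : v ∈ Ioo t (t + δ) ∩ Icc (0 : ℝ) a :=
          ⟨⟨hv.1.1, hv.2.2⟩, ⟨le_trans ht.1 hv.1.1.le, hv.1.2⟩⟩
        have := key (ε / 3) (by linarith) u hu'.2 v hv'.2
          (fun g hg => hδ' g hg u hu' v hv')
        linarith
    obtain ⟨L, hL⟩ := CompleteSpace.complete hc
    exact ⟨L, hL⟩
  have Lex : ∀ t ∈ Ioc (0 : ℝ) a, ∃ L, Tendsto JG (𝓝[Ico 0 t] t) (𝓝 L) := by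
    intro t ht
    haveI := neL t ht.1
    have hc : Cauchy (Filter.map JG (𝓝[Ico 0 t] t)) := by
      refine Metric.cauchy_iff.mpr ⟨Filter.map_neBot, fun ε hε => ?_⟩
      obtain ⟨δ, hδ, hδ'⟩ := hGequi_left t ht (ε / 3) (by linarith)
      refine ⟨JG '' (Ico 0 t ∩ Ioo (t - δ) (t + 1)), ?_, ?_⟩
      · exact Filter.image_mem_map (inter_mem self_mem_nhdsWithin
          (mem_nhdsWithin_of_mem_nhds (Ioo_mem_nhds (by linarith) (by linarith))))
      · rintro _ ⟨u, hu, rfl⟩ _ ⟨v, hv, rfl⟩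
        have hu' : u ∈ Ioo (t - δ) t ∩ Icc (0 : ℝ) a :=
          ⟨⟨hu.2.1, hu.1.2⟩, ⟨hu.1.1, le_trans hu.1.2.le ht.2⟩⟩
        have hv' : v ∈ Ioo (t - δ) t ∩ Icc (0 : ℝ) a :=
          ⟨⟨hv.2.1, hv.1.2⟩, ⟨hv.1.1, le_trans hv.1.2.le ht.2⟩⟩
        have := key (ε / 3) (by linarith) u hu'.2 v hv'.2
          (fun g hg => hδ' g hg u hu' v hv')
        linarith
    obtain ⟨L, hL⟩ := CompleteSpace.complete hc
    exact ⟨L, hL⟩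
  -- the sets of large one-sided jumps
  set AR : ℕ → Set ℝ := fun n => {t | t ∈ Ico (0 : ℝ) a ∧ ∃ F,
    Tendsto JG (𝓝[Ioc t a] t) (𝓝 F) ∧ 1 / (n + 1 : ℝ) < dist (JG t) F} with hAR
  set AL : ℕ → Set ℝ := fun n => {t | t ∈ Ioc (0 : ℝ) a ∧ ∃ F,
    Tendsto JG (𝓝[Ico 0 t] t) (𝓝 F) ∧ 1 / (n + 1 : ℝ) < dist (JG t) F} with hAL
  have hARmem : ∀ (n : ℕ) (t : ℝ), t ∈ AR n ↔ (t ∈ Ico (0 : ℝ) a ∧ ∃ F,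
      Tendsto JG (𝓝[Ioc t a] t) (𝓝 F) ∧ 1 / (n + 1 : ℝ) < dist (JG t) F) :=
    fun n t => Iff.rfl
  have hALmem : ∀ (n : ℕ) (t : ℝ), t ∈ AL n ↔ (t ∈ Ioc (0 : ℝ) a ∧ ∃ F,
      Tendsto JG (𝓝[Ico 0 t] t) (𝓝 F) ∧ 1 / (n + 1 : ℝ) < dist (JG t) F) :=
    fun n t => Iff.rfl
  have hεn : ∀ n : ℕ, (0 : ℝ) < 1 / (n + 1 : ℝ) := fun n => by positivity
  -- each jump set is countable (in fact finite)
  have hARc : ∀ n, (AR n).Countable := by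
    intro n
    by_contra hc
    have hinf : (AR n).Infinite := fun hfin => hc hfin.countable
    have hsub : AR n ⊆ Icc (0 : ℝ) a := fun t ht => ⟨((hARmem n t).mp ht).1.1, ((hARmem n t).mp ht).1.2.le⟩
    obtain ⟨t₀, ht₀K, ht₀⟩ := hinf.exists_accPt_of_subset_isCompact isCompact_Icc hsub
    have hsplit : (𝓝[<] t₀ ⊓ 𝓟 (AR n) ⊔ 𝓝[>] t₀ ⊓ 𝓟 (AR n)).NeBot := by
      rw [← inf_sup_right, nhdsLT_sup_nhdsGT]
      exact ht₀
    rcases sup_neBot.mp hsplit with hne | hne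
    · -- accumulation from the left
      obtain ⟨s₁, hs₁⟩ := Filter.nonempty_of_mem
        (inter_mem_inf self_mem_nhdsWithin (mem_principal_self (AR n)) :
          Iio t₀ ∩ AR n ∈ 𝓝[<] t₀ ⊓ 𝓟 (AR n))
      have ht₀pos : 0 < t₀ := lt_of_le_of_lt ((hARmem n s₁).mp hs₁.2).1.1 hs₁.1
      obtain ⟨δ, hδ, hδ'⟩ := hGequi_left t₀ ⟨ht₀pos, ht₀K.2⟩ (1 / (n + 1 : ℝ)) (hεn n)
      obtain ⟨s, hs⟩ := Filter.nonempty_of_mem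
        (inter_mem_inf (Ioo_mem_nhdsLT (show t₀ - δ < t₀ by linarith)) (mem_principal_self (AR n)))
      obtain ⟨hsI, F, hF, hdist⟩ := (hARmem n s).mp hs.2
      haveI := neR s hsI.2
      have hsw : s ∈ Ioo (t₀ - δ) t₀ ∩ Icc (0 : ℝ) a := ⟨hs.1, ⟨hsI.1, hsI.2.le⟩⟩
      have hev : ∀ᶠ u in 𝓝[Ioc s a] s, dist (JG s) (JG u) ≤ 1 / (n + 1 : ℝ) := by
        refine eventually_of_mem (inter_mem self_mem_nhdsWithin
          (mem_nhdsWithin_of_mem_nhds (Ioo_mem_nhds (show s - 1 < s by linarith) hs.1.2))) ?_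
        intro u hu
        have huw : u ∈ Ioo (t₀ - δ) t₀ ∩ Icc (0 : ℝ) a :=
          ⟨⟨lt_trans hs.1.1 hu.1.1, hu.2.2⟩, ⟨le_trans hsI.1 hu.1.1.le, hu.1.2⟩⟩
        exact key _ (hεn n).le s hsw.2 u huw.2 (fun g hg => hδ' g hg s hsw u huw)
      exact absurd (le_of_tendsto (tendsto_const_nhds.dist hF) hev) (not_le.mpr hdist)
    · -- accumulation from the right
      obtain ⟨s₁, hs₁⟩ := Filter.nonempty_of_mem
        (inter_mem_inf self_mem_nhdsWithin (mem_principal_self (AR n)) :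
          Ioi t₀ ∩ AR n ∈ 𝓝[>] t₀ ⊓ 𝓟 (AR n))
      have ht₀a : t₀ < a := lt_of_lt_of_le hs₁.1 ((hARmem n s₁).mp hs₁.2).1.2.le
      obtain ⟨δ, hδ, hδ'⟩ := hGequi_right t₀ ⟨ht₀K.1, ht₀a⟩ (1 / (n + 1 : ℝ)) (hεn n)
      obtain ⟨s, hs⟩ := Filter.nonempty_of_mem
        (inter_mem_inf (Ioo_mem_nhdsGT (show t₀ < t₀ + δ by linarith)) (mem_principal_self (AR n)))
      obtain ⟨hsI, F, hF, hdist⟩ := (hARmem n s).mp hs.2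
      haveI := neR s hsI.2
      have hsw : s ∈ Ioo t₀ (t₀ + δ) ∩ Icc (0 : ℝ) a := ⟨hs.1, ⟨hsI.1, hsI.2.le⟩⟩
      have hev : ∀ᶠ u in 𝓝[Ioc s a] s, dist (JG s) (JG u) ≤ 1 / (n + 1 : ℝ) := by
        refine eventually_of_mem (inter_mem self_mem_nhdsWithin
          (mem_nhdsWithin_of_mem_nhds (Ioo_mem_nhds (show s - 1 < s by linarith) hs.1.2))) ?_
        intro u hu
        have huw : u ∈ Ioo t₀ (t₀ + δ) ∩ Icc (0 : ℝ) a :=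
          ⟨⟨lt_trans hs.1.1 hu.1.1, hu.2.2⟩, ⟨le_trans hsI.1 hu.1.1.le, hu.1.2⟩⟩
        exact key _ (hεn n).le s hsw.2 u huw.2 (fun g hg => hδ' g hg s hsw u huw)
      exact absurd (le_of_tendsto (tendsto_const_nhds.dist hF) hev) (not_le.mpr hdist)
  have hALc : ∀ n, (AL n).Countable := by
    intro n
    by_contra hc
    have hinf : (AL n).Infinite := fun hfin => hc hfin.countable
    have hsub : AL n ⊆ Icc (0 : ℝ) a := fun t ht => ⟨((hALmem n t).mp ht).1.1.le, ((hALmem n t).mp ht).1.2⟩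
    obtain ⟨t₀, ht₀K, ht₀⟩ := hinf.exists_accPt_of_subset_isCompact isCompact_Icc hsub
    have hsplit : (𝓝[<] t₀ ⊓ 𝓟 (AL n) ⊔ 𝓝[>] t₀ ⊓ 𝓟 (AL n)).NeBot := by
      rw [← inf_sup_right, nhdsLT_sup_nhdsGT]
      exact ht₀
    rcases sup_neBot.mp hsplit with hne | hne
    · -- accumulation from the left
      obtain ⟨s₁, hs₁⟩ := Filter.nonempty_of_mem
        (inter_mem_inf self_mem_nhdsWithin (mem_principal_self (AL n)) :
          Iio t₀ ∩ AL n ∈ 𝓝[<] t₀ ⊓ 𝓟 (AL n))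
      have ht₀pos : 0 < t₀ := lt_trans ((hALmem n s₁).mp hs₁.2).1.1 hs₁.1
      obtain ⟨δ, hδ, hδ'⟩ := hGequi_left t₀ ⟨ht₀pos, ht₀K.2⟩ (1 / (n + 1 : ℝ)) (hεn n)
      obtain ⟨s, hs⟩ := Filter.nonempty_of_mem
        (inter_mem_inf (Ioo_mem_nhdsLT (show t₀ - δ < t₀ by linarith)) (mem_principal_self (AL n)))
      obtain ⟨hsI, F, hF, hdist⟩ := (hALmem n s).mp hs.2
      haveI := neL s hsI.1
      have hsw : s ∈ Ioo (t₀ - δ) t₀ ∩ Icc (0 : ℝ) a := ⟨hs.1, ⟨hsI.1.le, hsI.2⟩⟩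
      have hev : ∀ᶠ u in 𝓝[Ico 0 s] s, dist (JG s) (JG u) ≤ 1 / (n + 1 : ℝ) := by
        refine eventually_of_mem (inter_mem self_mem_nhdsWithin
          (mem_nhdsWithin_of_mem_nhds (Ioo_mem_nhds hs.1.1 (show s < s + 1 by linarith)))) ?_
        intro u hu
        have huw : u ∈ Ioo (t₀ - δ) t₀ ∩ Icc (0 : ℝ) a :=
          ⟨⟨hu.2.1, lt_trans hu.1.2 hs.1.2⟩, ⟨hu.1.1, le_trans hu.1.2.le hsI.2⟩⟩
        exact key _ (hεn n).le s hsw.2 u huw.2 (fun g hg => hδ' g hg s hsw u huw)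
      exact absurd (le_of_tendsto (tendsto_const_nhds.dist hF) hev) (not_le.mpr hdist)
    · -- accumulation from the right
      obtain ⟨s₁, hs₁⟩ := Filter.nonempty_of_mem
        (inter_mem_inf self_mem_nhdsWithin (mem_principal_self (AL n)) :
          Ioi t₀ ∩ AL n ∈ 𝓝[>] t₀ ⊓ 𝓟 (AL n))
      have ht₀a : t₀ < a := lt_of_lt_of_le hs₁.1 ((hALmem n s₁).mp hs₁.2).1.2
      obtain ⟨δ, hδ, hδ'⟩ := hGequi_right t₀ ⟨ht₀K.1, ht₀a⟩ (1 / (n + 1 : ℝ)) (hεn n)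
      obtain ⟨s, hs⟩ := Filter.nonempty_of_mem
        (inter_mem_inf (Ioo_mem_nhdsGT (show t₀ < t₀ + δ by linarith)) (mem_principal_self (AL n)))
      obtain ⟨hsI, F, hF, hdist⟩ := (hALmem n s).mp hs.2
      haveI := neL s hsI.1
      have hsw : s ∈ Ioo t₀ (t₀ + δ) ∩ Icc (0 : ℝ) a := ⟨hs.1, ⟨hsI.1.le, hsI.2⟩⟩
      have hev : ∀ᶠ u in 𝓝[Ico 0 s] s, dist (JG s) (JG u) ≤ 1 / (n + 1 : ℝ) := by
        refine eventually_of_mem (inter_mem self_mem_nhdsWithin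
          (mem_nhdsWithin_of_mem_nhds (Ioo_mem_nhds hs.1.1 (show s < s + 1 by linarith)))) ?_
        intro u hu
        have huw : u ∈ Ioo t₀ (t₀ + δ) ∩ Icc (0 : ℝ) a :=
          ⟨⟨hu.2.1, lt_trans hu.1.2 hs.1.2⟩, ⟨hu.1.1, le_trans hu.1.2.le hsI.2⟩⟩
        exact key _ (hεn n).le s hsw.2 u huw.2 (fun g hg => hδ' g hg s hsw u huw)
      exact absurd (le_of_tendsto (tendsto_const_nhds.dist hF) hev) (not_le.mpr hdist)
  -- the exceptional set
  set Dset : Set ℝ := (⋃ n, AR n) ∪ (⋃ n, AL n) with hDset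
  have hDc : Dset.Countable :=
    (Set.countable_iUnion hARc).union (Set.countable_iUnion hALc)
  -- `JG` is continuous within `Icc 0 a` off `Dset`
  have hcont : ∀ t ∈ Icc (0 : ℝ) a \ Dset, ContinuousWithinAt JG (Icc 0 a) t := by
    rintro t ⟨htI, htD⟩
    have hright : Tendsto JG (𝓝[Ioc t a] t) (𝓝 (JG t)) := by
      rcases eq_or_lt_of_le htI.2 with h | h
      · rw [h, Ioc_self, nhdsWithin_empty]
        exact tendsto_bot
      · obtain ⟨F, hF⟩ := Rex t ⟨htI.1, h⟩
        have hFeq : JG t = F := by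
          by_contra h0
          have hpos : 0 < dist (JG t) F := dist_pos.mpr h0
          obtain ⟨n, hn⟩ := exists_nat_one_div_lt hpos
          exact htD (mem_union_left _ (mem_iUnion.mpr ⟨n, (hARmem n t).mpr ⟨⟨htI.1, h⟩, F, hF, hn⟩⟩))
        rwa [hFeq]
    have hleft : Tendsto JG (𝓝[Ico 0 t] t) (𝓝 (JG t)) := by
      rcases eq_or_lt_of_le htI.1 with h | h
      · rw [← h, Ico_self, nhdsWithin_empty]
        exact tendsto_bot
      · obtain ⟨F, hF⟩ := Lex t ⟨h, htI.2⟩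
        have hFeq : JG t = F := by
          by_contra h0
          have hpos : 0 < dist (JG t) F := dist_pos.mpr h0
          obtain ⟨n, hn⟩ := exists_nat_one_div_lt hpos
          exact htD (mem_union_right _ (mem_iUnion.mpr ⟨n, (hALmem n t).mpr ⟨⟨h, htI.2⟩, F, hF, hn⟩⟩))
        rwa [hFeq]
    have hmid : Tendsto JG (𝓝[{t}] t) (𝓝 (JG t)) := by
      rw [nhdsWithin_singleton]
      exact tendsto_pure_nhds JG t
    have hall : Tendsto JG (𝓝[Ico 0 t] t ⊔ (𝓝[{t}] t ⊔ 𝓝[Ioc t a] t)) (𝓝 (JG t)) := by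
      rw [tendsto_sup, tendsto_sup]
      exact ⟨hleft, hmid, hright⟩
    refine hall.mono_left ?_
    rw [← nhdsWithin_union, ← nhdsWithin_union]
    refine nhdsWithin_mono t ?_
    intro x hx
    rcases lt_trichotomy x t with hlt | heq | hgt
    · exact Or.inl ⟨hx.1, hlt⟩
    · exact Or.inr (Or.inl heq)
    · exact Or.inr (Or.inr ⟨hgt, hx.2⟩)
  -- put everything together
  have hmeasD : MeasurableSet (Icc (0 : ℝ) a \ Dset) :=
    measurableSet_Icc.diff hDc.measurableSet
  have h1 : AEStronglyMeasurable JG (volume.restrict (Icc (0 : ℝ) a \ Dset)) :=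
    ContinuousOn.aestronglyMeasurable
      (fun t ht => (hcont t ht).mono diff_subset) hmeasD
  have h2 : volume.restrict (Icc (0 : ℝ) a) = volume.restrict (Icc (0 : ℝ) a \ Dset) := by
    refine Measure.restrict_congr_set ?_
    have hD0 : volume Dset = 0 := hDc.measure_zero _
    refine (MeasureTheory.ae_eq_set.mpr ⟨?_, ?_⟩)
    · refine measure_mono_null ?_ hD0
      intro x hx
      by_contra hxD
      exact hx.2 ⟨hx.1, hxD⟩
    · refine measure_mono_null ?_ (measure_empty (μ := volume))
      intro x hx
      exact (hx.2 hx.1.1).elim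
  rw [h2]
  exact h1
end

section
/- Let X be a real Banach space and let 𝒟 be a fundamental closed sub-semigroup of 𝒞(X). Then 𝒟 contains every nonempty compact convex subset of X. -/
open Set Bornology Pointwise

/-- A fundamental closed sub-semigroup `𝒟` of the semigroup `𝒞(X)` of all nonempty bounded
closed convex subsets of `X` (with addition `A ⊕ B = closure (A + B)`, scalar multiplication
and the Hausdorff metric). -/
structure IsFundamental (X : Type*) [NormedAddCommGroup X] [NormedSpace ℝ X]
    (𝒟 : Set (Set X)) : Prop where
  /-- `𝒟 ⊆ 𝒞(X)`: every member is nonempty, bounded, closed and convex. -/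
  mem_C : ∀ D ∈ 𝒟, D.Nonempty ∧ IsBounded D ∧ IsClosed D ∧ Convex ℝ D
  /-- closed under the semigroup addition `A ⊕ B = closure (A + B)` -/
  add_mem : ∀ A ∈ 𝒟, ∀ B ∈ 𝒟, closure (A + B) ∈ 𝒟
  /-- closed under scalar multiplication -/
  smul_mem : ∀ A ∈ 𝒟, ∀ c : ℝ, c • A ∈ 𝒟
  /-- `𝒟` is closed in `𝒞(X)` with respect to the Hausdorff metric -/
  isClosed : ∀ C : Set X, C.Nonempty → IsBounded C → IsClosed C → Convex ℝ C →
    (∀ ε : ℝ, 0 < ε → ∃ D ∈ 𝒟, EMetric.hausdorffEdist C D < ENNReal.ofReal ε) → C ∈ 𝒟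
  /-- (1) the members of `𝒟` cover `X` -/
  covers : ⋃₀ 𝒟 = (univ : Set X)
  /-- (2) `A, B ∈ 𝒟` implies `closure (convexHull (±A ∪ ±B)) ∈ 𝒟` -/
  absConvexHull_mem : ∀ A ∈ 𝒟, ∀ B ∈ 𝒟,
    closure (convexHull ℝ (A ∪ -A ∪ B ∪ -B)) ∈ 𝒟
  /-- (3) nonempty subsets of members have their closed convex hull in `𝒟` -/
  closure_convexHull_mem : ∀ B : Set X, B.Nonempty → ∀ D ∈ 𝒟, B ⊆ D →
    closure (convexHull ℝ B) ∈ 𝒟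

/-- Any finite set is contained in some member of `𝒟`. -/
lemma exists_mem_superset_of_finite {X : Type*} [NormedAddCommGroup X]
    [NormedSpace ℝ X] {𝒟 : Set (Set X)} (h𝒟 : IsFundamental X 𝒟)
    (t : Set X) (ht : t.Finite) : ∃ D ∈ 𝒟, t ⊆ D := by
  refine Set.Finite.induction_on t ht ?_ ?_
  · have h0 : (0 : X) ∈ ⋃₀ 𝒟 := by rw [h𝒟.covers]; trivial
    obtain ⟨D, hD, -⟩ := h0
    exact ⟨D, hD, empty_subset _⟩
  · intro a s _ _ ih
    obtain ⟨D₂, hD₂, hsD₂⟩ := ih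
    have h0 : a ∈ ⋃₀ 𝒟 := by rw [h𝒟.covers]; trivial
    obtain ⟨D₁, hD₁, haD₁⟩ := h0
    refine ⟨_, h𝒟.absConvexHull_mem D₁ hD₁ D₂ hD₂, ?_⟩
    have hsub : D₁ ∪ D₂ ⊆ closure (convexHull ℝ (D₁ ∪ -D₁ ∪ D₂ ∪ -D₂)) := by
      refine (union_subset ?_ ?_).trans
        ((subset_convexHull ℝ _).trans subset_closure)
      · intro x hx; exact Or.inl (Or.inl (Or.inl hx))
      · intro x hx; exact Or.inl (Or.inr hx)
    intro x hx
    rcases hx with rfl | hx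
    · exact hsub (Or.inl haD₁)
    · exact hsub (Or.inr (hsD₂ hx))

/-- Every fundamental closed sub-semigroup of `𝒞(X)` contains every nonempty compact
convex subset of `X`. -/
theorem isCompact_convex_mem_of_isFundamental {X : Type*} [NormedAddCommGroup X]
    [NormedSpace ℝ X] [CompleteSpace X] (𝒟 : Set (Set X)) (h𝒟 : IsFundamental X 𝒟) :
    ∀ K : Set X, K.Nonempty → IsCompact K → Convex ℝ K → K ∈ 𝒟 := by
  intro K hKne hKc hKconv
  apply h𝒟.isClosed K hKne hKc.isBounded hKc.isClosed hKconv
  intro ε hε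
  have hε2 : (0 : ENNReal) < ENNReal.ofReal (ε / 2) := by
    simpa using ENNReal.ofReal_pos.2 (by linarith)
  obtain ⟨t, htK, htfin, hcov⟩ :=
    EMetric.totallyBounded_iff'.1 hKc.totallyBounded (ENNReal.ofReal (ε / 2)) hε2
  -- t is nonempty
  have htne : t.Nonempty := by
    rcases hKne with ⟨x, hx⟩
    rcases mem_iUnion₂.1 (hcov hx) with ⟨y, hy, -⟩
    exact ⟨y, hy⟩
  obtain ⟨D, hD, htD⟩ := exists_mem_superset_of_finite h𝒟 t htfin
  refine ⟨closure (convexHull ℝ t), h𝒟.closure_convexHull_mem t htne D hD htD, ?_⟩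
  have hCK : closure (convexHull ℝ t) ⊆ K :=
    closure_minimal (convexHull_min htK hKconv) hKc.isClosed
  have htC : t ⊆ closure (convexHull ℝ t) :=
    (subset_convexHull ℝ t).trans subset_closure
  have hbound : EMetric.hausdorffEdist K (closure (convexHull ℝ t))
      ≤ ENNReal.ofReal (ε / 2) := by
    apply EMetric.hausdorffEdist_le_of_mem_edist
    · intro x hx
      rcases mem_iUnion₂.1 (hcov hx) with ⟨y, hy, hxy⟩
      exact ⟨y, htC hy, le_of_lt hxy⟩
    · intro x hx
      exact ⟨x, hCK hx, by simp⟩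
  calc EMetric.hausdorffEdist K (closure (convexHull ℝ t))
      ≤ ENNReal.ofReal (ε / 2) := hbound
    _ < ENNReal.ofReal ε := by
        rw [ENNReal.ofReal_lt_ofReal_iff hε]; linarith
end

section
/- Let X be a real Banach space, let 𝒟 be a fundamental closed sub-semigroup of 𝒞(X), and let μ be a convex measure of non-property 𝔇 on X (relative to 𝒟). Then: (i) μ(cl B) = μ(B) for every nonempty bounded B ⊆ X, where cl denotes norm closure; (ii) μ(B + D) = μ(B) for every nonempty bounded B ⊆ X and every D ∈ 𝒟; (iii) μ(B ∪ D) = μ(B) for every nonempty bounded B ⊆ X and every D ∈ 𝒟. -/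
open Set Bornology Pointwise

/-- A convex measure of non-property `𝔇` (convex MNP𝔇) relative to a fundamental
sub-semigroup `𝒟`: it vanishes exactly on the bounded sets whose closed convex hull lies
in `𝒟`, is monotone, invariant under convex hulls, and convex. -/
structure IsConvexMNPD (X : Type*) [NormedAddCommGroup X] [NormedSpace ℝ X]
    (𝒟 : Set (Set X)) (μ : Set X → ℝ) : Prop where
  nonneg : ∀ B : Set X, B.Nonempty → IsBounded B → 0 ≤ μ B
  eq_zero_iff : ∀ B : Set X, B.Nonempty → IsBounded B →
    (μ B = 0 ↔ closure (convexHull ℝ B) ∈ 𝒟)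
  mono : ∀ A B : Set X, B.Nonempty → IsBounded A → B ⊆ A → μ B ≤ μ A
  convexHull_inv : ∀ B : Set X, B.Nonempty → IsBounded B → μ (convexHull ℝ B) = μ B
  convex : ∀ A B : Set X, A.Nonempty → B.Nonempty → IsBounded A → IsBounded B →
    ∀ l : ℝ, 0 ≤ l → l ≤ 1 → μ (l • A + (1 - l) • B) ≤ l * μ A + (1 - l) * μ B

section Aux

variable {X : Type*} [NormedAddCommGroup X] [NormedSpace ℝ X]

/-- Singletons belong to a fundamental sub-semigroup. -/
lemma aux_singleton_mem {𝒟 : Set (Set X)} (h𝒟 : IsFundamental X 𝒟) (x : X) :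
    ({x} : Set X) ∈ 𝒟 := by
  have hx : x ∈ ⋃₀ 𝒟 := by rw [h𝒟.covers]; trivial
  obtain ⟨D, hD, hxD⟩ := hx
  have := h𝒟.closure_convexHull_mem {x} ⟨x, rfl⟩ D hD (by simpa using hxD)
  simpa [convexHull_singleton] using this

/-- Members of `𝒟` have measure zero. -/
lemma aux_measure_zero {𝒟 : Set (Set X)} (h𝒟 : IsFundamental X 𝒟)
    {μ : Set X → ℝ} (hμ : IsConvexMNPD X 𝒟 μ) {D : Set X} (hD : D ∈ 𝒟) : μ D = 0 := by
  obtain ⟨hne, hbd, hcl, hcv⟩ := h𝒟.mem_C D hD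
  rw [hμ.eq_zero_iff D hne hbd, hcv.convexHull_eq, hcl.closure_eq]
  exact hD

/-- Every member of `𝒟` is contained in a member of `𝒟` containing `0`. -/
lemma aux_enlarge {𝒟 : Set (Set X)} (h𝒟 : IsFundamental X 𝒟) {D : Set X} (hD : D ∈ 𝒟) :
    ∃ E ∈ 𝒟, D ⊆ E ∧ (0 : X) ∈ E := by
  refine ⟨closure (convexHull ℝ (D ∪ -D ∪ D ∪ -D)), h𝒟.absConvexHull_mem D hD D hD, ?_, ?_⟩
  · intro x hx
    exact subset_closure (subset_convexHull ℝ _ (by simp [hx]))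
  · obtain ⟨d, hd⟩ := (h𝒟.mem_C D hD).1
    have h1 : d ∈ convexHull ℝ (D ∪ -D ∪ D ∪ -D) :=
      subset_convexHull ℝ _ (by simp [hd])
    have h2 : -d ∈ convexHull ℝ (D ∪ -D ∪ D ∪ -D) :=
      subset_convexHull ℝ _ (by simp [hd])
    have h3 := (convex_convexHull ℝ (D ∪ -D ∪ D ∪ -D)) h1 h2
      (by norm_num : (0:ℝ) ≤ 1/2) (by norm_num : (0:ℝ) ≤ 1/2) (by norm_num)
    have h0 : (1/2 : ℝ) • d + (1/2 : ℝ) • (-d) = 0 := by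
      rw [smul_neg]; abel
    rw [h0] at h3
    exact subset_closure h3

/-- The core inequality: `μ (A + D) ≤ μ A` when `D ∈ 𝒟` contains `0`. -/
lemma aux_core {𝒟 : Set (Set X)} (h𝒟 : IsFundamental X 𝒟)
    {μ : Set X → ℝ} (hμ : IsConvexMNPD X 𝒟 μ) {A D : Set X}
    (hAne : A.Nonempty) (hAbd : IsBounded A) (hD : D ∈ 𝒟) (h0 : (0:X) ∈ D) :
    μ (A + D) ≤ μ A := by
  obtain ⟨hDne, hDbd, hDcl, hDcv⟩ := h𝒟.mem_C D hD
  have hMnn : 0 ≤ (1/2 : ℝ) * μ ((2:ℝ) • A) := by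
    have := hμ.nonneg ((2:ℝ) • A) (hAne.smul_set) (hAbd.smul₀ 2)
    positivity
  -- uniform bound on μ (A + t • D)
  have hbound : ∀ t : ℝ, μ (A + t • D) ≤ (1/2 : ℝ) * μ ((2:ℝ) • A) := by
    intro t
    have e1 : (1/2 : ℝ) • ((2:ℝ) • A) = A := by
      rw [smul_smul]; norm_num
    have e2 : ((1:ℝ) - 1/2) • ((2*t:ℝ) • D) = t • D := by
      rw [smul_smul]; congr 1; ring
    have heq : A + t • D = (1/2 : ℝ) • ((2:ℝ) • A) + (1 - 1/2 : ℝ) • ((2*t:ℝ) • D) := by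
      rw [e1, e2]
    have hzero : μ ((2*t : ℝ) • D) = 0 :=
      aux_measure_zero h𝒟 hμ (h𝒟.smul_mem D hD (2*t))
    calc μ (A + t • D)
        = μ ((1/2 : ℝ) • ((2:ℝ) • A) + (1 - 1/2 : ℝ) • ((2*t:ℝ) • D)) := by rw [← heq]
      _ ≤ (1/2 : ℝ) * μ ((2:ℝ) • A) + (1 - 1/2) * μ ((2*t : ℝ) • D) :=
          hμ.convex _ _ (hAne.smul_set) (hDne.smul_set) (hAbd.smul₀ 2) (hDbd.smul₀ _)
            (1/2) (by norm_num) (by norm_num)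
      _ = (1/2 : ℝ) * μ ((2:ℝ) • A) := by rw [hzero]; ring
  -- key step for t ≥ 1
  have hstep : ∀ t : ℝ, 1 ≤ t →
      μ (A + D) ≤ (1 - 1/t) * μ A + (1/t) * ((1/2 : ℝ) * μ ((2:ℝ) • A)) := by
    intro t ht
    have ht0 : (0:ℝ) < t := lt_of_lt_of_le one_pos ht
    have hl0 : (0:ℝ) ≤ 1 - 1/t := by
      have : 1/t ≤ 1 := by rw [div_le_one ht0]; exact ht
      linarith
    have hl1 : (1 - 1/t : ℝ) ≤ 1 := by
      have : (0:ℝ) < 1/t := by positivity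
      linarith
    have hincl : A + D ⊆ (1 - 1/t : ℝ) • A + (1 - (1 - 1/t) : ℝ) • (A + t • D) := by
      rintro x ⟨a, ha, d, hd, rfl⟩
      have heq : a + d = (1 - 1/t : ℝ) • a + (1 - (1 - 1/t) : ℝ) • (a + t • d) := by
        have h : (1 - (1 - 1/t) : ℝ) = 1/t := by ring
        rw [h, smul_add, smul_smul, one_div, inv_mul_cancel₀ (ne_of_gt ht0), one_smul]
        module
      show a + d ∈ _
      rw [heq]
      exact add_mem_add (smul_mem_smul_set ha)
        (smul_mem_smul_set (add_mem_add ha (smul_mem_smul_set hd)))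
    have hbig : IsBounded ((1 - 1/t : ℝ) • A + (1 - (1 - 1/t) : ℝ) • (A + t • D)) :=
      (hAbd.smul₀ _).add ((hAbd.add (hDbd.smul₀ t)).smul₀ _)
    calc μ (A + D)
        ≤ μ ((1 - 1/t : ℝ) • A + (1 - (1 - 1/t) : ℝ) • (A + t • D)) :=
          hμ.mono _ _ (hAne.add hDne) hbig hincl
      _ ≤ (1 - 1/t) * μ A + (1 - (1 - 1/t)) * μ (A + t • D) :=
          hμ.convex _ _ hAne (hAne.add (hDne.smul_set)) hAbd (hAbd.add (hDbd.smul₀ t))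
            (1 - 1/t) hl0 hl1
      _ ≤ (1 - 1/t) * μ A + (1/t) * ((1/2 : ℝ) * μ ((2:ℝ) • A)) := by
          have h : (1 - (1 - 1/t) : ℝ) = 1/t := by ring
          rw [h]
          exact add_le_add le_rfl
            (mul_le_mul_of_nonneg_left (hbound t) (by positivity))
  -- conclude by letting t → ∞
  have h1D : (1:ℝ) • D = D := one_smul ℝ D
  apply le_of_forall_pos_le_add
  intro ε hε
  have hμA : 0 ≤ μ A := hμ.nonneg A hAne hAbd
  set M : ℝ := (1/2 : ℝ) * μ ((2:ℝ) • A) with hM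
  set t : ℝ := max 1 (M/ε + 1) with htdef
  have ht1 : (1:ℝ) ≤ t := le_max_left _ _
  have ht0 : (0:ℝ) < t := lt_of_lt_of_le one_pos ht1
  have key := hstep t ht1
  have hfrac : (1/t) * M ≤ ε := by
    rw [div_mul_eq_mul_div, one_mul, div_le_iff₀ ht0]
    have h2 : M/ε + 1 ≤ t := le_max_right _ _
    have h3 : M/ε ≤ t := by linarith
    calc M = (M/ε) * ε := by field_simp
      _ ≤ t * ε := by nlinarith
      _ = ε * t := by ring
  have hl : (1 - 1/t) * μ A ≤ μ A := by
    have ha : 1/t ≤ 1 := by rw [div_le_one ht0]; exact ht1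
    have hb : (0:ℝ) < 1/t := by positivity
    nlinarith
  linarith

/-- `μ (B + D) ≤ μ B` for any `D ∈ 𝒟`. -/
lemma aux_add_le {𝒟 : Set (Set X)} (h𝒟 : IsFundamental X 𝒟)
    {μ : Set X → ℝ} (hμ : IsConvexMNPD X 𝒟 μ) {B D : Set X}
    (hBne : B.Nonempty) (hBbd : IsBounded B) (hD : D ∈ 𝒟) :
    μ (B + D) ≤ μ B := by
  obtain ⟨E, hE, hDE, h0E⟩ := aux_enlarge h𝒟 hD
  obtain ⟨hDne, hDbd, -, -⟩ := h𝒟.mem_C D hD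
  obtain ⟨hEne, hEbd, -, -⟩ := h𝒟.mem_C E hE
  calc μ (B + D) ≤ μ (B + E) :=
        hμ.mono _ _ (hBne.add hDne) (hBbd.add hEbd) (add_subset_add_left hDE)
    _ ≤ μ B := aux_core h𝒟 hμ hBne hBbd hE h0E

end Aux

/-- Basic properties of a convex MNP𝔇: (i) density determination, (ii) translation
invariance by members of `𝒟`, and (iii) negligibility of members of `𝒟`. -/
theorem convexMNPD_basic_properties {X : Type*} [NormedAddCommGroup X]
    [NormedSpace ℝ X] [CompleteSpace X] (𝒟 : Set (Set X)) (h𝒟 : IsFundamental X 𝒟)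
    (μ : Set X → ℝ) (hμ : IsConvexMNPD X 𝒟 μ) :
    (∀ B : Set X, B.Nonempty → IsBounded B → μ (closure B) = μ B) ∧
    (∀ B : Set X, B.Nonempty → IsBounded B → ∀ D ∈ 𝒟, μ (B + D) = μ B) ∧
    (∀ B : Set X, B.Nonempty → IsBounded B → ∀ D ∈ 𝒟, μ (B ∪ D) = μ B) := by
  -- Part (ii): translation invariance by members of 𝒟
  have part2 : ∀ B : Set X, B.Nonempty → IsBounded B → ∀ D ∈ 𝒟, μ (B + D) = μ B := by
    intro B hBne hBbd D hD
    obtain ⟨hDne, hDbd, -, -⟩ := h𝒟.mem_C D hD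
    refine le_antisymm (aux_add_le h𝒟 hμ hBne hBbd hD) ?_
    have hD' : (-1 : ℝ) • D ∈ 𝒟 := h𝒟.smul_mem D hD (-1)
    have hsub : B ⊆ (B + D) + (-1 : ℝ) • D := by
      intro b hb
      obtain ⟨d, hd⟩ := hDne
      have heq : b = (b + d) + (-1 : ℝ) • d := by
        rw [neg_one_smul]; abel
      rw [heq]
      exact add_mem_add (add_mem_add hb hd) (smul_mem_smul_set hd)
    calc μ B ≤ μ ((B + D) + (-1 : ℝ) • D) :=
          hμ.mono _ _ hBne ((hBbd.add hDbd).add (hDbd.smul₀ _)) hsub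
      _ ≤ μ (B + D) := aux_add_le h𝒟 hμ (hBne.add hDne) (hBbd.add hDbd) hD'
  -- Part (i): μ (closure B) = μ B
  have part1 : ∀ B : Set X, B.Nonempty → IsBounded B → μ (closure B) = μ B := by
    intro B hBne hBbd
    refine le_antisymm ?_ (hμ.mono _ _ hBne hBbd.closure subset_closure)
    have hKne : (B + Metric.closedBall (0:X) 1).Nonempty :=
      hBne.add ⟨0, by simp⟩
    have hKbd : IsBounded (B + Metric.closedBall (0:X) 1) :=
      hBbd.add Metric.isBounded_closedBall
    have hKnn : 0 ≤ μ (B + Metric.closedBall (0:X) 1) := hμ.nonneg _ hKne hKbd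
    have hμB : 0 ≤ μ B := hμ.nonneg _ hBne hBbd
    apply le_of_forall_pos_le_add
    intro ε hε
    set K := B + Metric.closedBall (0:X) 1 with hK
    set l : ℝ := max 0 (1 - ε/(μ K + 1)) with hldef
    have hl0 : (0:ℝ) ≤ l := le_max_left _ _
    have hl1 : l < 1 := by
      apply max_lt one_pos
      have : 0 < ε/(μ K + 1) := by positivity
      linarith
    have hincl : closure B ⊆ l • B + (1 - l) • K := by
      intro x hx
      obtain ⟨c, hc, hdist⟩ := Metric.mem_closure_iff.mp hx (1 - l) (by linarith)
      have hm : (1 - l)⁻¹ • (x - c) ∈ Metric.closedBall (0:X) 1 := by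
        rw [Metric.mem_closedBall, dist_zero_right, norm_smul, norm_inv,
          Real.norm_of_nonneg (by linarith : (0:ℝ) ≤ 1 - l)]
        rw [← dist_eq_norm]
        have hpos : (0:ℝ) < 1 - l := by linarith
        rw [inv_mul_le_iff₀ hpos, mul_one]
        exact hdist.le
      have hk : c + (1 - l)⁻¹ • (x - c) ∈ K := add_mem_add hc hm
      have heq : x = l • c + (1 - l) • (c + (1 - l)⁻¹ • (x - c)) := by
        rw [smul_add, smul_inv_smul₀ (by linarith : (1 - l : ℝ) ≠ 0)]
        module
      rw [heq]
      exact add_mem_add (smul_mem_smul_set hc) (smul_mem_smul_set hk)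
    calc μ (closure B) ≤ μ (l • B + (1 - l) • K) :=
          hμ.mono _ _ (hBne.closure) ((hBbd.smul₀ _).add (hKbd.smul₀ _)) hincl
      _ ≤ l * μ B + (1 - l) * μ K :=
          hμ.convex _ _ hBne hKne hBbd hKbd l hl0 hl1.le
      _ ≤ μ B + ε := by
          have h1 : l * μ B ≤ μ B := by nlinarith
          have h2 : (1 - l) * μ K ≤ ε := by
            have h3 : 1 - ε/(μ K + 1) ≤ l := le_max_right _ _
            have h4 : 1 - l ≤ ε/(μ K + 1) := by linarith
            have h5 : (1 - l) * μ K ≤ (ε/(μ K + 1)) * μ K := by nlinarith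
            have h6 : (ε/(μ K + 1)) * μ K ≤ ε := by
              rw [div_mul_eq_mul_div, div_le_iff₀ (by linarith : (0:ℝ) < μ K + 1)]
              nlinarith
            linarith
          linarith
  -- Part (iii): absorption of members of 𝒟 under union
  have part3 : ∀ B : Set X, B.Nonempty → IsBounded B → ∀ D ∈ 𝒟, μ (B ∪ D) = μ B := by
    intro B hBne hBbd D hD
    obtain ⟨b, hb⟩ := hBne
    obtain ⟨hDne, hDbd, hDcl, -⟩ := h𝒟.mem_C D hD
    have hsing : ({-b} : Set X) ∈ 𝒟 := aux_singleton_mem h𝒟 (-b)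
    have hD2 : closure (D + ({-b} : Set X)) ∈ 𝒟 := h𝒟.add_mem D hD {-b} hsing
    obtain ⟨E, hE, hDE, h0E⟩ := aux_enlarge h𝒟 hD2
    obtain ⟨hEne, hEbd, -, -⟩ := h𝒟.mem_C E hE
    have hBne' : B.Nonempty := ⟨b, hb⟩
    have hincl : B ∪ D ⊆ B + E := by
      rintro x (hx | hx)
      · have heq : x = x + 0 := by rw [add_zero]
        rw [heq]
        exact add_mem_add hx h0E
      · have hmem : x + -b ∈ D + ({-b} : Set X) :=
          add_mem_add hx (Set.mem_singleton _)
        have heq : x = b + (x + -b) := by abel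
        rw [heq]
        exact add_mem_add hb (hDE (subset_closure hmem))
    refine le_antisymm ?_ (hμ.mono _ _ hBne' (hBbd.union hDbd) subset_union_left)
    calc μ (B ∪ D) ≤ μ (B + E) :=
          hμ.mono _ _ (hBne'.inl) (hBbd.add hEbd) hincl
      _ = μ B := part2 B hBne' hBbd E hE
  exact ⟨part1, part2, part3⟩
end
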